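/- arXiv:1106.0809 — 13 statements merged into one kernel-verified Lean document; each statement's English description precedes it below -/
import Mathlib

section
/- A circulant matrix A ∈ M_n(ℚ) with representer polynomial γ_A(x) is singular if and only if deg(gcd(γ_A(x), x^n − 1)) ≥ 1. -/
open Polynomial

noncomputable def Pw (n : ℕ) [NeZero n] (w : ZMod n → ℚ) : Polynomial ℚ :=
  ∑ j : ZMod n, C (w j) * X ^ j.val

lemma coeff_Pw (n : ℕ) [NeZero n] (w : ZMod n → ℚ) (j : ZMod n) :
    (Pw n w).coeff j.val = w j := by
  rw [Pw, finset_sum_coeff, Finset.sum_eq_single j]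
  · simp
  · intro b _ hb
    rw [coeff_C_mul, coeff_X_pow, if_neg (fun h => hb (ZMod.val_injective n h).symm), mul_zero]
  · simp

lemma degree_Pw_lt (n : ℕ) [NeZero n] (w : ZMod n → ℚ) : (Pw n w).degree < n := by
  apply lt_of_le_of_lt (degree_sum_le _ _)
  rw [Finset.sup_lt_iff (by exact_mod_cast WithBot.bot_lt_coe n)]
  intro j _
  exact lt_of_le_of_lt (degree_C_mul_X_pow_le _ _) (by exact_mod_cast ZMod.val_lt j)

lemma Pw_ne_zero (n : ℕ) [NeZero n] {w : ZMod n → ℚ} (hw : w ≠ 0) : Pw n w ≠ 0 := by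
  obtain ⟨j, hj⟩ := Function.ne_iff.mp hw
  simp only [Pi.zero_apply] at hj
  intro h
  exact hj (by rw [← coeff_Pw n w j, h, coeff_zero])

lemma pow_dvd_aux (n : ℕ) [NeZero n] (m j : ZMod n) :
    (X ^ n - 1 : Polynomial ℚ) ∣ X ^ (m.val + j.val) - X ^ ((m + j).val) := by
  have h : (m + j).val + n * ((m.val + j.val) / n) = m.val + j.val := by
    rw [ZMod.val_add]; exact Nat.mod_add_div _ _
  have hd := sub_dvd_pow_sub_pow (X ^ n : Polynomial ℚ) 1 ((m.val + j.val) / n)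
  rw [one_pow] at hd
  have h2 : (X ^ (m.val + j.val) - X ^ ((m + j).val) : Polynomial ℚ)
      = X ^ ((m + j).val) * ((X ^ n) ^ ((m.val + j.val) / n) - 1) := by
    rw [mul_sub, mul_one, ← pow_mul, ← pow_add, h]
  rw [h2]
  exact Dvd.dvd.mul_left hd _

lemma key_dvd (n : ℕ) [NeZero n] (a w : ZMod n → ℚ) :
    (X ^ n - 1 : Polynomial ℚ) ∣
      Pw n a * Pw n w - Pw n (fun k => ∑ m : ZMod n, a m * w (k - m)) := by
  have h1 : Pw n a * Pw n w =
      ∑ m : ZMod n, ∑ j : ZMod n, C (a m * w j) * X ^ (m.val + j.val) := by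
    rw [Pw, Pw, Finset.sum_mul_sum]
    refine Finset.sum_congr rfl fun m _ => Finset.sum_congr rfl fun j _ => ?_
    rw [C_mul, pow_add]; ring
  have h2 : Pw n (fun k => ∑ m : ZMod n, a m * w (k - m)) =
      ∑ m : ZMod n, ∑ j : ZMod n, C (a m * w j) * X ^ ((m + j).val) := by
    rw [Pw]
    have e1 : ∀ k : ZMod n, C (∑ m : ZMod n, a m * w (k - m)) * X ^ k.val
        = ∑ m : ZMod n, C (a m * w (k - m)) * X ^ k.val := by
      intro k; rw [map_sum, Finset.sum_mul]
    simp_rw [e1]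
    rw [Finset.sum_comm]
    refine Finset.sum_congr rfl fun m _ => ?_
    refine (Fintype.sum_equiv (Equiv.addLeft m) _ _ fun j => ?_).symm
    simp
  rw [h1, h2, ← Finset.sum_sub_distrib]
  refine Finset.dvd_sum fun m _ => ?_
  rw [← Finset.sum_sub_distrib]
  refine Finset.dvd_sum fun j _ => ?_
  rw [← mul_sub]
  exact Dvd.dvd.mul_left (pow_dvd_aux n m j) _

lemma Pw_eq_of_degree_lt (n : ℕ) [NeZero n] (q : Polynomial ℚ) (hq : q.degree < n) :
    Pw n (fun k => q.coeff k.val) = q := by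
  ext t
  rw [Pw, finset_sum_coeff]
  by_cases ht : t < n
  · rw [Finset.sum_eq_single ((t : ZMod n))]
    · rw [coeff_C_mul, coeff_X_pow, ZMod.val_cast_of_lt ht, if_pos rfl, mul_one]
    · intro b _ hb
      rw [coeff_C_mul, coeff_X_pow, if_neg, mul_zero]
      intro h
      exact hb (by rw [h, ZMod.natCast_zmod_val])
    · simp
  · rw [Finset.sum_eq_zero, eq_comm]
    · exact coeff_eq_zero_of_degree_lt (lt_of_lt_of_le hq (by exact_mod_cast Nat.le_of_not_lt ht))
    · intro b _
      rw [coeff_C_mul, coeff_X_pow, if_neg, mul_zero]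
      exact fun h => ht (h ▸ ZMod.val_lt b)

lemma conv_eq_zero (n : ℕ) [NeZero n] (a w : ZMod n → ℚ)
    (h : (X ^ n - 1 : Polynomial ℚ) ∣ Pw n a * Pw n w) :
    ∀ k, (∑ m : ZMod n, a m * w (k - m)) = 0 := by
  have hd : (X ^ n - 1 : Polynomial ℚ) ∣ Pw n (fun k => ∑ m : ZMod n, a m * w (k - m)) := by
    have := dvd_sub h (key_dvd n a w)
    simpa using this
  have hdeg : degree (X ^ n - 1 : Polynomial ℚ) = n := by
    simpa using degree_X_pow_sub_C (Nat.pos_of_ne_zero (NeZero.ne n)) (1 : ℚ)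
  have h0 : Pw n (fun k => ∑ m : ZMod n, a m * w (k - m)) = 0 :=
    eq_zero_of_dvd_of_degree_lt hd (by rw [hdeg]; exact degree_Pw_lt n _)
  intro k
  have := coeff_Pw n (fun k => ∑ m : ZMod n, a m * w (k - m)) k
  rw [h0, coeff_zero] at this
  exact this.symm

/-- A circulant matrix `A ∈ M_n(ℚ)` with representer polynomial `γ_A` is
singular iff `deg (gcd (γ_A, xⁿ - 1)) ≥ 1`. -/
theorem circulant_singular_iff_gcd_degree (n : ℕ) [NeZero n] (a : ZMod n → ℚ) :
    (Matrix.of fun i j : ZMod n => a (j - i)).det = 0 ↔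
      1 ≤ (EuclideanDomain.gcd (∑ i : ZMod n, C (a i) * X ^ i.val)
            (X ^ n - 1 : Polynomial ℚ)).degree := by
  classical
  have hγ : (∑ i : ZMod n, C (a i) * X ^ i.val) = Pw n a := rfl
  have hdegXn : degree (X ^ n - 1 : Polynomial ℚ) = n := by
    simpa using degree_X_pow_sub_C (Nat.pos_of_ne_zero (NeZero.ne n)) (1 : ℚ)
  have hXn : (X ^ n - 1 : Polynomial ℚ) ≠ 0 := by
    intro h
    rw [h, degree_zero] at hdegXn
    exact WithBot.bot_ne_coe hdegXn
  set d := EuclideanDomain.gcd (∑ i : ZMod n, C (a i) * X ^ i.val)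
      (X ^ n - 1 : Polynomial ℚ) with hdDef
  have hdvdR : d ∣ (X ^ n - 1 : Polynomial ℚ) := EuclideanDomain.gcd_dvd_right _ _
  have hdvdL : d ∣ Pw n a := hγ ▸ EuclideanDomain.gcd_dvd_left _ _
  have hdne : d ≠ 0 := fun h => hXn (eq_zero_of_zero_dvd (h ▸ hdvdR))
  constructor
  · intro hdet
    by_contra hlt
    push_neg at hlt
    have hdeg0 : d.degree = 0 := by
      rw [degree_eq_natDegree hdne] at hlt ⊢
      have h1 : d.natDegree < 1 := by exact_mod_cast hlt
      simp [Nat.lt_one_iff.mp h1]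
    have hco : IsCoprime (Pw n a) (X ^ n - 1 : Polynomial ℚ) := by
      rw [← hγ]
      exact EuclideanDomain.gcd_isUnit_iff.mp (isUnit_iff_degree_eq_zero.mpr hdeg0)
    obtain ⟨v, hv, hMv⟩ := Matrix.exists_mulVec_eq_zero_iff.mpr hdet
    set w : ZMod n → ℚ := fun j => v (-j) with hw
    have hwne : w ≠ 0 := by
      intro h
      apply hv
      funext j
      have := congrFun h (-j)
      simpa [hw] using this
    have hconv : ∀ k, (∑ m : ZMod n, a m * w (k - m)) = 0 := by
      intro k
      have h2 := congrFun hMv (-k)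
      simp only [Matrix.mulVec, dotProduct, Matrix.of_apply, Pi.zero_apply] at h2
      rw [← h2]
      refine Fintype.sum_equiv (Equiv.subRight k) _ _ fun m => ?_
      simp only [Equiv.subRight_apply, hw]
      rw [show m - k - -k = m from by ring, show -(k - m) = m - k from by ring]
    have hdvd : (X ^ n - 1 : Polynomial ℚ) ∣ Pw n a * Pw n w := by
      have := key_dvd n a w
      have h0 : Pw n (fun k => ∑ m : ZMod n, a m * w (k - m)) = 0 := by
        rw [show (fun k => ∑ m : ZMod n, a m * w (k - m)) = (0 : ZMod n → ℚ) from
          funext fun k => hconv k]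
        simp [Pw]
      rwa [h0, sub_zero] at this
    have : (X ^ n - 1 : Polynomial ℚ) ∣ Pw n w := hco.symm.dvd_of_dvd_mul_left hdvd
    have := eq_zero_of_dvd_of_degree_lt this (by rw [hdegXn]; exact degree_Pw_lt n w)
    exact Pw_ne_zero n hwne this
  · intro hge
    obtain ⟨q, hq⟩ := hdvdR
    obtain ⟨g, hg⟩ := hdvdL
    have hqne : q ≠ 0 := by rintro rfl; rw [mul_zero] at hq; exact hXn hq
    have hnatd : 1 ≤ d.natDegree := by
      have := le_trans hge (degree_le_natDegree (p := d))
      exact_mod_cast this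
    have hnat : d.natDegree + q.natDegree = n := by
      have : (X ^ n - 1 : Polynomial ℚ).natDegree = n := by
        simpa using natDegree_X_pow_sub_C (n := n) (r := (1 : ℚ))
      rw [← this, hq, natDegree_mul hdne hqne]
    have hqdeg : q.degree < n := by
      have h1 : q.natDegree < n := by omega
      exact lt_of_le_of_lt degree_le_natDegree (by exact_mod_cast h1)
    set w : ZMod n → ℚ := fun k => q.coeff k.val with hw
    have hPw : Pw n w = q := Pw_eq_of_degree_lt n q hqdeg
    have hdvd : (X ^ n - 1 : Polynomial ℚ) ∣ Pw n a * Pw n w := by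
      refine ⟨g, ?_⟩
      rw [hPw, hg, hq]; ring
    have hconv := conv_eq_zero n a w hdvd
    rw [← Matrix.exists_mulVec_eq_zero_iff]
    refine ⟨fun j => w (-j), ?_, ?_⟩
    · intro h
      apply hqne
      rw [← hPw]
      have hw0 : w = 0 := by
        funext k
        have := congrFun h (-k)
        simpa using this
      rw [hw0]
      simp [Pw]
    · funext i
      simp only [Matrix.mulVec, dotProduct, Matrix.of_apply, Pi.zero_apply]
      rw [← hconv (-i)]
      refine Fintype.sum_equiv (Equiv.subRight i) _ _ fun j => ?_
      rw [Equiv.subRight_apply,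
        show -i - (j - i) = -j from by ring]
end

section
/- Let A ∈ M_n(ℚ) be the circulant matrix whose first row consists of s copies of a followed by t copies of b, where s + t = n and a ≠ b. Then det(A) = (sa + tb)(a − b)^{n−1} if gcd(s, n) = 1, and det(A) = 0 otherwise. -/
open Matrix Finset

lemma aux_det' (c : ℚ) : ∀ (m : ℕ) (A : Matrix (Fin (m+1)) (Fin (m+1)) ℚ),
    (∀ i j : Fin (m+1), i ≠ Fin.last m →
      A i j = c * ((if j = i then 1 else 0) - (if (j:ℕ) = (i:ℕ) + 1 then 1 else 0))) →
    A.det = c ^ m * ∑ j, A (Fin.last m) j := by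
  intro m
  induction m with
  | zero =>
    intro A h
    simp [Matrix.det_fin_one, show (Fin.last 0) = 0 from rfl]
  | succ m IH =>
    intro A h
    rw [Matrix.det_succ_column_zero]
    have hlast : (0 : Fin (m+2)) ≠ Fin.last (m+1) := by
      simp [Fin.ext_iff]
    have hsum : ∑ i : Fin (m+2), (-1:ℚ) ^ (i : ℕ) * A i 0 *
        (A.submatrix i.succAbove Fin.succ).det
        = (-1:ℚ) ^ ((0:Fin (m+2)) : ℕ) * A 0 0 * (A.submatrix (Fin.succAbove 0) Fin.succ).det
          + (-1:ℚ) ^ ((Fin.last (m+1) : Fin (m+2)) : ℕ) * A (Fin.last (m+1)) 0 *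
            (A.submatrix (Fin.succAbove (Fin.last (m+1))) Fin.succ).det := by
      refine Fintype.sum_eq_add _ _ hlast ?_
      rintro i ⟨hi0, hil⟩
      have : A i 0 = 0 := by
        rw [h i 0 hil]
        have h1 : ¬((0:Fin (m+2)) = i) := fun e => hi0 e.symm
        have h2 : ¬(((0:Fin (m+2)):ℕ) = (i:ℕ) + 1) := by simp
        simp [h1, h2]
      simp [this]
    rw [hsum]
    -- minor at 0 via IH
    have hB : (A.submatrix (Fin.succAbove 0) Fin.succ).det
        = c ^ m * ∑ j : Fin (m+1), A (Fin.last (m+1)) j.succ := by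
      have := IH (A.submatrix (Fin.succAbove 0) Fin.succ) ?_
      · rw [this]
        congr 1
      · intro i j hil
        rw [Matrix.submatrix_apply, Fin.succAbove_zero]
        have hsl : i.succ ≠ Fin.last (m+1) := by
          rw [← Fin.succ_last]
          exact fun e => hil (Fin.succ_injective _ e)
        rw [h _ _ hsl]
        congr 2
        · simp [Fin.succ_inj]
        · simp [Fin.val_succ]
    -- minor at last: lower triangular
    have hC : (A.submatrix (Fin.succAbove (Fin.last (m+1))) Fin.succ).det
        = (-c) ^ (m+1) := by
      have htri : (A.submatrix (Fin.succAbove (Fin.last (m+1))) Fin.succ).BlockTriangular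
          OrderDual.toDual := by
        intro i j hij
        have hij' : (i:ℕ) < (j:ℕ) := hij
        have hcs : Fin.succAbove (Fin.last (m+1)) i = i.castSucc := Fin.succAbove_last_apply i
        rw [Matrix.submatrix_apply, hcs, h _ _ (Fin.castSucc_lt_last i).ne]
        have h1 : ¬(j.succ = i.castSucc) := by
          intro e
          have := congrArg Fin.val e
          simp [Fin.val_succ] at this
          omega
        have h2 : ¬((j.succ : ℕ) = ((i.castSucc : Fin (m+2)) : ℕ) + 1) := by
          simp only [Fin.val_succ, Fin.coe_castSucc]
          omega
        simp [h1, h2]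
        intro e; exact absurd e (by omega)
      rw [Matrix.det_of_lowerTriangular _ htri]
      have hdiag : ∀ i : Fin (m+1),
          (A.submatrix (Fin.succAbove (Fin.last (m+1))) Fin.succ) i i = -c := by
        intro i
        have hcs : Fin.succAbove (Fin.last (m+1)) i = i.castSucc := Fin.succAbove_last_apply i
        rw [Matrix.submatrix_apply, hcs, h _ _ (Fin.castSucc_lt_last i).ne]
        have h1 : ¬(i.succ = i.castSucc) := by
          intro e; have := congrArg Fin.val e; simp [Fin.val_succ] at this
        have h2 : ((i.succ : ℕ) = ((i.castSucc : Fin (m+2)) : ℕ) + 1) := by simp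
        simp [h1, h2]
      calc ∏ i : Fin (m+1), (A.submatrix (Fin.succAbove (Fin.last (m+1))) Fin.succ) i i
          = ∏ _i : Fin (m+1), (-c) := Finset.prod_congr rfl fun i _ => hdiag i
        _ = (-c) ^ (m+1) := by simp
    have hA00 : A 0 0 = c := by
      rw [h _ _ hlast]; simp
    rw [hB, hC, hA00]
    have hlastval : ((Fin.last (m+1) : Fin (m+2)) : ℕ) = m + 1 := rfl
    rw [hlastval]
    have key : ((-1:ℚ))^(m+1) * (-c)^(m+1) = c^(m+1) := by rw [← mul_pow]; norm_num
    have hsplit : ∑ j : Fin (m+1+1), A (Fin.last (m+1)) j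
        = A (Fin.last (m+1)) 0 + ∑ j : Fin (m+1), A (Fin.last (m+1)) j.succ :=
      Fin.sum_univ_succ _
    simp only [Fin.val_zero, pow_zero, one_mul]
    linear_combination (A (Fin.last (m+1)) 0) * key - c^(m+1) * hsplit

/-- Determinant of the circulant matrix whose first row is `s` copies of `a`
followed by `t` copies of `b` (`s + t = n`, `a ≠ b`). -/
theorem det_circulant_two_blocks (n s t : ℕ) [NeZero n] (hs : 0 < s) (ht : 0 < t)
    (hst : s + t = n) (a b : ℚ) (hab : a ≠ b) :
    (Matrix.of fun i j : ZMod n => if (j - i).val < s then a else b).det =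
      if Nat.gcd s n = 1 then ((s : ℚ) * a + (t : ℚ) * b) * (a - b) ^ (n - 1)
      else 0 := by
  classical
  have hn : n ≠ 0 := NeZero.ne n
  have hn2 : 2 ≤ n := by omega
  haveI : Fact (1 < n) := ⟨by omega⟩
  have hsn : s < n := by omega
  set M : Matrix (ZMod n) (ZMod n) ℚ :=
    Matrix.of (fun i j : ZMod n => if (j - i).val < s then a else b) with hM
  have hcastval : ∀ x : ZMod n, ((x.val : ℕ) : ZMod n) = x := ZMod.natCast_rightInverse
  have hval1 : (1 : ZMod n).val = 1 := ZMod.val_one n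
  have hne_neg_one : ∀ x : ZMod n, x ≠ -1 → x.val < n - 1 := by
    intro x hx
    have hlt := ZMod.val_lt x
    by_contra hc
    have hv : x.val = n - 1 := by omega
    apply hx
    rw [← hcastval x, hv]
    push_cast [Nat.cast_sub (by omega : 1 ≤ n)]
    simp [ZMod.natCast_self]
  have hvadd1 : ∀ x : ZMod n, x ≠ -1 → (x + 1).val = x.val + 1 := by
    intro x hx
    rw [ZMod.val_add, hval1, Nat.mod_eq_of_lt (by have := hne_neg_one x hx; omega)]
  have hneg1val : (-1 : ZMod n).val = n - 1 := by
    have h1 : ((n - 1 : ℕ) : ZMod n) = -1 := by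
      push_cast [Nat.cast_sub (by omega : 1 ≤ n)]
      simp [ZMod.natCast_self]
    rw [← h1, ZMod.val_cast_of_lt (by omega)]
  have hsZ : ((s : ℕ) : ZMod n) ≠ 0 := by
    intro e
    rw [ZMod.natCast_eq_zero_iff] at e
    exact absurd (Nat.le_of_dvd hs e) (by omega)
  -- key entry difference computation
  have hstep : ∀ i j : ZMod n, i ≠ -1 →
      M i j - M (i+1) j
        = (a - b) * ((if j = i then 1 else 0) - (if j = i + (s:ZMod n) then 1 else 0)) := by
    intro i j hi
    have hMij : M i j = if (j - i).val < s then a else b := rfl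
    have hMij2 : M (i+1) j = if ((j - i) - 1).val < s then a else b := by
      rw [hM]
      simp only [Matrix.of_apply]
      congr 2
      ring
    rcases eq_or_ne (j - i) 0 with h0 | h0
    · have hj : j = i := by rwa [sub_eq_zero] at h0
      have hj2 : ¬ j = i + (s:ZMod n) := by
        rw [hj]; intro e
        exact hsZ (by linear_combination -e)
      rw [hMij, hMij2, h0, if_pos (by simpa using hs)]
      rw [if_neg ?_, if_pos hj, if_neg hj2]
      · ring
      · rw [zero_sub, hneg1val]; omega
    rcases eq_or_ne (j - i) ((s:ℕ) : ZMod n) with hsk | hsk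
    · have hj : j = i + (s:ZMod n) := by rw [← hsk]; ring
      have hj2 : ¬ j = i := by
        intro e; exact h0 (by rw [e, sub_self])
      have hv : (j - i).val = s := by rw [hsk, ZMod.val_cast_of_lt hsn]
      have hv2 : ((j - i) - 1).val = s - 1 := by
        rw [hsk, show ((s:ℕ):ZMod n) - 1 = ((s - 1 : ℕ) : ZMod n) by
          push_cast [Nat.cast_sub (by omega : 1 ≤ s)]; ring]
        rw [ZMod.val_cast_of_lt (by omega)]
      rw [hMij, hMij2, hv, hv2, if_neg (by omega), if_pos (by omega),
        if_neg hj2, if_pos hj]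
      ring
    · have hkv0 : (j - i).val ≠ 0 := by
        intro e; exact h0 (by rw [← hcastval (j - i), e]; simp)
      have hkvs : (j - i).val ≠ s := by
        intro e; exact hsk (by rw [← hcastval (j - i), e])
      have hk1 : ((j - i) - 1).val = (j - i).val - 1 := by
        have h2 : (j - i) - 1 = (((j - i).val - 1 : ℕ) : ZMod n) := by
          push_cast [Nat.cast_sub (by omega : 1 ≤ (j - i).val)]
          rw [hcastval]
        rw [h2, ZMod.val_cast_of_lt (by have := ZMod.val_lt (j - i); omega)]
      have hj : ¬ j = i := fun e => h0 (by rw [e, sub_self])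
      have hj2 : ¬ j = i + (s:ZMod n) := fun e => hsk (by rw [e]; ring)
      rw [hMij, hMij2, hk1, if_neg hj, if_neg hj2]
      by_cases hc : (j - i).val < s
      · rw [if_pos hc, if_pos (by omega)]; ring
      · rw [if_neg hc, if_neg (by omega)]; ring
  -- the row-difference matrix E
  set E : Matrix (ZMod n) (ZMod n) ℚ :=
    Matrix.of (fun i j : ZMod n => if i = j then (1:ℚ) else
      if i ≠ -1 ∧ j = i + 1 then -1 else 0) with hE
  let eFin : Fin n ≃ ZMod n :=
    { toFun := fun k => ((k.val : ℕ) : ZMod n)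
      invFun := fun x => ⟨x.val, ZMod.val_lt x⟩
      left_inv := fun k => by
        ext; simp [ZMod.val_cast_of_lt k.isLt]
      right_inv := fun x => by simp [hcastval x] }
  have heFin : ∀ k : Fin n, (eFin k).val = k.val := fun k => ZMod.val_cast_of_lt k.isLt
  have hdetE : E.det = 1 := by
    rw [← Matrix.det_submatrix_equiv_self eFin E]
    rw [Matrix.det_of_upperTriangular]
    · have h1 : ∀ i : Fin n, (E.submatrix eFin eFin) i i = 1 := by
        intro i
        simp [hE]
      calc ∏ i : Fin n, (E.submatrix eFin eFin) i i
          = ∏ _i : Fin n, (1:ℚ) := Finset.prod_congr rfl fun i _ => h1 i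
        _ = 1 := by simp
    · intro i j hij
      have hij' : (j:ℕ) < (i:ℕ) := hij
      have h1 : ¬ (eFin i = eFin j) := by
        intro e
        have := congrArg ZMod.val e
        rw [heFin, heFin] at this
        omega
      rw [hE]
      simp only [Matrix.submatrix_apply, Matrix.of_apply, if_neg h1]
      rw [if_neg]
      rintro ⟨hi1, e⟩
      have := congrArg ZMod.val e
      rw [heFin, hvadd1 _ hi1, heFin] at this
      omega
  have hRlast : ∀ j, (E * M) (-1) j = M (-1) j := by
    intro j
    rw [Matrix.mul_apply]
    have h : ∀ k : ZMod n, E (-1) k * M k j = if k = -1 then M (-1) j else 0 := by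
      intro k
      by_cases hk : k = -1
      · subst hk; simp [hE]
      · have h1 : ¬((-1 : ZMod n) = k) := fun e => hk e.symm
        simp [hE, h1, hk]
    rw [Finset.sum_congr rfl (fun k _ => h k)]
    simp
  have hR : ∀ i j : ZMod n, i ≠ -1 → (E * M) i j
      = (a - b) * ((if j = i then 1 else 0) - (if j = i + (s:ZMod n) then 1 else 0)) := by
    intro i j hi
    rw [Matrix.mul_apply]
    have hne : i ≠ i + 1 := by
      intro e
      have h10 : (1 : ZMod n) = 0 := by linear_combination -e
      exact one_ne_zero h10
    have hsum : ∑ k, E i k * M k j = M i j - M (i+1) j := by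
      rw [Fintype.sum_eq_add i (i+1) hne ?_]
      · have e1 : E i i = 1 := by simp [hE]
        have e2 : E i (i+1) = -1 := by simp [hE, hi, hne]
        rw [e1, e2]; ring
      · rintro k ⟨hk1, hk2⟩
        have h1 : ¬(i = k) := fun e => hk1 e.symm
        have h2 : ¬(k = i + 1) := hk2
        simp [hE, h1, h2]
    rw [hsum, hstep i j hi]
  have hdet : (E * M).det = M.det := by rw [Matrix.det_mul, hdetE, one_mul]
  by_cases hg : Nat.gcd s n = 1
  · -- coprime case
    rw [if_pos hg]
    obtain ⟨m, hm⟩ := Nat.exists_eq_succ_of_ne_zero hn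
    subst hm
    have hcop : Nat.Coprime s (m+1) := hg
    set u : (ZMod (m+1))ˣ := ZMod.unitOfCoprime s hcop with hudef
    have hu : (u : ZMod (m+1)) = ((s:ℕ) : ZMod (m+1)) := ZMod.coe_unitOfCoprime s hcop
    set ψ : Fin (m+1) ≃ ZMod (m+1) :=
      eFin.trans ((Equiv.addRight (1:ZMod (m+1))).trans
        ((Units.mulLeft u).trans (Equiv.addRight (-1:ZMod (m+1))))) with hψdef
    have hψ : ∀ k : Fin (m+1), ψ k = ((s:ℕ):ZMod (m+1)) * (((k:ℕ):ZMod (m+1)) + 1) - 1 := by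
      intro k
      have hek : eFin k = (((k:ℕ):ℕ) : ZMod (m+1)) := rfl
      simp only [hψdef, Equiv.trans_apply, Equiv.coe_addRight, Units.mulLeft_apply]
      rw [hek, hu]
      push_cast
      ring
    have hψlast : ψ (Fin.last m) = -1 := by
      rw [hψ]
      have h0 : (((Fin.last m : Fin (m+1)) : ℕ) : ZMod (m+1)) + 1 = 0 := by
        have hl : ((Fin.last m : Fin (m+1)) : ℕ) = m := rfl
        rw [hl, show ((m:ℕ):ZMod (m+1)) + 1 = (((m+1:ℕ)):ZMod (m+1)) by push_cast; ring,
          ZMod.natCast_self]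
      rw [h0, mul_zero, zero_sub]
    have hψne : ∀ k : Fin (m+1), k ≠ Fin.last m → ψ k ≠ -1 := by
      intro k hk e
      rw [hψ] at e
      have h1 : ((s:ℕ):ZMod (m+1)) * (((k:ℕ):ZMod (m+1)) + 1) = 0 := by
        linear_combination e
      rw [← hu] at h1
      have h2 : (((k:ℕ):ZMod (m+1)) + 1) = 0 := u.mul_right_eq_zero.mp h1
      rw [show (((k:ℕ):ZMod (m+1)) + 1) = (((k:ℕ)+1 : ℕ) : ZMod (m+1)) by push_cast; ring,
        ZMod.natCast_eq_zero_iff] at h2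
      have hkv : (k:ℕ) < m + 1 := k.isLt
      have hle := Nat.le_of_dvd (by omega) h2
      exact hk (Fin.ext (by omega : (k:ℕ) = m))
    have key := aux_det' (a - b) m ((E * M).submatrix ψ ψ) ?_
    · rw [Matrix.det_submatrix_equiv_self ψ] at key
      rw [← hdet, key]
      have hrow : ∀ j : Fin (m+1), ((E * M).submatrix ψ ψ) (Fin.last m) j
          = M (-1) (ψ j) := by
        intro j
        rw [Matrix.submatrix_apply, hψlast, hRlast]
      rw [Finset.sum_congr rfl (fun j _ => hrow j)]
      have hsum1 : ∑ j : Fin (m+1), M (-1) (ψ j) = ∑ y : ZMod (m+1), M (-1) y :=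
        Equiv.sum_comp ψ (fun y => M (-1) y)
      have hsum2 : ∑ y : ZMod (m+1), M (-1) y
          = ∑ y : ZMod (m+1), (if (y + 1).val < s then a else b) := by
        refine Finset.sum_congr rfl fun y _ => ?_
        rw [hM]
        simp only [Matrix.of_apply, sub_neg_eq_add]
      have hsum3 : ∑ y : ZMod (m+1), (if (y + 1).val < s then a else b)
          = ∑ z : ZMod (m+1), (if z.val < s then a else b) :=
        Equiv.sum_comp (Equiv.addRight (1 : ZMod (m+1))) (fun z => if z.val < s then a else b)
      have hsum4 : ∑ z : ZMod (m+1), (if z.val < s then a else b)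
          = ∑ k : Fin (m+1), (if (k:ℕ) < s then a else b) := by
        rw [← Equiv.sum_comp eFin (fun z => if z.val < s then a else b)]
        exact Finset.sum_congr rfl fun k _ => by rw [heFin]
      have hsum5 : ∑ k : Fin (m+1), (if (k:ℕ) < s then a else b)
          = (s:ℚ) * a + (t:ℚ) * b := by
        rw [Fin.sum_univ_eq_sum_range (fun i => if i < s then a else b) (m+1)]
        rw [Finset.range_eq_Ico,
          ← Finset.sum_Ico_consecutive _ (Nat.zero_le s) (le_of_lt hsn)]
        have e1 : ∑ i ∈ Finset.Ico 0 s, (if i < s then a else b) = (s:ℚ) * a := by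
          rw [Finset.sum_congr rfl (fun i hi => if_pos (Finset.mem_Ico.mp hi).2)]
          rw [Finset.sum_const, Nat.card_Ico, Nat.sub_zero, nsmul_eq_mul]
        have e2 : ∑ i ∈ Finset.Ico s (m+1), (if i < s then a else b) = (t:ℚ) * b := by
          rw [Finset.sum_congr rfl (fun i hi => if_neg (by
            have := (Finset.mem_Ico.mp hi).1; omega))]
          rw [Finset.sum_const, Nat.card_Ico]
          have he : m + 1 - s = t := by omega
          rw [he, nsmul_eq_mul]
        rw [e1, e2]
      rw [hsum1, hsum2, hsum3, hsum4, hsum5]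
      have hm1 : m + 1 - 1 = m := rfl
      rw [hm1]
      ring
    · intro k j hk
      rw [Matrix.submatrix_apply, hR _ _ (hψne k hk)]
      have h1 : (ψ j = ψ k) ↔ (j = k) := ψ.injective.eq_iff
      have hkm : (k:ℕ) < m := by
        have h := k.isLt
        rcases Nat.lt_or_ge (k:ℕ) m with h' | h'
        · exact h'
        · exact absurd (Fin.ext (by omega : (k:ℕ) = m)) hk
      have h2 : (ψ j = ψ k + ((s:ℕ):ZMod (m+1))) ↔ ((j:ℕ) = (k:ℕ) + 1) := by
        rw [hψ, hψ]
        constructor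
        · intro e
          have h3 : ((s:ℕ):ZMod (m+1)) * (((j:ℕ):ZMod (m+1)) + 1)
              = ((s:ℕ):ZMod (m+1)) * ((((k:ℕ):ZMod (m+1)) + 1) + 1) := by
            linear_combination e
          rw [← hu] at h3
          have h4 := (Units.mul_right_inj u).mp h3
          have h5 : ((j:ℕ):ZMod (m+1)) = (((k:ℕ)+1 : ℕ) : ZMod (m+1)) := by
            push_cast
            linear_combination h4
          have h6 := congrArg ZMod.val h5
          rwa [ZMod.val_cast_of_lt j.isLt, ZMod.val_cast_of_lt (by omega)] at h6
        · intro e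
          have h3 : ((j:ℕ):ZMod (m+1)) = ((k:ℕ):ZMod (m+1)) + 1 := by
            rw [e]; push_cast; ring
          rw [h3]; ring
      simp only [h1, h2]
  · -- non-coprime case
    rw [if_neg hg]
    rw [← hdet]
    apply Matrix.exists_vecMul_eq_zero_iff.mp
    set d := Nat.gcd s n with hd
    have hds : d ∣ s := Nat.gcd_dvd_left s n
    have hdn : d ∣ n := Nat.gcd_dvd_right s n
    have hd0 : d ≠ 0 := fun e => hn (Nat.eq_zero_of_gcd_eq_zero_right e)
    have hd2 : 2 ≤ d := by
      rcases Nat.lt_or_ge d 2 with h | h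
      · interval_cases d
        · exact absurd rfl hd0
        · exact absurd rfl hg
      · exact h
    haveI : NeZero d := ⟨hd0⟩
    haveI : Fact (1 < d) := ⟨by omega⟩
    set φ : ZMod n →+* ZMod d := ZMod.castHom hdn (ZMod d) with hφ
    set v : ZMod n → ℚ := fun x => if φ x = 0 then (1:ℚ) else 0 with hv
    have hv0 : v 0 = 1 := by simp [hv]
    have hvm1 : v (-1) = 0 := by
      rw [hv]
      simp only []
      rw [if_neg]
      intro e
      rw [map_neg, _root_.map_one, neg_eq_zero] at e
      exact one_ne_zero e
    refine ⟨v, ?_, ?_⟩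
    · intro e
      have h := congrFun e 0
      rw [hv0] at h
      exact one_ne_zero h
    · funext j
      simp only [Pi.zero_apply]
      have hterm : ∀ i : ZMod n, v i * (E*M) i j
          = (a-b) * ((if i = j then v i else 0) - (if i = j - ((s:ℕ):ZMod n) then v i else 0)) := by
        intro i
        by_cases hi : i = -1
        · subst hi
          rw [hvm1]
          by_cases c1 : (-1 : ZMod n) = j <;>
            by_cases c2 : (-1 : ZMod n) = j - ((s:ℕ):ZMod n) <;>
            simp [c1, c2]
        · rw [hR i j hi]
          have d1iff : (i = j) ↔ (j = i) := eq_comm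
          have d2iff : (i = j - ((s:ℕ):ZMod n)) ↔ (j = i + ((s:ℕ):ZMod n)) := by
            constructor
            · intro e; rw [e]; ring
            · intro e; rw [e]; ring
          rcases eq_or_ne j i with c1 | c1
          · have c2 : ¬ j = i + ((s:ℕ):ZMod n) := by
              rw [c1]; intro e; exact hsZ (by linear_combination -e)
            have d2 : ¬ i = j - ((s:ℕ):ZMod n) := fun e => c2 (d2iff.mp e)
            have d2' : ¬ i = i - ((s:ℕ):ZMod n) := by
              intro e; exact hsZ (by linear_combination e)
            simp [c1, c2, d1iff, d2, d2', hsZ]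
            try ring
          · by_cases c2 : j = i + ((s:ℕ):ZMod n) <;>
              simp [c1, c2, d1iff, d2iff, hsZ] <;> try ring
      calc (v ᵥ* (E*M)) j = ∑ i, v i * (E*M) i j := by
            simp [Matrix.vecMul, dotProduct]
        _ = ∑ i, (a-b) * ((if i = j then v i else 0)
              - (if i = j - ((s:ℕ):ZMod n) then v i else 0)) :=
            Finset.sum_congr rfl fun i _ => hterm i
        _ = (a-b) * ((∑ i, if i = j then v i else 0)
              - (∑ i, if i = j - ((s:ℕ):ZMod n) then v i else 0)) := by
            rw [← Finset.mul_sum, Finset.sum_sub_distrib]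
        _ = (a-b) * (v j - v (j - ((s:ℕ):ZMod n))) := by
            rw [Finset.sum_ite_eq' Finset.univ j v,
              Finset.sum_ite_eq' Finset.univ (j - ((s:ℕ):ZMod n)) v]
            simp
        _ = 0 := by
            have hφs : φ (j - ((s:ℕ):ZMod n)) = φ j := by
              rw [map_sub, map_natCast]
              rw [(ZMod.natCast_eq_zero_iff s d).mpr hds, sub_zero]
            have hvv : v (j - ((s:ℕ):ZMod n)) = v j := by
              simp only [hv, hφs]
            rw [hvv]; ring
end

section
/- The k-element circulant digraph on n vertices (the circulant matrix with first row consisting of k ones followed by n − k zeros) is non-singular if and only if gcd(n, k) = 1. -/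
section aux

variable {n : ℕ} [NeZero n]

/-- The circulant action as a finite sum. -/
lemma circ_mulVec_eq (k : ℕ) (hkn : k ≤ n) (v : ZMod n → ℚ) (i : ZMod n) :
    (Matrix.of fun i j : ZMod n => if (j - i).val < k then (1 : ℚ) else 0).mulVec v i
      = ∑ t ∈ Finset.range k, v (i + t) := by
  classical
  rw [Matrix.mulVec]
  simp only [Matrix.of_apply, dotProduct, ite_mul, one_mul, zero_mul]
  rw [Finset.sum_ite, Finset.sum_const_zero, add_zero]
  refine Finset.sum_nbij' (fun j => (j - i).val) (fun t => i + (t : ZMod n)) ?_ ?_ ?_ ?_ ?_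
  · intro j hj
    simp only [Finset.mem_filter] at hj
    exact Finset.mem_range.mpr hj.2
  · intro t ht
    simp only [Finset.mem_range] at ht
    simp only [Finset.mem_filter, Finset.mem_univ, true_and, add_sub_cancel_left]
    rwa [ZMod.val_natCast_of_lt (lt_of_lt_of_le ht hkn)]
  · intro j _
    simp [ZMod.natCast_val, ZMod.cast_id]
  · intro t ht
    simp only [Finset.mem_range] at ht
    show ((i + (t : ZMod n)) - i).val = t
    rw [add_sub_cancel_left, ZMod.val_natCast_of_lt (lt_of_lt_of_le ht hkn)]
  · intro j _
    simp [ZMod.natCast_val, ZMod.cast_id]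

lemma kernel_of_gcd_gt_one (k : ℕ) (hk : 1 ≤ k) (hkn : k ≤ n)
    (hd : Nat.gcd n k ≠ 1) :
    ∃ v : ZMod n → ℚ, v ≠ 0 ∧ ∀ i, ∑ t ∈ Finset.range k, v (i + t) = 0 := by
  classical
  set d := Nat.gcd n k with hdef
  have hdn : d ∣ n := Nat.gcd_dvd_left n k
  have hdk : d ∣ k := Nat.gcd_dvd_right n k
  have hdpos : 0 < d := Nat.gcd_pos_of_pos_right n hk
  have hd2 : 2 ≤ d := by omega
  haveI : NeZero d := ⟨by omega⟩
  haveI : Fact (1 < d) := ⟨hd2⟩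
  -- the weight function on `ZMod d`
  set w : ZMod d → ℚ := fun r => if r = 0 then -1 else if r = 1 then 1 else 0 with hw
  have hwsum : ∑ x : ZMod d, w x = 0 := by
    have : ∀ x : ZMod d, w x = (if x = 0 then (-1 : ℚ) else 0) + (if x = 1 then 1 else 0) := by
      intro x
      by_cases h0 : x = 0
      · subst h0
        have : (0 : ZMod d) ≠ 1 := by
          intro h; exact zero_ne_one h
        simp [hw, this]
      · by_cases h1 : x = 1 <;> simp [hw, h0, h1]
    rw [Finset.sum_congr rfl (fun x _ => this x)]
    rw [Finset.sum_add_distrib, Finset.sum_ite_eq' Finset.univ (0 : ZMod d) (fun _ => (-1 : ℚ)),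
      Finset.sum_ite_eq' Finset.univ (1 : ZMod d) (fun _ => (1 : ℚ))]
    simp
  -- sum of w over a full period is zero
  have hperiodsum : ∀ b : ZMod d, ∑ r ∈ Finset.range d, w (b + r) = 0 := by
    intro b
    have h1 : ∑ r ∈ Finset.range d, w (b + r) = ∑ x : ZMod d, w (b + x) := by
      refine Finset.sum_nbij' (fun r => ((r : ZMod d))) (fun x => x.val) ?_ ?_ ?_ ?_ ?_
      · intro r _; exact Finset.mem_univ _
      · intro x _; exact Finset.mem_range.mpr (ZMod.val_lt x)
      · intro r hr; exact ZMod.val_natCast_of_lt (Finset.mem_range.mp hr)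
      · intro x _; simp [ZMod.natCast_val, ZMod.cast_id]
      · intro r _; rfl
    rw [h1]
    rw [Fintype.sum_bijective (fun x => b + x) (AddGroup.addLeft_bijective b) _ _ (fun x => rfl)]
    exact hwsum
  -- sum over range (m * d) is zero
  have hmul : ∀ (m : ℕ) (b : ZMod d), ∑ t ∈ Finset.range (m * d), w (b + t) = 0 := by
    intro m
    induction m with
    | zero => intro b; simp
    | succ m ih =>
      intro b
      have hsplit : (m + 1) * d = m * d + d := by ring
      rw [hsplit, Finset.sum_range_add]
      rw [ih b]
      have : ∀ t ∈ Finset.range d, w (b + ((m * d + t : ℕ) : ZMod d))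
          = w ((b + (m * d : ℕ)) + (t : ℕ)) := by
        intro t _
        push_cast
        ring_nf
      rw [Finset.sum_congr rfl this, hperiodsum]
      simp
  -- the kernel vector
  set φ : ZMod n →+* ZMod d := ZMod.castHom hdn (ZMod d) with hφ
  refine ⟨fun j => w (φ j), ?_, ?_⟩
  · intro h
    have h0 : w (φ 0) = 0 := congrFun h 0
    rw [map_zero] at h0
    simp only [hw, if_pos rfl] at h0
    norm_num at h0
  · intro i
    obtain ⟨m, hm⟩ := hdk
    have : ∀ t ∈ Finset.range k, w (φ (i + (t : ℕ))) = w (φ i + (t : ℕ)) := by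
      intro t _
      rw [map_add, map_natCast]
    rw [Finset.sum_congr rfl this]
    rw [hm, mul_comm d m]
    exact hmul m (φ i)

lemma kernel_trivial_of_gcd_one (k : ℕ) (hk : 1 ≤ k)
    (hd : Nat.gcd n k = 1) (v : ZMod n → ℚ)
    (hv : ∀ i, ∑ t ∈ Finset.range k, v (i + t) = 0) : v = 0 := by
  classical
  -- periodicity: v (i + k) = v i
  have hper : ∀ i : ZMod n, v (i + (k : ZMod n)) = v i := by
    intro i
    have h1 : ∑ t ∈ Finset.range (k + 1), v (i + t) = v (i + (k : ZMod n)) := by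
      rw [Finset.sum_range_succ, hv i, zero_add]
    have h2 : ∑ t ∈ Finset.range (k + 1), v (i + t) = v i := by
      rw [Finset.sum_range_succ']
      have : ∀ t ∈ Finset.range k, v (i + ((t + 1 : ℕ) : ZMod n))
          = v ((i + 1) + (t : ℕ)) := by
        intro t _
        push_cast
        ring_nf
      rw [Finset.sum_congr rfl this, hv (i + 1)]
      simp
    rw [h1.symm, h2]
  -- v is constant
  have hmul : ∀ (m : ℕ) (i : ZMod n), v (i + (m : ZMod n) * (k : ZMod n)) = v i := by
    intro m
    induction m with
    | zero => intro i; simp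
    | succ m ih =>
      intro i
      have : i + ((m + 1 : ℕ) : ZMod n) * (k : ZMod n)
          = (i + (k : ZMod n)) + (m : ZMod n) * (k : ZMod n) := by
        push_cast; ring
      rw [this, ih (i + (k : ZMod n)), hper i]
  have hconst : ∀ j : ZMod n, v j = v 0 := by
    intro j
    have hcop : Nat.Coprime k n := Nat.Coprime.symm (by rwa [Nat.Coprime])
    have hu : IsUnit (k : ZMod n) := (ZMod.unitOfCoprime k hcop).isUnit
    obtain ⟨u, hu⟩ := hu
    set m := (j * ((u⁻¹ : (ZMod n)ˣ) : ZMod n)).val with hm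
    have hmk : (m : ZMod n) * (k : ZMod n) = j := by
      rw [hm, ZMod.natCast_val, ZMod.cast_id, ← hu]
      rw [mul_assoc]
      rw [Units.inv_mul]
      simp
    calc v j = v (0 + (m : ZMod n) * (k : ZMod n)) := by rw [zero_add, hmk]
    _ = v 0 := hmul m 0
  -- conclude
  have h0 : (k : ℚ) * v 0 = 0 := by
    have := hv 0
    rw [Finset.sum_congr rfl (fun t _ => by rw [zero_add, hconst])] at this
    rwa [Finset.sum_const, Finset.card_range, nsmul_eq_mul] at this
  have hk0 : (k : ℚ) ≠ 0 := by positivity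
  have hv0 : v 0 = 0 := by
    rcases mul_eq_zero.mp h0 with h | h
    · exact absurd h hk0
    · exact h
  funext j
  rw [hconst j, hv0]
  rfl

end aux

/-- The `k`-element circulant digraph on `n` vertices (circulant matrix whose
first row is `k` ones followed by `n - k` zeros) is non-singular iff
`gcd(n,k) = 1`. -/
theorem k_element_circulant_nonsingular_iff (n k : ℕ) [NeZero n]
    (hk : 1 ≤ k) (hkn : k ≤ n) :
    (Matrix.of fun i j : ZMod n => if (j - i).val < k then (1 : ℚ) else 0).det ≠ 0 ↔
      Nat.gcd n k = 1 := by
  classical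
  rw [← not_iff_not, not_ne_iff, ← Matrix.exists_mulVec_eq_zero_iff]
  constructor
  · rintro ⟨v, hv0, hv⟩ hgcd
    refine hv0 (kernel_trivial_of_gcd_one k hk hgcd v ?_)
    intro i
    rw [← circ_mulVec_eq k hkn v i, hv]
    rfl
  · intro hgcd
    obtain ⟨v, hv0, hv⟩ := kernel_of_gcd_gt_one k hk hkn hgcd
    refine ⟨v, hv0, ?_⟩
    funext i
    rw [circ_mulVec_eq k hkn v i, hv]
    rfl
end

section
/- Let p be a prime and k a positive integer with p ∤ k. Then any k-regular circulant graph or digraph on p^ℓ vertices (ℓ ≥ 1) has non-singular adjacency matrix. -/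
open Finset AddMonoidAlgebra

noncomputable def toMat {R : Type*} [CommRing R] {G : Type*} [AddCommGroup G] [Fintype G]
    [DecidableEq G] (f : AddMonoidAlgebra R G) : Matrix G G R :=
  Matrix.of fun i j : G => f.coeff (j - i)

lemma mul_apply_conv {R : Type*} [CommRing R] {G : Type*} [AddCommGroup G] [Fintype G]
    [DecidableEq G] (f g : AddMonoidAlgebra R G) (x : G) :
    (f * g).coeff x = ∑ u : G, f.coeff u * g.coeff (x - u) := by
  classical
  have hs : ∀ {q : G × G},
      q ∈ (Finset.univ.map ⟨fun u : G => (u, x - u), Function.LeftInverse.injective (g := Prod.fst) (fun _ => rfl)⟩) ↔ q.1 + q.2 = x := by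
    intro q
    simp only [Finset.mem_map, Finset.mem_univ, Function.Embedding.coeFn_mk, true_and]
    constructor
    · rintro ⟨u, rfl⟩; simp
    · rintro h; exact ⟨q.1, by rw [← h]; simp⟩
  rw [AddMonoidAlgebra.mul_apply_antidiagonal f g x _ hs, Finset.sum_map]
  rfl

lemma toMat_mul {R : Type*} [CommRing R] {G : Type*} [AddCommGroup G] [Fintype G]
    [DecidableEq G] (f g : AddMonoidAlgebra R G) :
    toMat (f * g) = toMat f * toMat g := by
  ext i j
  rw [Matrix.mul_apply]
  show (f * g).coeff (j - i) = ∑ t : G, f.coeff (t - i) * g.coeff (j - t)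
  rw [mul_apply_conv]
  apply Fintype.sum_equiv (Equiv.addRight i)
  intro u
  simp only [Equiv.coe_addRight]
  congr 2
  · abel
  · abel

lemma toMat_one {R : Type*} [CommRing R] {G : Type*} [AddCommGroup G] [Fintype G]
    [DecidableEq G] : toMat (1 : AddMonoidAlgebra R G) = 1 := by
  ext i j
  show (Finsupp.single (0:G) (1:R)) (j - i) = (1 : Matrix G G R) i j
  rw [Finsupp.single_apply, Matrix.one_apply]
  simp [eq_comm, sub_eq_zero]

lemma isUnit_toMat {R : Type*} [CommRing R] {G : Type*} [AddCommGroup G] [Fintype G]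
    [DecidableEq G] {f : AddMonoidAlgebra R G} (hf : IsUnit f) : IsUnit (toMat f) := by
  obtain ⟨u, rfl⟩ := hf
  exact ⟨⟨toMat (u : AddMonoidAlgebra R G), toMat (↑u⁻¹ : AddMonoidAlgebra R G),
    by rw [← toMat_mul, u.mul_inv, toMat_one],
    by rw [← toMat_mul, u.inv_mul, toMat_one]⟩, rfl⟩

/-- A `k`-regular circulant graph/digraph on `p^ℓ` vertices, where `p` is a
prime not dividing `k`, is non-singular. -/
theorem circulant_prime_power_nonsingular (p ℓ k : ℕ) (hp : p.Prime)
    (hℓ : 0 < ℓ) (hk : 0 < k) (hpk : ¬ p ∣ k) [NeZero (p ^ ℓ)]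
    (a : ZMod (p ^ ℓ) → ℚ) (h01 : ∀ u, a u = 0 ∨ a u = 1)
    (hreg : (∑ u : ZMod (p ^ ℓ), a u) = (k : ℚ)) :
    (Matrix.of fun i j : ZMod (p ^ ℓ) => a (j - i)).det ≠ 0 := by
  classical
  haveI hP : Fact p.Prime := ⟨hp⟩
  set c : ZMod (p ^ ℓ) → ℤ := fun u => if a u = 1 then 1 else 0 with hc
  have ha : ∀ u, a u = (c u : ℚ) := by
    intro u; rcases h01 u with h | h <;> simp [hc, h]
  have hsumc : (∑ u : ZMod (p ^ ℓ), c u) = (k : ℤ) := by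
    have h2 : ((∑ u : ZMod (p ^ ℓ), c u : ℤ) : ℚ) = (k : ℚ) := by
      push_cast
      rw [← hreg]; exact Finset.sum_congr rfl fun u _ => (ha u).symm
    exact_mod_cast h2
  intro hdet
  -- pass from ℚ to ℤ
  have hmapQ : (Matrix.of fun i j : ZMod (p ^ ℓ) => a (j - i))
      = (Int.castRingHom ℚ).mapMatrix (Matrix.of fun i j : ZMod (p ^ ℓ) => c (j - i)) := by
    ext i j; simp [ha]
  have hdetZ : (Matrix.of fun i j : ZMod (p ^ ℓ) => c (j - i)).det = 0 := by
    rw [hmapQ, ← RingHom.map_det] at hdet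
    simp only [Int.coe_castRingHom] at hdet
    exact_mod_cast hdet
  -- pass from ℤ to ZMod p
  set b : ZMod (p ^ ℓ) → ZMod p := fun u => ((c u : ℤ) : ZMod p) with hb
  have hdetP : (Matrix.of fun i j : ZMod (p ^ ℓ) => b (j - i)).det = 0 := by
    have : (Matrix.of fun i j : ZMod (p ^ ℓ) => b (j - i))
        = (Int.castRingHom (ZMod p)).mapMatrix
            (Matrix.of fun i j : ZMod (p ^ ℓ) => c (j - i)) := by
      ext i j; simp [hb]
    rw [this, ← RingHom.map_det, hdetZ]
    simp
  -- group algebra element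
  set f : AddMonoidAlgebra (ZMod p) (ZMod (p ^ ℓ)) :=
      ∑ u : ZMod (p ^ ℓ), AddMonoidAlgebra.single u (b u) with hf
  have hfapp : ∀ w, f.coeff w = b w := by
    intro w
    rw [hf, AddMonoidAlgebra.coeff_sum, Finset.sum_apply']
    simp [Finsupp.single_apply]
  have hM : (Matrix.of fun i j : ZMod (p ^ ℓ) => b (j - i)) = toMat f := by
    ext i j; simp [toMat, hfapp]
  haveI : CharP (AddMonoidAlgebra (ZMod p) (ZMod (p ^ ℓ))) p :=
    charP_of_injective_ringHom
      (f := (AddMonoidAlgebra.singleZeroRingHom :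
        ZMod p →+* AddMonoidAlgebra (ZMod p) (ZMod (p ^ ℓ))))
      (AddMonoidAlgebra.single_right_injective (m := 0)) p
  have hb01 : ∀ u, b u = 0 ∨ b u = 1 := by
    intro u
    rcases h01 u with h | h <;> simp [hb, hc, h]
  -- Frobenius computation
  have hfn : f ^ (p ^ ℓ) = AddMonoidAlgebra.single (0 : ZMod (p ^ ℓ)) ((k : ZMod p)) := by
    rw [hf, sum_pow_char_pow]
    have h1 : ∀ u : ZMod (p ^ ℓ),
        AddMonoidAlgebra.single u (b u) ^ (p ^ ℓ)
          = AddMonoidAlgebra.single (0 : ZMod (p ^ ℓ)) (b u) := by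
      intro u
      rw [AddMonoidAlgebra.single_pow]
      congr 1
      · rw [nsmul_eq_mul]
        simp [ZMod.natCast_self]
      · rcases hb01 u with h | h <;>
          simp [h, pow_eq_zero_iff (NeZero.ne (p ^ ℓ))]
    rw [Finset.sum_congr rfl fun u _ => h1 u]
    rw [show (∑ u : ZMod (p ^ ℓ), AddMonoidAlgebra.single (0 : ZMod (p ^ ℓ)) (b u))
      = AddMonoidAlgebra.single 0 (∑ u : ZMod (p ^ ℓ), b u) from
      (map_sum (AddMonoidAlgebra.singleAddHom (0 : ZMod (p ^ ℓ))) b Finset.univ).symm]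
    congr 1
    have : (∑ u : ZMod (p ^ ℓ), b u) = ((∑ u : ZMod (p ^ ℓ), c u : ℤ) : ZMod p) := by
      push_cast [hb]; rfl
    rw [this, hsumc]
    push_cast
    rfl
  have hk0 : (k : ZMod p) ≠ 0 := by
    rw [Ne, ZMod.natCast_eq_zero_iff]
    exact hpk
  have hunit : IsUnit f := by
    rw [← isUnit_pow_iff (n := p ^ ℓ) (NeZero.ne (p ^ ℓ)), hfn]
    exact (isUnit_iff_ne_zero.mpr hk0).map
      (AddMonoidAlgebra.singleZeroRingHom :
        ZMod p →+* AddMonoidAlgebra (ZMod p) (ZMod (p ^ ℓ)))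
  have hne : (toMat f).det ≠ 0 :=
    ((Matrix.isUnit_iff_isUnit_det _).mp (isUnit_toMat hunit)).ne_zero
  rw [← hM] at hne
  exact hne hdetP
end

section
/- Fix n ≥ 3 and 1 ≤ i ≤ τ where τ = ⌊n/2⌋. The distance-i graph C_n^i of the n-cycle (the circulant graph whose adjacency matrix A_i has (r,s)-entry 1 exactly when the cycle-distance between vertices r and s is i) has singular adjacency matrix if and only if 4 divides n and gcd(i, n/2) divides n/4. -/
lemma nt_lemma (n i : ℕ) (hn : 3 ≤ n) (hi : 1 ≤ i) :
    (∃ k : ℕ, n ∣ 4 * (i * k) ∧ ¬ n ∣ 2 * (i * k)) ↔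
      (4 ∣ n ∧ Nat.gcd i (n / 2) ∣ n / 4) := by
  constructor
  · rintro ⟨k, h4, h2⟩
    obtain ⟨c, hc⟩ := h4
    have hcodd : ¬ 2 ∣ c := by
      rintro ⟨c', rfl⟩
      refine h2 ⟨c', ?_⟩
      have e1 : 2 * (2 * (i * k)) = 2 * (n * c') := by
        rw [show 2 * (2 * (i * k)) = 4 * (i * k) from by ring, hc]; ring
      exact Nat.eq_of_mul_eq_mul_left (by omega) e1
    have h4n : 4 ∣ n := by
      have h4nc : 4 ∣ n * c := ⟨i * k, by omega⟩
      have hcop : Nat.Coprime 4 c := by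
        have h1 : Nat.Coprime 2 c := Nat.coprime_two_left.mpr (Nat.odd_iff.mpr (by omega))
        have := Nat.Coprime.pow_left 2 h1
        simpa using this
      exact Nat.Coprime.dvd_of_dvd_mul_left hcop (by rwa [mul_comm] at h4nc)
    refine ⟨h4n, ?_⟩
    obtain ⟨q, rfl⟩ := h4n
    have hq1 : 1 ≤ q := by omega
    have hmq : i * k = q * c := by
      have e1 : 4 * (i * k) = 4 * (q * c) := by rw [hc]; ring
      omega
    have hg : Nat.gcd i (4 * q / 2) ∣ Nat.gcd (q * c) (q * 2) := by
      apply Nat.dvd_gcd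
      · calc Nat.gcd i (4 * q / 2) ∣ i := Nat.gcd_dvd_left _ _
          _ ∣ i * k := ⟨k, rfl⟩
          _ = q * c := hmq
      · have h22 : 4 * q / 2 = q * 2 := by omega
        rw [← h22]; exact Nat.gcd_dvd_right _ _
    have hc2 : Nat.gcd c 2 = 1 :=
      Nat.Coprime.gcd_eq_one (Nat.coprime_two_right.mpr (Nat.odd_iff.mpr (by omega)))
    rw [Nat.gcd_mul_left, hc2, mul_one] at hg
    have h44 : 4 * q / 4 = q := by omega
    rw [h44]
    exact hg
  · rintro ⟨⟨q, rfl⟩, hg⟩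
    have hq1 : 1 ≤ q := by omega
    have hq2 : 4 * q / 2 = 2 * q := by omega
    have hq4 : 4 * q / 4 = q := by omega
    rw [hq2, hq4] at hg
    -- Bezout: q = i * x + 2q * y over ℤ
    have hbez : ∃ x y : ℤ, (q : ℤ) = (i : ℤ) * x + ((2 * q : ℕ) : ℤ) * y := by
      rw [← Int.gcd_dvd_iff, Int.gcd_natCast_natCast]
      exact_mod_cast hg
    obtain ⟨x, y, hxy⟩ := hbez
    set N : ℤ := ((2 * q : ℕ) : ℤ) with hN
    have hNpos : (0 : ℤ) < N := by simp [hN]; omega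
    set k : ℕ := (x % N).toNat with hk
    have hkx : (k : ℤ) = x % N := Int.toNat_of_nonneg (Int.emod_nonneg x (by omega))
    -- i * k ≡ q [ZMOD N]
    have hmod : ((i * k : ℕ) : ℤ) % N = (q : ℤ) % N := by
      have h1 : (i : ℤ) * (k : ℤ) ≡ (i : ℤ) * x [ZMOD N] := by
        apply Int.ModEq.mul_left
        rw [hkx]
        exact Int.emod_emod_of_dvd x dvd_rfl
      have h2 : (i : ℤ) * x ≡ (q : ℤ) [ZMOD N] := by
        rw [Int.modEq_iff_dvd]
        exact ⟨y, by linarith [hxy]⟩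
      have := h1.trans h2
      simpa [Int.ModEq, Nat.cast_mul] using this
    have hqN : (q : ℤ) % N = (q : ℤ) := Int.emod_eq_of_lt (by positivity) (by simp [hN]; omega)
    have hmodN : (i * k) % (2 * q) = q := by
      have : ((i * k : ℕ) : ℤ) % ((2 * q : ℕ) : ℤ) = ((q : ℕ) : ℤ) := by
        rw [← hN, hmod, hqN]
      rw [← Int.natCast_mod] at this
      exact_mod_cast this
    obtain ⟨s, hs⟩ : ∃ s, i * k = 2 * q * s + q := ⟨i * k / (2 * q), by
      conv_lhs => rw [← Nat.div_add_mod (i * k) (2 * q)]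
      rw [hmodN]⟩
    refine ⟨k, ⟨2 * s + 1, by rw [hs]; ring⟩, ?_⟩
    rintro ⟨t, ht⟩
    have e1 : (2 * s + 1) * (2 * q) = 2 * (i * k) := by rw [hs]; ring
    have e2 : (2 * t) * (2 * q) = 2 * (i * k) := by rw [ht]; ring
    have := Nat.eq_of_mul_eq_mul_right (show 0 < 2 * q by omega) (e1.trans e2.symm)
    omega

open Matrix Finset Complex

lemma pow_mod_eq {n : ℕ} {ζ : ℂ} (h1 : ζ ^ n = 1) (a : ℕ) : ζ ^ a = ζ ^ (a % n) := by
  conv_lhs => rw [← Nat.div_add_mod a n]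
  rw [pow_add, pow_mul, h1, one_pow, one_mul]

lemma pow_congr_of_primroot {n : ℕ} {ζ : ℂ} (h1 : ζ ^ n = 1) {a b : ℕ}
    (h : a ≡ b [MOD n]) : ζ ^ a = ζ ^ b := by
  rw [pow_mod_eq h1 a, pow_mod_eq h1 b, h]

section main

variable (n i : ℕ) [NeZero n]

/-- the complex adjacency matrix -/
noncomputable def Amat : Matrix (ZMod n) (ZMod n) ℂ :=
  Matrix.of fun r s : ZMod n =>
    if min (r - s).val (n - (r - s).val) = i then (1 : ℂ) else 0

/-- condition characterization in case `2 * i < n` -/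
lemma min_cond_iff (hi : 1 ≤ i) (h2i : 2 * i < n) (t : ZMod n) :
    min t.val (n - t.val) = i ↔ t = (i : ZMod n) ∨ t = -(i : ZMod n) := by
  have hv : t.val < n := ZMod.val_lt t
  have hvi : ((i : ZMod n)).val = i := ZMod.val_cast_of_lt (by omega)
  have hni : (-(i : ZMod n)) = ((n - i : ℕ) : ZMod n) := by
    rw [Nat.cast_sub (by omega : i ≤ n), ZMod.natCast_self]
    ring
  have hvni : (-(i : ZMod n)).val = n - i := by
    rw [hni, ZMod.val_cast_of_lt (by omega)]
  constructor
  · intro h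
    have hcase : t.val = i ∨ t.val = n - i := by
      rcases le_total t.val (n - t.val) with hle | hle
      · left; rw [min_eq_left hle] at h; exact h
      · right; rw [min_eq_right hle] at h; omega
    rcases hcase with h' | h'
    · left
      have := ZMod.natCast_rightInverse (n := n) t
      rw [← this, h']
    · right
      have := ZMod.natCast_rightInverse (n := n) t
      rw [← this, h', hni]
  · rintro (rfl | rfl)
    · rw [hvi, min_eq_left (by omega)]
    · rw [hvni, min_eq_right (by omega)]; omega

lemma cast_ne_neg (hi : 1 ≤ i) (h2i : 2 * i < n) : (i : ZMod n) ≠ -(i : ZMod n) := by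
  intro h
  have hvi : ((i : ZMod n)).val = i := ZMod.val_cast_of_lt (by omega)
  have hni : (-(i : ZMod n)) = ((n - i : ℕ) : ZMod n) := by
    rw [Nat.cast_sub (by omega : i ≤ n), ZMod.natCast_self]
    ring
  have hvni : (-(i : ZMod n)).val = n - i := by
    rw [hni, ZMod.val_cast_of_lt (by omega)]
  have hv := congrArg ZMod.val h
  rw [hvi, hvni] at hv
  omega

/-- the DFT matrix -/
noncomputable def Fmat (ζ : ℂ) : Matrix (ZMod n) (ZMod n) ℂ :=
  Matrix.of fun r j : ZMod n => ζ ^ (r.val * j.val)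

/-- eigenvalues -/
noncomputable def dvec (ζ : ℂ) (j : ZMod n) : ℂ :=
  ζ ^ ((n - i) * j.val) + ζ ^ (i * j.val)

lemma Fmat_det_ne_zero {ζ : ℂ} (hζ : IsPrimitiveRoot ζ n) : (Fmat n ζ).det ≠ 0 := by
  classical
  let e : ZMod n ≃ Fin n :=
    { toFun := fun r => ⟨r.val, ZMod.val_lt r⟩
      invFun := fun p => ((p : ℕ) : ZMod n)
      left_inv := fun r => ZMod.natCast_rightInverse r
      right_inv := fun p => by
        ext
        exact ZMod.val_cast_of_lt p.isLt }
  have hF : Fmat n ζ = (Matrix.vandermonde fun p : Fin n => ζ ^ (p : ℕ)).submatrix e e := by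
    ext r j
    simp [Fmat, Matrix.vandermonde, e, ← pow_mul]
  rw [hF, Matrix.det_submatrix_equiv_self, Matrix.det_vandermonde]
  apply Finset.prod_ne_zero_iff.mpr
  intro p _
  apply Finset.prod_ne_zero_iff.mpr
  intro q hq
  rw [Finset.mem_Ioi] at hq
  intro h
  have hqp := hζ.pow_inj q.isLt p.isLt (by rwa [sub_eq_zero] at h)
  exact (ne_of_gt hq) (Fin.val_injective hqp)

lemma mul_eq {ζ : ℂ} (hζ : IsPrimitiveRoot ζ n) (hi : 1 ≤ i) (h2i : 2 * i < n) :
    Amat n i * Fmat n ζ = Fmat n ζ * Matrix.diagonal (dvec n i ζ) := by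
  have hn0 : n ≠ 0 := NeZero.ne n
  have hone : ζ ^ n = 1 := hζ.pow_eq_one
  ext r j
  rw [Matrix.mul_apply, Matrix.mul_apply]
  have hne : r - (i : ZMod n) ≠ r + (i : ZMod n) := by
    intro h
    apply cast_ne_neg n i hi h2i
    linear_combination -h
  have hsplit : ∀ s : ZMod n,
      Amat n i r s * Fmat n ζ s j =
        (if s = r - (i : ZMod n) then ζ ^ (s.val * j.val) else 0) +
        (if s = r + (i : ZMod n) then ζ ^ (s.val * j.val) else 0) := by
    intro s
    have hcond : (min (r - s).val (n - (r - s).val) = i) ↔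
        (s = r - (i : ZMod n) ∨ s = r + (i : ZMod n)) := by
      rw [min_cond_iff n i hi h2i]
      constructor
      · rintro (h | h)
        · left; rw [← h]; ring
        · right; rw [show r + (i : ZMod n) = r - -(i : ZMod n) from by ring, ← h]; ring
      · rintro (rfl | rfl)
        · left; ring
        · right; ring
    simp only [Amat, Fmat, Matrix.of_apply]
    rw [if_congr hcond rfl rfl]
    by_cases h1 : s = r - (i : ZMod n) <;> by_cases h2 : s = r + (i : ZMod n)
    · exact absurd (h1.symm.trans h2) hne
    · simp [h1, h2, hne]
    · simp [h1, h2, hne.symm]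
    · simp [h1, h2]
  rw [Finset.sum_congr rfl fun s _ => hsplit s, Finset.sum_add_distrib,
    Finset.sum_ite_eq' Finset.univ (r - (i : ZMod n)) (fun s => ζ ^ (s.val * j.val)),
    Finset.sum_ite_eq' Finset.univ (r + (i : ZMod n)) (fun s => ζ ^ (s.val * j.val))]
  simp only [Finset.mem_univ, if_true]
  have hval_sub : ((r.val + (n - i) : ℕ) : ZMod n) = r - (i : ZMod n) := by
    rw [Nat.cast_add, Nat.cast_sub (by omega : i ≤ n), ZMod.natCast_self,
      ZMod.natCast_rightInverse r]
    ring
  have hval_add : ((r.val + i : ℕ) : ZMod n) = r + (i : ZMod n) := by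
    rw [Nat.cast_add, ZMod.natCast_rightInverse r]
  have e1 : ζ ^ ((r - (i : ZMod n)).val * j.val) = ζ ^ ((r.val + (n - i)) * j.val) := by
    rw [← hval_sub, ZMod.val_natCast]
    exact pow_congr_of_primroot hone ((Nat.mod_modEq _ n).mul_right j.val)
  have e2 : ζ ^ ((r + (i : ZMod n)).val * j.val) = ζ ^ ((r.val + i) * j.val) := by
    rw [← hval_add, ZMod.val_natCast]
    exact pow_congr_of_primroot hone ((Nat.mod_modEq _ n).mul_right j.val)
  rw [e1, e2]
  rw [Finset.sum_eq_single j (fun b _ hb => by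
      simp [Matrix.diagonal_apply_ne _ hb]) (fun h => absurd (Finset.mem_univ j) h)]
  simp only [Matrix.diagonal_apply_eq, Fmat, Matrix.of_apply, dvec]
  rw [mul_add, ← pow_add, ← pow_add]
  congr 1
  · congr 1
    ring
  · congr 1
    ring

lemma det_eq_prod {ζ : ℂ} (hζ : IsPrimitiveRoot ζ n) (hi : 1 ≤ i) (h2i : 2 * i < n) :
    (Amat n i).det = ∏ j : ZMod n, dvec n i ζ j := by
  have h := congrArg Matrix.det (mul_eq n i hζ hi h2i)
  rw [Matrix.det_mul, Matrix.det_mul, Matrix.det_diagonal, mul_comm ((Fmat n ζ).det)] at h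
  exact mul_right_cancel₀ (Fmat_det_ne_zero n hζ) h

end main

section extra

open Matrix Finset Complex

variable (n i : ℕ) [NeZero n]

lemma dvec_eq_zero_iff {ζ : ℂ} (hζ : IsPrimitiveRoot ζ n) (hi : 1 ≤ i) (h2i : 2 * i < n)
    (j : ZMod n) :
    dvec n i ζ j = 0 ↔ (n ∣ 4 * (i * j.val) ∧ ¬ n ∣ 2 * (i * j.val)) := by
  have hn0 : n ≠ 0 := NeZero.ne n
  have hone : ζ ^ n = 1 := hζ.pow_eq_one
  set a := i * j.val with ha
  have hza : ζ ^ a ≠ 0 := pow_ne_zero _ (hζ.ne_zero hn0)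
  have hprod : ζ ^ ((n - i) * j.val) * ζ ^ a = 1 := by
    rw [← pow_add, show (n - i) * j.val + a = n * j.val from by
      rw [ha, ← add_mul]; congr 1; omega, pow_mul, hone, one_pow]
  have hdv : dvec n i ζ j = (ζ ^ a)⁻¹ + ζ ^ a := by
    rw [dvec, eq_inv_of_mul_eq_one_left hprod]
  have hsq : ζ ^ a * ζ ^ a = ζ ^ (2 * a) := by rw [← pow_add]; congr 1; ring
  have key : dvec n i ζ j = 0 ↔ ζ ^ (2 * a) = -1 := by
    rw [hdv]
    constructor
    · intro h
      have h' := congrArg (· * ζ ^ a) h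
      simp only [add_mul, inv_mul_cancel₀ hza, zero_mul] at h'
      rw [← hsq]
      linear_combination h'
    · intro h
      rw [← hsq] at h
      have hrw : (ζ ^ a)⁻¹ + ζ ^ a = (1 + ζ ^ a * ζ ^ a) * (ζ ^ a)⁻¹ := by
        rw [add_mul, one_mul, mul_inv_cancel_right₀ hza]
      rw [hrw, h]
      norm_num
  rw [key]
  constructor
  · intro h
    constructor
    · rw [show 4 * a = (2 * a) * 2 from by ring, ← hζ.pow_eq_one_iff_dvd, pow_mul, h]
      norm_num
    · intro hd
      have := (hζ.pow_eq_one_iff_dvd (2 * a)).mpr hd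
      rw [h] at this
      norm_num at this
  · rintro ⟨h4, h2⟩
    have h1 : ζ ^ (2 * a) * ζ ^ (2 * a) = 1 := by
      rw [← pow_add, show 2 * a + 2 * a = 4 * a from by ring]
      exact (hζ.pow_eq_one_iff_dvd _).mpr h4
    rcases mul_self_eq_one_iff.mp h1 with h | h
    · exact absurd ((hζ.pow_eq_one_iff_dvd _).mp h) h2
    · exact h

end extra

/-- The distance-`i` graph `C_n^i` of the `n`-cycle is singular iff `4 ∣ n`
and `gcd(i, n/2) ∣ n/4`. -/
theorem distance_graph_cycle_singular_iff (n i : ℕ) [NeZero n]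
    (hn : 3 ≤ n) (hi : 1 ≤ i) (hin : i ≤ n / 2) :
    (Matrix.of fun r s : ZMod n =>
        if min (r - s).val (n - (r - s).val) = i then (1 : ℚ) else 0).det = 0 ↔
      (4 ∣ n ∧ Nat.gcd i (n / 2) ∣ n / 4) := by
  have hn0 : n ≠ 0 := NeZero.ne n
  rcases (by omega : 2 * i < n ∨ 2 * i = n) with h2i | h2i
  · -- main case
    set ζ : ℂ := Complex.exp (2 * Real.pi * Complex.I / n) with hzeta
    have hζ : IsPrimitiveRoot ζ n := Complex.isPrimitiveRoot_exp n hn0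
    have hmap : (Matrix.of fun r s : ZMod n =>
        if min (r - s).val (n - (r - s).val) = i then (1 : ℚ) else 0).map
          (algebraMap ℚ ℂ) = Amat n i := by
      ext r s
      simp [Amat, Matrix.map_apply, apply_ite]
    have h1 : (algebraMap ℚ ℂ)
        (Matrix.of fun r s : ZMod n =>
          if min (r - s).val (n - (r - s).val) = i then (1 : ℚ) else 0).det
        = (Amat n i).det := by
      rw [RingHom.map_det, RingHom.mapMatrix_apply, hmap]
    have hiff : ((Matrix.of fun r s : ZMod n =>
          if min (r - s).val (n - (r - s).val) = i then (1 : ℚ) else 0).det = 0)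
        ↔ ((Amat n i).det = 0) := by
      rw [← h1]
      exact (map_eq_zero_iff (algebraMap ℚ ℂ) (algebraMap ℚ ℂ).injective).symm
    rw [hiff]
    rw [det_eq_prod n i hζ hi h2i, Finset.prod_eq_zero_iff]
    rw [show (∃ j ∈ Finset.univ, dvec n i ζ j = 0) ↔
        (∃ j : ZMod n, n ∣ 4 * (i * j.val) ∧ ¬ n ∣ 2 * (i * j.val)) from by
      simp only [Finset.mem_univ, true_and]
      exact exists_congr fun j => dvec_eq_zero_iff n i hζ hi h2i j]
    rw [← nt_lemma n i hn hi]
    constructor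
    · rintro ⟨j, hj⟩
      exact ⟨j.val, hj⟩
    · rintro ⟨k, hk1, hk2⟩
      refine ⟨(k : ZMod n), ?_, ?_⟩
      · rw [ZMod.val_natCast]
        have hc : 4 * (i * (k % n)) ≡ 4 * (i * k) [MOD n] :=
          ((Nat.mod_modEq k n).mul_left i).mul_left 4
        rw [← Nat.modEq_zero_iff_dvd] at hk1 ⊢
        exact hc.trans hk1
      · rw [ZMod.val_natCast]
        have hc : 2 * (i * (k % n)) ≡ 2 * (i * k) [MOD n] :=
          ((Nat.mod_modEq k n).mul_left i).mul_left 2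
        rw [← Nat.modEq_zero_iff_dvd] at hk2 ⊢
        intro h
        exact hk2 (hc.symm.trans h)
  · -- case 2 * i = n : permutation matrix, determinant ±1, RHS false
    have hieq : i = n / 2 := by omega
    have hvlt : i < n := by omega
    set c : ZMod n := ((i : ℕ) : ZMod n) with hc
    set σ : Equiv.Perm (ZMod n) := Equiv.subRight c with hσ
    have hA : (Matrix.of fun r s : ZMod n =>
        if min (r - s).val (n - (r - s).val) = i then (1 : ℚ) else 0) =
        σ.permMatrix ℚ := by
      ext r s
      have hcond : (min (r - s).val (n - (r - s).val) = i) ↔ (σ r = s) := by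
        have hv : (r - s).val < n := ZMod.val_lt _
        have step1 : (min (r - s).val (n - (r - s).val) = i) ↔ ((r - s).val = i) := by
          constructor
          · intro h
            rcases le_total (r - s).val (n - (r - s).val) with hle | hle
            · rw [min_eq_left hle] at h; omega
            · rw [min_eq_right hle] at h; omega
          · intro h
            rw [h, show n - i = i from by omega, min_self]
        have step2 : ((r - s).val = i) ↔ (r - s = c) := by
          constructor
          · intro h
            rw [← ZMod.natCast_rightInverse (n := n) (r - s), h]
          · intro h
            rw [h, hc, ZMod.val_cast_of_lt hvlt]
        have step3 : (r - s = c) ↔ (σ r = s) := by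
          rw [hσ]
          simp only [Equiv.subRight_apply]
          constructor
          · intro h; rw [← h]; ring
          · intro h; rw [← h]; ring
        rw [step1, step2, step3]
      simp only [Matrix.of_apply, Equiv.Perm.permMatrix, PEquiv.toMatrix_toPEquiv_apply,
        Matrix.one_apply, Pi.single_apply]
      exact if_congr (hcond.trans eq_comm) rfl rfl
    rw [hA, Matrix.det_permutation]
    constructor
    · intro h
      exfalso
      rcases Int.units_eq_one_or (Equiv.Perm.sign σ) with hs | hs <;>
        rw [hs] at h <;> norm_num at h
    · rintro ⟨h4, hg⟩
      exfalso
      obtain ⟨q, rfl⟩ := h4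
      have hgg : Nat.gcd i (4 * q / 2) = i := by
        rw [show 4 * q / 2 = i from by omega, Nat.gcd_self]
      rw [hgg, show 4 * q / 4 = q from by omega] at hg
      have := Nat.le_of_dvd (by omega) hg
      omega
end

section
/- Let n ≥ 4 be even and τ = n/2. Then the complement graph (C_n^τ)^c is singular. If n is odd, (C_n^τ)^c is singular if and only if n ≡ 3 (mod 6). -/
set_option linter.unusedSectionVars false
set_option maxHeartbeats 1000000

open Matrix Finset

namespace CDTS

variable {n : ℕ} [NeZero n]

noncomputable def e (ω : ℂ) (a : ZMod n) : ℂ := ω ^ a.val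

omit [NeZero n] in
lemma e_zero {ω : ℂ} : e ω (0 : ZMod n) = 1 := by simp [e]

variable {ω : ℂ} (hω : IsPrimitiveRoot ω n)
include hω

lemma pow_val_mod (m : ℕ) : ω ^ (m % n) = ω ^ m := by
  conv_rhs => rw [show m = n * (m / n) + m % n from (Nat.div_add_mod m n).symm]
  rw [pow_add, pow_mul, hω.pow_eq_one, one_pow, one_mul]

lemma e_add (a b : ZMod n) : e ω (a + b) = e ω a * e ω b := by
  rw [e, ZMod.val_add, pow_val_mod hω, pow_add]; rfl

lemma e_ne_zero (a : ZMod n) : e ω a ≠ 0 :=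
  pow_ne_zero _ (hω.ne_zero (NeZero.ne n))

lemma e_neg_mul (a : ZMod n) : e ω a * e ω (-a) = 1 := by
  rw [← e_add hω, add_neg_cancel, e_zero]

lemma e_ne_one {a : ZMod n} (ha : a ≠ 0) : e ω a ≠ 1 := by
  refine hω.pow_ne_one_of_pos_of_lt ?_ (ZMod.val_lt a)
  exact fun h => ha (by rwa [ZMod.val_eq_zero] at h)

lemma sum_e (j : ZMod n) :
    ∑ d : ZMod n, e ω (d * j) = if j = 0 then (n : ℂ) else 0 := by
  by_cases hj : j = 0
  · simp [hj, e_zero, ZMod.card]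
  · simp only [hj, if_false]
    have key : e ω j * ∑ d : ZMod n, e ω (d * j) = ∑ d : ZMod n, e ω (d * j) := by
      rw [Finset.mul_sum]
      refine Fintype.sum_equiv (Equiv.addLeft (1 : ZMod n)) _ _ fun d => ?_
      simp only [Equiv.coe_addLeft]
      rw [add_mul, one_mul, add_comm, e_add hω, mul_comm]
    have := sub_eq_zero.mpr key
    rw [← sub_one_mul] at this
    rcases mul_eq_zero.mp this with h | h
    · exact absurd (sub_eq_zero.mp h) (e_ne_one hω hj)
    · exact h


lemma det_circulant_eq (c : ZMod n → ℂ) :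
    (Matrix.circulant c).det = ∏ j : ZMod n, ∑ d : ZMod n, c (-d) * e ω (d * j) := by
  set W : Matrix (ZMod n) (ZMod n) ℂ := Matrix.of fun i j => e ω (i * j) with hW
  set D : ZMod n → ℂ := fun j => ∑ d : ZMod n, c (-d) * e ω (d * j) with hD
  have hmul : Matrix.circulant c * W = W * Matrix.diagonal D := by
    ext i j
    rw [Matrix.mul_diagonal, Matrix.mul_apply]
    simp only [hW, Matrix.circulant_apply, Matrix.of_apply, hD, Finset.mul_sum]
    refine (Fintype.sum_equiv (Equiv.addLeft i) _ _ fun d => ?_).symm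
    simp only [Equiv.coe_addLeft]
    rw [show i - (i + d) = -d by ring, add_mul, e_add hω]
    ring
  have hWdet : W.det ≠ 0 := by
    have hWW : W * (Matrix.of fun i j : ZMod n => e ω (-(i * j))) = (n : ℂ) • 1 := by
      ext i k
      rw [Matrix.mul_apply]
      simp only [hW, Matrix.of_apply]
      have : ∀ j : ZMod n, e ω (i * j) * e ω (-(j * k)) = e ω (j * (i - k)) := by
        intro j
        rw [show j * (i - k) = i * j + -(j * k) by ring, e_add hω]
      simp only [this, sum_e hω]
      by_cases h : i = k
      · simp [h, Matrix.one_apply, sub_eq_zero.mpr rfl]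
      · have : i - k ≠ 0 := sub_ne_zero.mpr h
        simp [this, Matrix.one_apply, h]
    intro h0
    have := congrArg Matrix.det hWW
    rw [Matrix.det_mul, h0, zero_mul, Matrix.smul_one_eq_diagonal, Matrix.det_diagonal] at this
    simp only [Finset.prod_const, Finset.card_univ, ZMod.card] at this
    exact (pow_ne_zero n (Nat.cast_ne_zero.mpr (NeZero.ne n)) : (n:ℂ)^n ≠ 0) this.symm
  have := congrArg Matrix.det hmul
  rw [Matrix.det_mul, Matrix.det_mul, Matrix.det_diagonal, mul_comm W.det] at this
  exact mul_right_cancel₀ hWdet this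


end CDTS

/-- The complement of the distance-`τ` graph of `C_n`, `τ = ⌊n/2⌋`: it is
singular whenever `n` is even, and for odd `n` it is singular iff
`n ≡ 3 (mod 6)`. -/
theorem complement_distance_tau_singular (n : ℕ) [NeZero n] (hn : 4 ≤ n) :
    (Even n →
        (Matrix.of fun r s : ZMod n =>
          if r ≠ s ∧ min (r - s).val (n - (r - s).val) ≠ n / 2 then (1 : ℚ)
          else 0).det = 0) ∧
      (Odd n →
        ((Matrix.of fun r s : ZMod n =>
          if r ≠ s ∧ min (r - s).val (n - (r - s).val) ≠ n / 2 then (1 : ℚ)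
          else 0).det = 0 ↔ n % 6 = 3)) := by
  classical
  obtain ⟨ω, hω⟩ : ∃ ω : ℂ, IsPrimitiveRoot ω n :=
    ⟨_, Complex.isPrimitiveRoot_exp n (NeZero.ne n)⟩
  set τ := n / 2 with hτdef
  set M : Matrix (ZMod n) (ZMod n) ℚ := Matrix.of fun r s : ZMod n =>
      if r ≠ s ∧ min (r - s).val (n - (r - s).val) ≠ n / 2 then (1 : ℚ) else 0 with hM
  set cc : ZMod n → ℂ := fun d =>
      if d ≠ 0 ∧ min d.val (n - d.val) ≠ τ then 1 else 0 with hcc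
  have hccval : ∀ d : ZMod n, cc d = if d ≠ 0 ∧ min d.val (n - d.val) ≠ τ then 1 else 0 :=
    fun d => rfl
  have hmap : M.map (algebraMap ℚ ℂ) = Matrix.circulant cc := by
    ext r s
    rw [Matrix.map_apply, hM, Matrix.of_apply, Matrix.circulant_apply, hccval,
      apply_ite (algebraMap ℚ ℂ), _root_.map_one, _root_.map_zero]
    simp only [ne_eq, sub_eq_zero, hτdef]
  set D : ZMod n → ℂ := fun j => ∑ d : ZMod n, cc (-d) * CDTS.e ω (d * j) with hD
  have hdetC : (algebraMap ℚ ℂ) M.det = ∏ j : ZMod n, D j := by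
    rw [RingHom.map_det, RingHom.mapMatrix_apply, hmap, CDTS.det_circulant_eq hω]
  have hiff : M.det = 0 ↔ ∃ j : ZMod n, D j = 0 := by
    constructor
    · intro h
      have h0 : ∏ j : ZMod n, D j = 0 := by rw [← hdetC, h, map_zero]
      obtain ⟨j, _, hj⟩ := Finset.prod_eq_zero_iff.mp h0
      exact ⟨j, hj⟩
    · rintro ⟨j, hj⟩
      have h0 : (algebraMap ℚ ℂ) M.det = 0 := by
        rw [hdetC]; exact Finset.prod_eq_zero (Finset.mem_univ j) hj
      exact (map_eq_zero _).mp h0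
  -- val of τ as ZMod element
  have hτlt : τ < n := by omega
  have hτpos : 2 ≤ τ := by omega
  have htZval : ((τ : ℕ) : ZMod n).val = τ := ZMod.val_cast_of_lt hτlt
  have htZ0 : ((τ : ℕ) : ZMod n) ≠ 0 := by
    intro h; rw [h, ZMod.val_zero] at htZval; omega
  have hdval : ∀ d : ZMod n, ((d.val : ℕ) : ZMod n) = d := fun d =>
    ZMod.natCast_rightInverse d
  have h0t : (0 : ZMod n) ≠ ((τ:ℕ) : ZMod n) := fun h => htZ0 h.symm
  constructor
  · -- even case
    intro hev
    have h2τ : τ + τ = n := by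
      obtain ⟨m, hm⟩ := hev; omega
    have htneg : -((τ : ℕ) : ZMod n) = ((τ : ℕ) : ZMod n) := by
      have : ((τ : ℕ) : ZMod n) + ((τ : ℕ) : ZMod n) = 0 := by
        rw [← Nat.cast_add, h2τ, ZMod.natCast_self]
      exact (neg_eq_of_add_eq_zero_left this)
    have hccd : ∀ d : ZMod n, cc d =
        1 - (if d = 0 then (1:ℂ) else 0) - (if d = ((τ : ℕ) : ZMod n) then 1 else 0) := by
      intro d
      by_cases h0 : d = 0
      · rw [h0, hccval]
        simp [h0t]
      · by_cases ht : d = ((τ : ℕ) : ZMod n)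
        · rw [ht, hccval]
          have hnc : ¬ (((τ:ℕ) : ZMod n) ≠ 0 ∧ min ((τ:ℕ):ZMod n).val (n - ((τ:ℕ):ZMod n).val) ≠ τ) := by
            rw [htZval]; intro ⟨_, h⟩; omega
          rw [if_neg hnc, if_neg htZ0, if_pos rfl]
          simp
        · have hvne : min d.val (n - d.val) ≠ τ := by
            intro hmin
            have hvlt : d.val < n := ZMod.val_lt d
            have hv0 : d.val ≠ 0 := fun h => h0 (by rwa [ZMod.val_eq_zero] at h)
            have : d.val = τ := by omega
            exact ht (by rw [← hdval d, this])
          rw [hccval, if_pos ⟨h0, hvne⟩, if_neg h0, if_neg ht]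
          simp
    have hDj : ∀ j : ZMod n, D j =
        (if j = 0 then (n:ℂ) else 0) - 1 - CDTS.e ω (((τ:ℕ):ZMod n) * j) := by
      intro j
      rw [hD]
      have : ∀ d : ZMod n, cc (-d) * CDTS.e ω (d * j) =
          CDTS.e ω (d * j) - (if d = 0 then (1:ℂ) else 0) * CDTS.e ω (d * j)
            - (if d = ((τ:ℕ):ZMod n) then (1:ℂ) else 0) * CDTS.e ω (d * j) := by
        intro d
        rw [hccd (-d)]
        simp only [neg_eq_zero, neg_eq_iff_eq_neg, htneg]
        ring
      simp only [this, Finset.sum_sub_distrib]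
      rw [CDTS.sum_e hω j]
      simp only [ite_mul, one_mul, zero_mul]
      rw [Finset.sum_ite_eq' Finset.univ (0 : ZMod n) (fun d => CDTS.e ω (d * j)),
        Finset.sum_ite_eq' Finset.univ (((τ:ℕ):ZMod n)) (fun d => CDTS.e ω (d * j))]
      simp only [Finset.mem_univ, if_pos, zero_mul, CDTS.e_zero]
    -- conclude: D 1 = 0
    haveI : Fact (1 < n) := ⟨by omega⟩
    apply hiff.mpr
    refine ⟨1, ?_⟩
    rw [hDj 1, if_neg (one_ne_zero : (1 : ZMod n) ≠ 0), mul_one]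
    have hx : CDTS.e ω ((τ:ℕ) : ZMod n) = ω ^ τ := by rw [CDTS.e, htZval]
    have hx2 : (ω ^ τ) * (ω ^ τ) = 1 := by
      rw [← pow_add, h2τ]; exact hω.pow_eq_one
    have hx1 : ω ^ τ ≠ 1 := hω.pow_ne_one_of_pos_of_lt (by omega) hτlt
    have : ω ^ τ = -1 := (mul_self_eq_one_iff.mp hx2).resolve_left hx1
    rw [hx, this]; ring
  · -- odd case
    intro hodd
    have hn2 : n % 2 = 1 := Nat.odd_iff.mp hodd
    have h2τ : 2 * τ + 1 = n := by omega
    have hnegval : (-((τ:ℕ) : ZMod n)).val = τ + 1 := by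
      rw [ZMod.neg_val, if_neg htZ0, htZval]; omega
    have hntZ0 : -((τ:ℕ) : ZMod n) ≠ 0 := by
      intro h; rw [h, ZMod.val_zero] at hnegval; omega
    have htne : ((τ:ℕ) : ZMod n) ≠ -((τ:ℕ) : ZMod n) := by
      intro h
      have := congrArg ZMod.val h
      rw [htZval, hnegval] at this
      omega
    have h0tn : (0 : ZMod n) ≠ -((τ:ℕ) : ZMod n) := fun h => hntZ0 h.symm
    have hccd : ∀ d : ZMod n, cc d =
        1 - (if d = 0 then (1:ℂ) else 0) - (if d = ((τ:ℕ):ZMod n) then 1 else 0)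
          - (if d = -((τ:ℕ):ZMod n) then 1 else 0) := by
      intro d
      by_cases h0 : d = 0
      · rw [h0, hccval]
        simp [h0t, h0tn]
      · by_cases ht : d = ((τ:ℕ) : ZMod n)
        · rw [ht, hccval]
          have : ¬ (((τ:ℕ):ZMod n) ≠ 0 ∧ min ((τ:ℕ):ZMod n).val (n - ((τ:ℕ):ZMod n).val) ≠ τ) := by
            rw [htZval]; intro ⟨_, h⟩; omega
          rw [if_neg this, if_neg htZ0, if_pos rfl, if_neg htne]
          simp
        · by_cases htn : d = -((τ:ℕ) : ZMod n)
          · rw [htn, hccval]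
            have : ¬ (-((τ:ℕ):ZMod n) ≠ 0 ∧
                min (-((τ:ℕ):ZMod n)).val (n - (-((τ:ℕ):ZMod n)).val) ≠ τ) := by
              rw [hnegval]; intro ⟨_, h⟩; omega
            rw [if_neg this, if_neg hntZ0, if_neg (Ne.symm htne), if_pos rfl]
            simp
          · have hvne : min d.val (n - d.val) ≠ τ := by
              intro hmin
              have hvlt : d.val < n := ZMod.val_lt d
              have hv0 : d.val ≠ 0 := fun h => h0 (by rwa [ZMod.val_eq_zero] at h)
              have hvv : d.val = τ ∨ d.val = τ + 1 := by omega
              rcases hvv with hvv | hvv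
              · exact ht (by rw [← hdval d, hvv])
              · exact htn (by rw [← hdval d, hvv, ← hnegval, hdval])
            rw [hccval, if_pos ⟨h0, hvne⟩, if_neg h0, if_neg ht, if_neg htn]
            simp
    have hDj : ∀ j : ZMod n, D j =
        (if j = 0 then (n:ℂ) else 0) - 1 - CDTS.e ω (((τ:ℕ):ZMod n) * j)
          - CDTS.e ω (-(((τ:ℕ):ZMod n) * j)) := by
      intro j
      rw [hD]
      have key : ∀ d : ZMod n, cc (-d) * CDTS.e ω (d * j) =
          CDTS.e ω (d * j) - (if d = 0 then (1:ℂ) else 0) * CDTS.e ω (d * j)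
            - (if d = -((τ:ℕ):ZMod n) then (1:ℂ) else 0) * CDTS.e ω (d * j)
            - (if d = ((τ:ℕ):ZMod n) then (1:ℂ) else 0) * CDTS.e ω (d * j) := by
        intro d
        rw [hccd (-d)]
        simp only [neg_eq_zero, neg_eq_iff_eq_neg, neg_neg]
        ring
      simp only [key, Finset.sum_sub_distrib]
      rw [CDTS.sum_e hω j]
      simp only [ite_mul, one_mul, zero_mul]
      rw [Finset.sum_ite_eq' Finset.univ (0 : ZMod n) (fun d => CDTS.e ω (d * j)),
        Finset.sum_ite_eq' Finset.univ (-((τ:ℕ):ZMod n)) (fun d => CDTS.e ω (d * j)),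
        Finset.sum_ite_eq' Finset.univ (((τ:ℕ):ZMod n)) (fun d => CDTS.e ω (d * j))]
      simp only [Finset.mem_univ, if_pos, zero_mul, CDTS.e_zero]
      rw [neg_mul]
      ring
    constructor
    · -- det = 0 → n % 6 = 3
      intro hdet0
      by_contra h63
      have h3 : ¬ (3 ∣ n) := by omega
      obtain ⟨j, hj⟩ := hiff.mp hdet0
      by_cases hj0 : j = 0
      · rw [hj0] at hj
        rw [hDj 0, if_pos rfl, mul_zero, neg_zero, CDTS.e_zero] at hj
        have : (n : ℂ) = 3 := by linear_combination hj
        have : n = 3 := by exact_mod_cast this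
        omega
      · set z := CDTS.e ω (((τ:ℕ):ZMod n) * j) with hz
        set w := CDTS.e ω (-(((τ:ℕ):ZMod n) * j)) with hw
        have hzw : z * w = 1 := CDTS.e_neg_mul hω _
        rw [hDj j, if_neg hj0] at hj
        have hz1 : z ^ 2 + z + 1 = 0 := by linear_combination (-z) * hj - hzw
        have hz3 : z ^ 3 = 1 := by linear_combination (z - 1) * hz1
        have hzn : z ^ n = 1 := by
          rw [hz, CDTS.e, ← pow_mul, mul_comm, pow_mul, hω.pow_eq_one, one_pow]
        have hgcd : Nat.gcd 3 n = 1 :=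
          (Nat.Prime.coprime_iff_not_dvd (by norm_num)).mpr h3
        have := pow_gcd_eq_one.mpr ⟨hz3, hzn⟩
        rw [hgcd, pow_one] at this
        rw [this] at hz1
        norm_num at hz1
    · -- n % 6 = 3 → det = 0
      intro h63
      have h3 : 3 ∣ n := by omega
      obtain ⟨k, hk⟩ := h3
      have hk0 : k ≠ 0 := by omega
      have hkn : k < n := by omega
      have hcop : Nat.Coprime τ n := by
        have h1 : n = 1 + 2 * τ := by omega
        rw [h1]
        exact (Nat.coprime_add_mul_right_right τ 1 2).mpr (Nat.coprime_one_right τ)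
      set u := ZMod.unitOfCoprime τ hcop with hu
      set j : ZMod n := ((u⁻¹ : (ZMod n)ˣ) : ZMod n) * ((k : ℕ) : ZMod n) with hj
      have htj : ((τ:ℕ) : ZMod n) * j = ((k:ℕ) : ZMod n) := by
        rw [hj, ← mul_assoc, show ((τ:ℕ) : ZMod n) = (u : ZMod n) from
          (ZMod.coe_unitOfCoprime τ hcop).symm, ← Units.val_mul, mul_inv_cancel u,
          Units.val_one, one_mul]
      have hkZ : ((k:ℕ) : ZMod n) ≠ 0 := by
        intro h
        have : ((k:ℕ) : ZMod n).val = k := ZMod.val_cast_of_lt hkn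
        rw [h, ZMod.val_zero] at this
        omega
      have hj0 : j ≠ 0 := by
        intro h
        rw [h, mul_zero] at htj
        exact hkZ htj.symm
      apply hiff.mpr
      refine ⟨j, ?_⟩
      set z := CDTS.e ω (((τ:ℕ):ZMod n) * j) with hz
      set w := CDTS.e ω (-(((τ:ℕ):ZMod n) * j)) with hw
      have hzw : z * w = 1 := CDTS.e_neg_mul hω _
      have hzval : z = ω ^ k := by
        rw [hz, htj, CDTS.e, ZMod.val_cast_of_lt hkn]
      have hz3 : z ^ 3 = 1 := by
        rw [hzval, ← pow_mul, show k * 3 = n from by omega]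
        exact hω.pow_eq_one
      have hzne1 : z ≠ 1 := by
        rw [hzval]
        exact hω.pow_ne_one_of_pos_of_lt (by omega) hkn
      have hz1 : z ^ 2 + z + 1 = 0 := by
        have hfac : (z - 1) * (z ^ 2 + z + 1) = 0 := by linear_combination hz3
        rcases mul_eq_zero.mp hfac with h | h
        · exact absurd (sub_eq_zero.mp h) hzne1
        · exact h
      have hDz : z * D j = 0 := by
        rw [hDj j, if_neg hj0]
        linear_combination -hz1 - hzw
      exact (mul_eq_zero.mp hDz).resolve_left (CDTS.e_ne_zero hω _)
end

section
/- Fix n ≥ 4 and 1 ≤ i < τ = ⌊n/2⌋. The complement graph (C_n^i)^c is singular if and only if 3 divides n and gcd(i, n) divides n/3. -/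
lemma cdg_mulVec (n i : ℕ) [NeZero n] (hn : 4 ≤ n) (hi : 1 ≤ i) (hin : i < n / 2)
    (v : ZMod n → ℚ) (r : ZMod n) :
    (Matrix.of fun r s : ZMod n =>
        if r ≠ s ∧ min (r - s).val (n - (r - s).val) ≠ i then (1 : ℚ)
        else 0).mulVec v r
      = (∑ s, v s) - (v r + v (r + i) + v (r - i)) := by
  classical
  have hin' : i < n := by omega
  have h2i : 2 * i < n := by omega
  have hi0 : (i : ZMod n) ≠ 0 := by
    intro h
    rw [ZMod.natCast_eq_zero_iff] at h
    have := Nat.le_of_dvd (by omega) h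
    omega
  have hii : (i : ZMod n) + i ≠ 0 := by
    intro h
    have h' : ((i + i : ℕ) : ZMod n) = 0 := by push_cast; exact h
    rw [ZMod.natCast_eq_zero_iff] at h'
    have := Nat.le_of_dvd (by omega) h'
    omega
  have hd1 : r ≠ r + i := by
    intro h; exact hi0 (left_eq_add.mp h)
  have hd2 : r ≠ r - i := by
    intro h; exact hi0 (sub_eq_self.mp h.symm)
  have hd3 : r + i ≠ r - i := by
    intro h; exact hii (by linear_combination h)
  have key : ∀ s : ZMod n,
      (if r ≠ s ∧ min (r - s).val (n - (r - s).val) ≠ i then (1 : ℚ) else 0) * v s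
        = v s - (if s ∈ ({r, r + i, r - i} : Finset (ZMod n)) then v s else 0) := by
    intro s
    have hiff : (r ≠ s ∧ min (r - s).val (n - (r - s).val) ≠ i)
        ↔ s ∉ ({r, r + i, r - i} : Finset (ZMod n)) := by
      simp only [Finset.mem_insert, Finset.mem_singleton, not_or]
      have hvlt : (r - s).val < n := ZMod.val_lt _
      constructor
      · rintro ⟨hrs, hmin⟩
        refine ⟨fun h => hrs h.symm, fun h => ?_, fun h => ?_⟩
        · apply hmin
          have : r - s = ((n - i : ℕ) : ZMod n) := by
            push_cast [Nat.cast_sub hin'.le, ZMod.natCast_self]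
            linear_combination -h
          rw [this, ZMod.val_cast_of_lt (by omega)]
          omega
        · apply hmin
          have : r - s = ((i : ℕ) : ZMod n) := by linear_combination -h
          rw [this, ZMod.val_cast_of_lt hin']
          omega
      · rintro ⟨h1, h2, h3⟩
        refine ⟨fun h => h1 h.symm, fun hmin => ?_⟩
        have hd : (r - s).val = i ∨ (r - s).val = n - i := by omega
        have hrs : r - s = ((r - s).val : ZMod n) := (ZMod.natCast_rightInverse _).symm
        rcases hd with hd | hd
        · exact h3 (by rw [hd] at hrs; linear_combination -hrs)
        · apply h2
          rw [hd] at hrs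
          have : ((n - i : ℕ) : ZMod n) = -(i : ZMod n) := by
            push_cast [Nat.cast_sub hin'.le, ZMod.natCast_self]; ring
          rw [this] at hrs
          linear_combination -hrs
    by_cases hs : s ∈ ({r, r + i, r - i} : Finset (ZMod n))
    · rw [if_neg (fun hc => (hiff.mp hc) hs), if_pos hs]; ring
    · rw [if_pos (hiff.mpr hs), if_neg hs]; ring
  simp only [Matrix.mulVec, dotProduct, Matrix.of_apply]
  rw [Finset.sum_congr rfl (fun s _ => key s), Finset.sum_sub_distrib,
    Finset.sum_ite_mem, Finset.univ_inter]
  congr 1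
  rw [Finset.sum_insert (by simp [hd1, hd2]), Finset.sum_insert (by simp [hd3]),
    Finset.sum_singleton]
  ring


lemma cdg_three_dvd_iff (n i : ℕ) (hn : 0 < n) (hi : 0 < i) :
    (3 ∣ n ∧ Nat.gcd i n ∣ n / 3) ↔ 3 ∣ n / Nat.gcd i n := by
  set g := Nat.gcd i n with hgdef
  have hg : 0 < g := Nat.gcd_pos_of_pos_left _ hi
  obtain ⟨m, hm⟩ := Nat.gcd_dvd_right i n
  rw [← hgdef] at hm
  have hmm : n / g = m := by rw [hm, Nat.mul_div_cancel_left _ hg]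
  rw [hmm]
  constructor
  · rintro ⟨h3, t, ht⟩
    have h1 : n = 3 * (g * t) := by rw [← ht]; omega
    have h2 : g * m = g * (3 * t) := by rw [← hm, h1]; ring
    exact ⟨t, Nat.eq_of_mul_eq_mul_left hg h2⟩
  · rintro ⟨t, rfl⟩
    have h1 : n = 3 * (g * t) := by rw [hm]; ring
    exact ⟨⟨g * t, h1⟩, ⟨t, by omega⟩⟩


def cdgPat : ZMod 3 → ℚ := fun x => if x = 0 then 1 else if x = 1 then 0 else -1

lemma cdgPat_sum (x : ZMod 3) : cdgPat x + cdgPat (x + 1) + cdgPat (x + 2) = 0 := by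
  have hx : x = 0 ∨ x = 1 ∨ x = 2 := by revert x; decide
  have e1 : (0 : ZMod 3) + 1 = 1 := by decide
  have e2 : (0 : ZMod 3) + 2 = 2 := by decide
  have e3 : (1 : ZMod 3) + 1 = 2 := by decide
  have e4 : (1 : ZMod 3) + 2 = 0 := by decide
  have e5 : (2 : ZMod 3) + 1 = 0 := by decide
  have e6 : (2 : ZMod 3) + 2 = 1 := by decide
  have n1 : (1 : ZMod 3) ≠ 0 := by decide
  have n2 : (2 : ZMod 3) ≠ 0 := by decide
  have n3 : (2 : ZMod 3) ≠ 1 := by decide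
  have n4 : (0 : ZMod 3) ≠ 1 := by decide
  rcases hx with rfl | rfl | rfl <;>
    simp only [e1, e2, e3, e4, e5, e6] <;>
    norm_num [cdgPat, n1, n2, n3, n4]

noncomputable def cdgVec (n i : ℕ) : ZMod n → ℚ :=
  open scoped Classical in fun r =>
  if h : ∃ k : ℕ, (k : ZMod n) * i = r then cdgPat ((h.choose : ℕ) : ZMod 3) else 0

lemma cdgVec_spec (n i : ℕ) (r : ZMod n) (k : ℕ) (hk : (k : ZMod n) * i = r)
    (hwd : ∀ k k' : ℕ, (k : ZMod n) * i = (k' : ZMod n) * i →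
      ((k : ℕ) : ZMod 3) = ((k' : ℕ) : ZMod 3)) :
    cdgVec n i r = cdgPat ((k : ℕ) : ZMod 3) := by
  have hex : ∃ k : ℕ, (k : ZMod n) * i = r := ⟨k, hk⟩
  rw [cdgVec, dif_pos hex]
  exact congrArg cdgPat (hwd _ _ (hex.choose_spec.trans hk.symm))

lemma cdgVec_zero (n i : ℕ) (r : ZMod n) (h : ¬ ∃ k : ℕ, (k : ZMod n) * i = r) :
    cdgVec n i r = 0 := by
  rw [cdgVec, dif_neg h]

lemma cdg_backward (n i : ℕ) [NeZero n] (hn : 4 ≤ n) (hi : 1 ≤ i) (hin : i < n / 2)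
    (h3 : 3 ∣ n / Nat.gcd i n) :
    (Matrix.of fun r s : ZMod n =>
        if r ≠ s ∧ min (r - s).val (n - (r - s).val) ≠ i then (1 : ℚ)
        else 0).det = 0 := by
  classical
  set g := Nat.gcd i n with hgdef
  have hg : 0 < g := Nat.gcd_pos_of_pos_left _ (by omega)
  obtain ⟨m, hm⟩ := Nat.gcd_dvd_right i n
  obtain ⟨i', hi'⟩ := Nat.gcd_dvd_left i n
  rw [← hgdef] at hm hi'
  have hmm : n / g = m := by rw [hm, Nat.mul_div_cancel_left _ hg]
  rw [hmm] at h3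
  have hm1 : 1 ≤ m := by
    rcases Nat.eq_zero_or_pos m with rfl | h
    · simp at hm; omega
    · exact h
  -- well-definedness
  have hwd : ∀ k k' : ℕ, (k : ZMod n) * i = (k' : ZMod n) * i →
      ((k : ℕ) : ZMod 3) = ((k' : ℕ) : ZMod 3) := by
    intro k k' h
    have hc : ((k * i : ℕ) : ZMod n) = ((k' * i : ℕ) : ZMod n) := by
      push_cast; linear_combination h
    have hmodn : k * i ≡ k' * i [MOD n] := (ZMod.natCast_eq_natCast_iff _ _ _).mp hc
    have hcan := Nat.ModEq.cancel_right_div_gcd (show 0 < n by omega) hmodn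
    rw [Nat.gcd_comm, ← hgdef, hmm] at hcan
    exact (ZMod.natCast_eq_natCast_iff _ _ _).mpr (Nat.ModEq.of_dvd h3 hcan)
  set v : ZMod n → ℚ := cdgVec n i with hv
  have hm0 : ((m : ℕ) : ZMod n) * (i : ZMod n) = 0 := by
    have e : (m * i : ℕ) = n * i' := by rw [hm, hi']; ring
    have : ((m * i : ℕ) : ZMod n) = ((n * i' : ℕ) : ZMod n) := by rw [e]
    push_cast [ZMod.natCast_self] at this
    linear_combination this
  have hshift : ∀ r : ZMod n, (∃ k : ℕ, (k : ZMod n) * i = r) ↔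
      (∃ k : ℕ, (k : ZMod n) * i = r + i) := by
    intro r
    constructor
    · rintro ⟨k, hk⟩
      exact ⟨k + 1, by push_cast; linear_combination hk⟩
    · rintro ⟨k, hk⟩
      refine ⟨k + (m - 1), ?_⟩
      push_cast [Nat.cast_sub hm1]
      linear_combination hk + hm0
  have h3m3 : ((m : ℕ) : ZMod 3) = 0 := (ZMod.natCast_eq_zero_iff m 3).mpr h3
  have hrel : ∀ r : ZMod n, v (r - i) + v r + v (r + i) = 0 := by
    intro r
    by_cases hex : ∃ k : ℕ, (k : ZMod n) * i = r
    · obtain ⟨k, hk⟩ := hex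
      have hv1 : v r = cdgPat ((k : ℕ) : ZMod 3) := cdgVec_spec n i r k hk hwd
      have hv2 : v (r + i) = cdgPat ((k + 1 : ℕ) : ZMod 3) :=
        cdgVec_spec n i _ (k + 1) (by push_cast; linear_combination hk) hwd
      have hv3 : v (r - i) = cdgPat ((k + (m - 1) : ℕ) : ZMod 3) :=
        cdgVec_spec n i _ (k + (m - 1))
          (by push_cast [Nat.cast_sub hm1]; linear_combination hk + hm0) hwd
      have e2 : ((k + 1 : ℕ) : ZMod 3) = ((k : ℕ) : ZMod 3) + 1 := by push_cast; ring
      have e3 : ((k + (m - 1) : ℕ) : ZMod 3) = ((k : ℕ) : ZMod 3) - 1 := by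
        push_cast [Nat.cast_sub hm1]
        rw [h3m3]; ring
      rw [hv1, hv2, hv3, e2, e3]
      have hs := cdgPat_sum (((k : ℕ) : ZMod 3) - 1)
      have e4 : ((k : ℕ) : ZMod 3) - 1 + 1 = ((k : ℕ) : ZMod 3) := by ring
      have e5 : ((k : ℕ) : ZMod 3) - 1 + 2 = ((k : ℕ) : ZMod 3) + 1 := by ring
      rw [e4, e5] at hs
      linarith
    · have h2 : ¬ ∃ k : ℕ, (k : ZMod n) * i = r + i := fun h => hex ((hshift r).mpr h)
      have h3' : ¬ ∃ k : ℕ, (k : ZMod n) * i = r - i := by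
        intro h
        apply hex
        have := (hshift (r - i)).mp h
        rwa [sub_add_cancel] at this
      rw [hv, cdgVec_zero n i r hex, cdgVec_zero n i _ h2, cdgVec_zero n i _ h3']
      ring
  have hsum : ∑ r : ZMod n, v r = 0 := by
    have h3S : (3 : ℚ) * (∑ r : ZMod n, v r)
        = ∑ r : ZMod n, (v (r - i) + v r + v (r + i)) := by
      rw [Finset.sum_add_distrib, Finset.sum_add_distrib]
      have e1 : ∑ r : ZMod n, v (r - i) = ∑ r : ZMod n, v r :=
        Fintype.sum_equiv (Equiv.subRight (i : ZMod n)) _ _ (fun r => rfl)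
      have e2 : ∑ r : ZMod n, v (r + i) = ∑ r : ZMod n, v r :=
        Fintype.sum_equiv (Equiv.addRight (i : ZMod n)) _ _ (fun r => rfl)
      rw [e1, e2]; ring
    rw [Finset.sum_congr rfl (fun r _ => hrel r), Finset.sum_const_zero] at h3S
    linarith
  have hvne : v ≠ 0 := by
    intro h
    have h0 : v 0 = cdgPat ((0 : ℕ) : ZMod 3) := cdgVec_spec n i 0 0 (by simp) hwd
    rw [h, Pi.zero_apply] at h0
    norm_num [cdgPat] at h0
  have hMv : (Matrix.of fun r s : ZMod n =>
      if r ≠ s ∧ min (r - s).val (n - (r - s).val) ≠ i then (1 : ℚ)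
      else 0).mulVec v = 0 := by
    funext r
    rw [cdg_mulVec n i hn hi hin v r, hsum, Pi.zero_apply]
    have := hrel r
    linarith
  exact Matrix.exists_mulVec_eq_zero_iff.mp ⟨v, hvne, hMv⟩


lemma cdg_forward (n i : ℕ) [NeZero n] (hn : 4 ≤ n) (hi : 1 ≤ i) (hin : i < n / 2)
    (hdet : (Matrix.of fun r s : ZMod n =>
        if r ≠ s ∧ min (r - s).val (n - (r - s).val) ≠ i then (1 : ℚ)
        else 0).det = 0) :
    3 ∣ n / Nat.gcd i n := by
  classical
  obtain ⟨v, hv0, hMv⟩ := Matrix.exists_mulVec_eq_zero_iff.mpr hdet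
  set S := ∑ s : ZMod n, v s with hSdef
  have hrel : ∀ r : ZMod n, v r + v (r + i) + v (r - i) = S := by
    intro r
    have h := cdg_mulVec n i hn hi hin v r
    rw [congrFun hMv r] at h
    simp only [Pi.zero_apply] at h
    linarith [h]
  by_contra h3m
  set g := Nat.gcd i n with hgdef
  have hg : 0 < g := Nat.gcd_pos_of_pos_left _ (by omega)
  obtain ⟨m, hm⟩ := Nat.gcd_dvd_right i n
  obtain ⟨i', hi'⟩ := Nat.gcd_dvd_left i n
  rw [← hgdef] at hm hi'
  have hmm : n / g = m := by rw [hm, Nat.mul_div_cancel_left _ hg]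
  rw [hmm] at h3m
  have hgi : g ≤ i := Nat.le_of_dvd (by omega) ⟨i', hi'⟩
  have hm3 : 1 < m := by
    by_contra hle
    push_neg at hle
    have : g * m ≤ g * 1 := Nat.mul_le_mul_left g hle
    omega
  have hcop : Nat.Coprime 3 m := (Nat.Prime.coprime_iff_not_dvd Nat.prime_three).mpr h3m
  obtain ⟨k, -, hk⟩ := Nat.exists_mul_mod_eq_one_of_coprime hcop hm3
  have hmod : 3 * k ≡ 1 [MOD m] := by
    show 3 * k % m = 1 % m
    rw [hk, Nat.mod_eq_of_lt hm3]
  have hmodn : i * (3 * k) ≡ i * 1 [MOD n] := by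
    have h1 := Nat.ModEq.mul_left' (c := g) (hmod.mul_left i')
    rw [hi', hm]
    simpa [mul_assoc] using h1
  have hcast : ((3 * k : ℕ) : ZMod n) * (i : ZMod n) = (i : ZMod n) := by
    have h2 := (ZMod.natCast_eq_natCast_iff _ _ _).mpr hmodn
    push_cast at h2 ⊢
    linear_combination h2
  set u : ZMod n → ℚ := fun r => v r - S / 3 with hu
  have hrelu : ∀ r : ZMod n, u r + u (r + i) + u (r - i) = 0 := by
    intro r
    simp only [hu]
    have := hrel r
    linarith
  have hper : ∀ r : ZMod n, u (r + 3 * i) = u r := by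
    intro r
    have h1 := hrelu (r + i)
    have h2 := hrelu (r + i + i)
    have e1 : r + (i : ZMod n) + i + i = r + 3 * i := by ring
    have e2 : r + (i : ZMod n) + i - i = r + i := by ring
    have e3 : r + (i : ZMod n) - i = r := by ring
    rw [e1, e2] at h2
    rw [e3] at h1
    linarith
  have hperk : ∀ (kk : ℕ) (r : ZMod n), u (r + (kk : ZMod n) * (3 * i)) = u r := by
    intro kk
    induction kk with
    | zero => intro r; norm_num
    | succ kk ih =>
      intro r
      have e : r + ((kk + 1 : ℕ) : ZMod n) * (3 * i) = (r + 3 * i) + (kk : ZMod n) * (3 * i) := by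
        push_cast; ring
      rw [e, ih, hper]
  have hstep : ∀ r : ZMod n, u (r + i) = u r := by
    intro r
    have e : r + (i : ZMod n) = r + (k : ZMod n) * (3 * i) := by
      push_cast at hcast
      linear_combination -hcast
    rw [e, hperk]
  have hu0 : ∀ r, u r = 0 := by
    intro r
    have h := hrelu r
    have h2 : u r = u (r - i) := by
      have := hstep (r - i)
      rwa [sub_add_cancel] at this
    rw [hstep r, ← h2] at h
    linarith
  have hv : ∀ r, v r = S / 3 := by
    intro r
    have := hu0 r
    simp only [hu] at this
    linarith
  have hS : S = (n : ℚ) * (S / 3) := by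
    calc S = ∑ s : ZMod n, v s := hSdef
    _ = ∑ _s : ZMod n, S / 3 := Finset.sum_congr rfl fun s _ => hv s
    _ = (Fintype.card (ZMod n) : ℚ) * (S / 3) := by
        rw [Finset.sum_const, nsmul_eq_mul, Finset.card_univ]
    _ = (n : ℚ) * (S / 3) := by rw [ZMod.card]
  have hn4 : (4 : ℚ) ≤ (n : ℚ) := by exact_mod_cast hn
  have hS0 : S = 0 := by
    have hz : S * ((n : ℚ) - 3) = 0 := by linear_combination -3 * hS
    rcases mul_eq_zero.mp hz with h | h
    · exact h
    · linarith
  exact hv0 (funext fun r => by rw [hv r, hS0]; simp)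


/-- For `1 ≤ i < ⌊n/2⌋`, the complement `(C_n^i)^c` of the distance-`i` graph
of the `n`-cycle is singular iff `3 ∣ n` and `gcd(i,n) ∣ n/3`. -/
theorem complement_distance_graph_singular_iff (n i : ℕ) [NeZero n]
    (hn : 4 ≤ n) (hi : 1 ≤ i) (hin : i < n / 2) :
    (Matrix.of fun r s : ZMod n =>
        if r ≠ s ∧ min (r - s).val (n - (r - s).val) ≠ i then (1 : ℚ)
        else 0).det = 0 ↔
      (3 ∣ n ∧ Nat.gcd i n ∣ n / 3) := by
  rw [cdg_three_dvd_iff n i (by omega) (by omega)]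
  exact ⟨cdg_forward n i hn hi hin, cdg_backward n i hn hi hin⟩
end

section
/- The complement C_n^c of the cycle graph C_n (n ≥ 4) is singular if and only if 3 divides n. -/
private lemma cyc_key (n : ℕ) [NeZero n] (hn : 4 ≤ n) (v : ZMod n → ℚ) (r : ZMod n) :
    ((Matrix.of fun r s : ZMod n =>
        if r ≠ s ∧ min (r - s).val (n - (r - s).val) ≠ 1 then (1 : ℚ)
        else 0).mulVec v) r = (∑ s, v s) - v r - v (r - 1) - v (r + 1) := by
  haveI : Fact (1 < n) := ⟨by omega⟩
  have hone : (1 : ZMod n).val = 1 := ZMod.val_one n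
  have hneg : ((n - 1 : ℕ) : ZMod n) = -1 := by
    push_cast [Nat.cast_sub (by omega : 1 ≤ n)]
    simp [ZMod.natCast_self n]
  have hnegone : (-1 : ZMod n).val = n - 1 := by
    rw [← hneg, ZMod.val_cast_of_lt (by omega)]
  have hcond : ∀ s : ZMod n,
      (¬(r ≠ s ∧ min (r - s).val (n - (r - s).val) ≠ 1)) ↔
        (s = r ∨ s = r - 1 ∨ s = r + 1) := by
    intro s
    constructor
    · intro h
      push_neg at h
      by_cases hrs : r = s
      · exact Or.inl hrs.symm
      · have hmin := h hrs
        have hlt := ZMod.val_lt (r - s)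
        rcases (min_eq_iff.mp hmin) with ⟨h1, _⟩ | ⟨h1, _⟩
        · right; left
          have h2 : r - s = (1 : ZMod n) := by
            have := ZMod.natCast_rightInverse (n := n) (r - s)
            rw [h1] at this
            simpa using this.symm
          linear_combination -h2
        · right; right
          have h1' : (r - s).val = n - 1 := by omega
          have h2 : r - s = (-1 : ZMod n) := by
            have := ZMod.natCast_rightInverse (n := n) (r - s)
            rw [h1'] at this
            rw [hneg] at this
            exact this.symm
          linear_combination -h2
    · rintro (rfl | rfl | rfl)
      · simp
      · push_neg
        intro _
        have h2 : r - (r - 1) = (1 : ZMod n) := by ring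
        rw [h2, hone]
        exact min_eq_left (by omega)
      · push_neg
        intro _
        have h2 : r - (r + 1) = (-1 : ZMod n) := by ring
        rw [h2, hnegone]
        have h3 : n - (n - 1) = 1 := by omega
        rw [h3]
        exact min_eq_right (by omega)
  have hd1 : r ≠ r - 1 := by
    intro h
    have h2 : (1 : ZMod n) = 0 := by linear_combination h
    have := Nat.le_of_dvd one_pos ((ZMod.natCast_eq_zero_iff 1 n).mp (by exact_mod_cast h2))
    omega
  have hd2 : r ≠ r + 1 := by
    intro h
    have h2 : (1 : ZMod n) = 0 := by linear_combination -h
    have := Nat.le_of_dvd one_pos ((ZMod.natCast_eq_zero_iff 1 n).mp (by exact_mod_cast h2))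
    omega
  have hd3 : r - 1 ≠ r + 1 := by
    intro h
    have h2 : ((2 : ℕ) : ZMod n) = 0 := by push_cast; linear_combination -h
    have := Nat.le_of_dvd (by norm_num) ((ZMod.natCast_eq_zero_iff 2 n).mp h2)
    omega
  have step1 : ((Matrix.of fun r s : ZMod n =>
        if r ≠ s ∧ min (r - s).val (n - (r - s).val) ≠ 1 then (1 : ℚ)
        else 0).mulVec v) r
      = ∑ s : ZMod n, (if r ≠ s ∧ min (r - s).val (n - (r - s).val) ≠ 1 then v s else 0) := by
    simp [Matrix.mulVec, dotProduct, ite_mul]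
  rw [step1]
  have split : ∀ s : ZMod n,
      (if r ≠ s ∧ min (r - s).val (n - (r - s).val) ≠ 1 then v s else 0)
      = v s - ((if s = r then v s else 0) + (if s = r - 1 then v s else 0)
          + (if s = r + 1 then v s else 0)) := by
    intro s
    by_cases hc : r ≠ s ∧ min (r - s).val (n - (r - s).val) ≠ 1
    · rw [if_pos hc]
      have hs : ¬(s = r ∨ s = r - 1 ∨ s = r + 1) := fun h => ((hcond s).mpr h) hc
      push_neg at hs
      rw [if_neg hs.1, if_neg hs.2.1, if_neg hs.2.2]
      ring
    · rw [if_neg hc]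
      rcases (hcond s).mp hc with rfl | rfl | rfl
      · rw [if_pos rfl, if_neg hd1, if_neg hd2]
        ring
      · rw [if_neg (fun h => hd1 h.symm), if_pos rfl, if_neg hd3]
        ring
      · rw [if_neg (fun h => hd2 h.symm), if_neg (fun h => hd3 h.symm), if_pos rfl]
        ring
  rw [Finset.sum_congr rfl (fun s _ => split s), Finset.sum_sub_distrib]
  simp [Finset.sum_add_distrib, Finset.sum_ite_eq']
  ring

/-- The complement `C_n^c` of the cycle graph (`n ≥ 4`) is singular iff `3 ∣ n`. -/
theorem complement_cycle_singular_iff (n : ℕ) [NeZero n] (hn : 4 ≤ n) :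
    (Matrix.of fun r s : ZMod n =>
        if r ≠ s ∧ min (r - s).val (n - (r - s).val) ≠ 1 then (1 : ℚ)
        else 0).det = 0 ↔ 3 ∣ n := by
  haveI : Fact (1 < n) := ⟨by omega⟩
  set M : Matrix (ZMod n) (ZMod n) ℚ := Matrix.of fun r s : ZMod n =>
      if r ≠ s ∧ min (r - s).val (n - (r - s).val) ≠ 1 then (1 : ℚ) else 0 with hM
  constructor
  · -- det = 0 → 3 ∣ n
    intro hdet
    by_contra h3
    obtain ⟨v, hv, hmul⟩ := (Matrix.exists_mulVec_eq_zero_iff (A := ℚ)).mpr hdet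
    have heq : ∀ r : ZMod n, (∑ s, v s) - v r - v (r - 1) - v (r + 1) = 0 := by
      intro r
      rw [← cyc_key n hn v r]
      exact congrFun hmul r
    have period : ∀ r : ZMod n, v (r + 3) = v r := by
      intro r
      have h1 := heq (r + 2)
      have h2 := heq (r + 1)
      have e1 : r + 2 - 1 = r + 1 := by ring
      have e2 : r + 2 + 1 = r + 3 := by ring
      have e3 : r + 1 - 1 = r := by ring
      have e4 : r + 1 + 1 = r + 2 := by ring
      rw [e1, e2] at h1
      rw [e3, e4] at h2
      linarith
    have hnat : ∀ m : ℕ, v ((3 * m : ℕ) : ZMod n) = v 0 := by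
      intro m
      induction m with
      | zero => simp
      | succ m ih =>
        have e : ((3 * (m + 1) : ℕ) : ZMod n) = ((3 * m : ℕ) : ZMod n) + 3 := by
          push_cast; ring
        rw [e, period, ih]
    have hconst : ∀ r : ZMod n, v r = v 0 := by
      intro r
      have hu : IsUnit (3 : ZMod n) := by
        rw [show ((3 : ZMod n)) = ((3 : ℕ) : ZMod n) by push_cast; ring,
          ZMod.isUnit_iff_coprime]
        exact (Nat.Prime.coprime_iff_not_dvd Nat.prime_three).mpr h3
      obtain ⟨u, hu⟩ := hu
      have ha : (3 : ZMod n) * (↑u⁻¹ * r) = r := by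
        rw [← hu, ← mul_assoc, Units.mul_inv, one_mul]
      set a : ZMod n := ↑u⁻¹ * r with haa
      have hav : a = ((a.val : ℕ) : ZMod n) := (ZMod.natCast_rightInverse a).symm
      have key : ((3 * a.val : ℕ) : ZMod n) = r := by
        push_cast
        rw [← hav]
        exact ha
      rw [← key, hnat]
    have hS : (∑ s, v s) = (n : ℚ) * v 0 := by
      rw [Finset.sum_congr rfl (fun s _ => hconst s)]
      simp [Finset.card_univ, mul_comm]
    have h0 := heq 0
    have ez : (0 : ZMod n) - 1 = -1 := by ring
    have eo : (0 : ZMod n) + 1 = 1 := by ring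
    rw [ez, eo, hS, hconst (-1), hconst 1] at h0
    have hv0 : v 0 = 0 := by
      have hn3 : (3 : ℚ) < (n : ℚ) := by exact_mod_cast (by omega : 3 < n)
      have : ((n : ℚ) - 3) * v 0 = 0 := by linarith
      rcases mul_eq_zero.mp this with h | h
      · linarith
      · exact h
    exact hv (funext fun r => by rw [hconst r, hv0]; rfl)
  · -- 3 ∣ n → det = 0
    intro h3
    obtain ⟨m, hm⟩ := h3
    set g : ℕ → ℚ := fun k => if k % 3 = 0 then 1 else if k % 3 = 1 then -1 else 0 with hg
    set v : ZMod n → ℚ := fun r => g r.val with hvdef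
    apply (Matrix.exists_mulVec_eq_zero_iff (A := ℚ)).mp
    refine ⟨v, ?_, ?_⟩
    · intro h
      have h0 : v 0 = 0 := congrFun h 0
      rw [hvdef] at h0
      simp [hg, ZMod.val_zero] at h0
    · funext r
      rw [cyc_key n hn v r]
      have hsum : (∑ s, v s) = 0 := by
        have e1 : (∑ s, v s) = ∑ k ∈ Finset.range n, g k := by
          apply Finset.sum_nbij' (i := fun r : ZMod n => r.val) (j := fun k : ℕ => (k : ZMod n))
          · intro a _; exact Finset.mem_range.mpr (ZMod.val_lt a)
          · intro a _; exact Finset.mem_univ _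
          · intro a _; exact ZMod.natCast_rightInverse a
          · intro a ha; simp [hvdef, ZMod.val_cast_of_lt (Finset.mem_range.mp ha)]
          · intro a _; rfl
        rw [e1, hm]
        clear hm
        induction m with
        | zero => simp
        | succ m ih =>
          have e : 3 * (m + 1) = 3 * m + 1 + 1 + 1 := by ring
          rw [e, Finset.sum_range_succ, Finset.sum_range_succ, Finset.sum_range_succ, ih]
          simp [hg, Nat.mul_add_mod]
      rw [hsum]
      have step : ∀ x : ZMod n, (x + 1).val % 3 = (x.val + 1) % 3 := by
        intro x
        rw [ZMod.val_add, ZMod.val_one, Nat.mod_mod_of_dvd _ ⟨m, hm⟩]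
      have e1 : r = (r - 1) + 1 := by ring
      have e2 : r + 1 = ((r - 1) + 1) + 1 := by ring
      have s1 : r.val % 3 = ((r - 1).val + 1) % 3 := by
        conv_lhs => rw [e1]
        exact step (r - 1)
      have s2 : (r + 1).val % 3 = ((r - 1).val + 2) % 3 := by
        rw [e2, step ((r - 1) + 1)]
        have h := step (r - 1)
        omega
      simp only [hvdef, hg]
      rw [s1, s2]
      have hk : (r - 1).val % 3 = 0 ∨ (r - 1).val % 3 = 1 ∨ (r - 1).val % 3 = 2 := by omega
      rcases hk with h | h | h <;> simp [Nat.add_mod, h] <;> ring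
end

section
/- Let n ≥ 3 and 1 ≤ r < ⌊n/2⌋. The r-th power C_n^{(r)} of the cycle graph (vertices at cycle-distance at most r are adjacent) is singular if and only if either gcd(n, r) > 1, or gcd(n, r) = 1, n is even, and gcd(r+1, n) divides n/2. -/
set_option linter.unusedSectionVars false

open Finset Matrix

section aux
variable {n : ℕ} [NeZero n] {ω : ℂ}

lemma aux_pow_mod (hω : ω ^ n = 1) (m : ℕ) : ω ^ (m % n) = ω ^ m := by
  conv_rhs => rw [← Nat.div_add_mod m n]
  rw [pow_add, pow_mul, hω, one_pow, one_mul]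

lemma aux_E_add (hω : ω ^ n = 1) (a b : ZMod n) :
    ω ^ (a + b).val = ω ^ a.val * ω ^ b.val := by
  rw [ZMod.val_add, aux_pow_mod hω, pow_add]

lemma aux_E_pow (hω : ω ^ n = 1) (a : ZMod n) (m : ℕ) :
    (ω ^ a.val) ^ m = ω ^ (a * (m : ZMod n)).val := by
  have h : a * (m : ZMod n) = ((a.val * m : ℕ) : ZMod n) := by
    rw [Nat.cast_mul, ZMod.natCast_zmod_val]
  rw [h, ZMod.val_natCast, aux_pow_mod hω, pow_mul]

/-- The Fin n ≃ ZMod n equivalence. -/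
def finZModEquiv (n : ℕ) [NeZero n] : Fin n ≃ ZMod n where
  toFun i := ((i : ℕ) : ZMod n)
  invFun a := ⟨a.val, a.val_lt⟩
  left_inv i := by ext; simp [ZMod.val_natCast_of_lt i.isLt]
  right_inv a := by simp [ZMod.natCast_zmod_val]

lemma aux_circulant_det (c : ZMod n → ℂ) (hω : IsPrimitiveRoot ω n) :
    (Matrix.circulant c).det
      = ∏ j : ZMod n, ∑ d : ZMod n, c d * ω ^ (-(d * j)).val := by
  have hω1 : ω ^ n = 1 := hω.pow_eq_one
  set lam : ZMod n → ℂ := fun j => ∑ d : ZMod n, c d * ω ^ (-(d * j)).val with hlam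
  set V : Matrix (ZMod n) (ZMod n) ℂ := Matrix.of (fun u j : ZMod n => ω ^ (u * j).val)
    with hV
  have hAV : Matrix.circulant c * V = V * Matrix.diagonal lam := by
    ext u j
    rw [Matrix.mul_diagonal, Matrix.mul_apply]
    have h1 : ∀ v : ZMod n, (Matrix.circulant c) u v * V v j = c (u - v) * ω ^ (v * j).val :=
      fun v => rfl
    simp only [h1]
    rw [← Equiv.sum_comp (Equiv.subLeft u) (fun v => c (u - v) * ω ^ (v * j).val)]
    have h2 : ∀ d : ZMod n, c (u - (u - d)) * ω ^ ((u - d) * j).val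
        = (ω ^ (u * j).val) * (c d * ω ^ (-(d * j)).val) := by
      intro d
      have h3 : (u - d) * j = u * j + -(d * j) := by ring
      rw [sub_sub_cancel, h3, aux_E_add hω1]
      ring
    simp only [Equiv.subLeft_apply, h2]
    rw [← Finset.mul_sum]
    rfl
  have hdetV : V.det ≠ 0 := by
    have h1 : V.det = (Matrix.vandermonde (fun i : Fin n => ω ^ (i : ℕ))).det := by
      rw [← Matrix.det_submatrix_equiv_self (finZModEquiv n) V]
      congr 1
      ext i j
      show ω ^ ((((i : ℕ) : ZMod n)) * (((j : ℕ) : ZMod n))).val = (ω ^ (i : ℕ)) ^ (j : ℕ)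
      rw [← Nat.cast_mul, ZMod.val_natCast, aux_pow_mod hω1, pow_mul]
    rw [h1]
    rw [Matrix.det_vandermonde_ne_zero_iff]
    intro i j hij
    exact Fin.ext (hω.pow_inj i.isLt j.isLt hij)
  have hdet := congrArg Matrix.det hAV
  rw [Matrix.det_mul, Matrix.det_mul, Matrix.det_diagonal, mul_comm V.det] at hdet
  exact mul_right_cancel₀ hdetV hdet

end aux

/-- The `r`-th power `C_n^{(r)}` of the cycle graph (`1 ≤ r < ⌊n/2⌋`) is
singular iff `gcd(n,r) > 1`, or `gcd(n,r) = 1`, `n` even and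
`gcd(r+1,n) ∣ n/2`. -/
theorem power_of_cycle_singular_iff (n r : ℕ) [NeZero n]
    (hn : 3 ≤ n) (hr : 1 ≤ r) (hrn : r < n / 2) :
    (Matrix.of fun u v : ZMod n =>
        if 1 ≤ min (u - v).val (n - (u - v).val) ∧
            min (u - v).val (n - (u - v).val) ≤ r then (1 : ℚ) else 0).det = 0 ↔
      (1 < Nat.gcd n r ∨
        (Nat.gcd n r = 1 ∧ Even n ∧ Nat.gcd (r + 1) n ∣ n / 2)) := by
  classical
  have hn0 : n ≠ 0 := NeZero.ne n
  have h2r : 2 * r < n := by omega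
  set ω : ℂ := Complex.exp (2 * Real.pi * Complex.I / n) with hωdef
  have hω : IsPrimitiveRoot ω n := Complex.isPrimitiveRoot_exp n hn0
  have hω1 : ω ^ n = 1 := hω.pow_eq_one
  -- the complex circulant symbol
  set cC : ZMod n → ℂ := fun d =>
    if 1 ≤ min d.val (n - d.val) ∧ min d.val (n - d.val) ≤ r then 1 else 0 with hcC
  -- reduce to complex determinant
  have hmap : (Matrix.of fun u v : ZMod n =>
      if 1 ≤ min (u - v).val (n - (u - v).val) ∧
          min (u - v).val (n - (u - v).val) ≤ r then (1 : ℚ) else 0).map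
        (Rat.cast : ℚ → ℂ) = Matrix.circulant cC := by
    ext i j
    simp only [Matrix.map_apply, Matrix.of_apply, Matrix.circulant_apply, hcC]
    split_ifs with h <;> simp
  have hcast : (((Matrix.of fun u v : ZMod n =>
      if 1 ≤ min (u - v).val (n - (u - v).val) ∧
          min (u - v).val (n - (u - v).val) ≤ r then (1 : ℚ) else 0).det : ℚ) : ℂ)
      = (Matrix.circulant cC).det := by
    rw [← hmap]
    exact RingHom.map_det (Rat.castHom ℂ) _
  rw [show ((Matrix.of fun u v : ZMod n =>
      if 1 ≤ min (u - v).val (n - (u - v).val) ∧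
          min (u - v).val (n - (u - v).val) ≤ r then (1 : ℚ) else 0).det = 0)
    ↔ (((Matrix.of fun u v : ZMod n =>
      if 1 ≤ min (u - v).val (n - (u - v).val) ∧
          min (u - v).val (n - (u - v).val) ≤ r then (1 : ℚ) else 0).det : ℚ) : ℂ) = 0
    from (Rat.cast_eq_zero (α := ℂ)).symm, hcast]
  rw [aux_circulant_det cC hω, Finset.prod_eq_zero_iff]
  simp only [Finset.mem_univ, true_and]
  -- helper facts about E a := ω ^ a.val
  have hE1 : ∀ a : ZMod n, ω ^ a.val = 1 ↔ a = 0 := by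
    intro a
    constructor
    · intro h
      have hd := (hω.pow_eq_one_iff_dvd a.val).mp h
      exact (ZMod.val_eq_zero a).mp (Nat.eq_zero_of_dvd_of_lt hd (ZMod.val_lt a))
    · rintro rfl; simp
  have hEinj : ∀ a b : ZMod n, ω ^ a.val = ω ^ b.val ↔ a = b := by
    intro a b
    constructor
    · intro h
      have := hω.pow_inj (ZMod.val_lt a) (ZMod.val_lt b) h
      rw [← ZMod.natCast_zmod_val a, this, ZMod.natCast_zmod_val]
    · rintro rfl; rfl
  -- the symbol as a function of ζ
  set T : ℂ → ℂ := fun ζ => ∑ d : ZMod n, cC d * ζ ^ d.val with hTdef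
  -- rewrite the eigenvalue as T (ω ^ (-j).val)
  have hsummand : ∀ j : ZMod n, (∑ d : ZMod n, cC d * ω ^ (-(d * j)).val)
      = T (ω ^ (-j).val) := by
    intro j
    refine Finset.sum_congr rfl fun d _ => ?_
    congr 1
    rw [aux_E_pow hω1, ZMod.natCast_zmod_val]
    congr 1
    ring
  have hexist : (∃ j : ZMod n, (∑ d : ZMod n, cC d * ω ^ (-(d * j)).val) = 0)
      ↔ ∃ j : ZMod n, T (ω ^ j.val) = 0 := by
    constructor
    · rintro ⟨j, hj⟩
      exact ⟨-j, by rwa [hsummand] at hj⟩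
    · rintro ⟨j, hj⟩
      refine ⟨-j, ?_⟩
      rw [hsummand, neg_neg]
      exact hj
  -- analysis of T on n-th roots of unity
  have hdisj : Disjoint (Finset.Icc 1 r) (Finset.Icc (n - r) (n - 1)) := by
    rw [Finset.disjoint_left]
    intro k hk1 hk2
    simp only [Finset.mem_Icc] at hk1 hk2
    omega
  have hTiff : ∀ ζ : ℂ, ζ ^ n = 1 →
      (T ζ = 0 ↔ (ζ ≠ 1 ∧ (ζ ^ r = 1 ∨ ζ ^ (r + 1) = -1))) := by
    intro ζ hζ
    have hζ0 : ζ ≠ 0 := by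
      intro h
      rw [h, zero_pow hn0] at hζ
      exact one_ne_zero hζ.symm
    have hfilter : (Finset.range n).filter
        (fun k => 1 ≤ min k (n - k) ∧ min k (n - k) ≤ r)
        = Finset.Icc 1 r ∪ Finset.Icc (n - r) (n - 1) := by
      ext k
      simp only [Finset.mem_filter, Finset.mem_range, Finset.mem_union, Finset.mem_Icc]
      omega
    have hT : T ζ = (∑ k ∈ Finset.Icc 1 r, ζ ^ k)
        + ∑ k ∈ Finset.Icc (n - r) (n - 1), ζ ^ k := by
      show (∑ d : ZMod n, cC d * ζ ^ d.val) = _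
      rw [← Equiv.sum_comp (finZModEquiv n) (fun d => cC d * ζ ^ d.val)]
      have h1 : ∀ i : Fin n, cC (finZModEquiv n i) * ζ ^ (finZModEquiv n i).val
          = if 1 ≤ min (i : ℕ) (n - (i : ℕ)) ∧ min (i : ℕ) (n - (i : ℕ)) ≤ r
            then ζ ^ (i : ℕ) else 0 := by
        intro i
        have hv : (finZModEquiv n i).val = (i : ℕ) := ZMod.val_natCast_of_lt i.isLt
        rw [hcC]
        simp only [hv]
        split_ifs <;> simp
      simp only [h1]
      rw [Fin.sum_univ_eq_sum_range
        (fun i => if 1 ≤ min i (n - i) ∧ min i (n - i) ≤ r then ζ ^ i else 0)]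
      rw [← Finset.sum_filter, hfilter, Finset.sum_union hdisj]
    by_cases hζ1 : ζ = 1
    · subst hζ1
      have hc1 : T 1 = (r : ℂ) + (r : ℂ) := by
        rw [hT]
        simp only [one_pow, Finset.sum_const, Nat.card_Icc, nsmul_eq_mul, mul_one]
        congr 2 <;> omega
      constructor
      · intro h0
        rw [hc1] at h0
        have : ((2 * r : ℕ) : ℂ) = 0 := by push_cast; linear_combination h0
        have := Nat.cast_eq_zero.mp this
        omega
      · rintro ⟨h, -⟩
        exact absurd rfl h
    · have hgeom1 : (∑ k ∈ Finset.Icc 1 r, ζ ^ k) * (ζ - 1) = ζ ^ (r + 1) - ζ := by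
        rw [← Finset.Ico_add_one_right_eq_Icc]
        rw [geom_sum_Ico_mul ζ (by omega : 1 ≤ r + 1)]
        rw [pow_one]
      have hgeom2 : (∑ k ∈ Finset.Icc (n - r) (n - 1), ζ ^ k) * (ζ - 1)
          = ζ ^ n - ζ ^ (n - r) := by
        have he : Finset.Icc (n - r) (n - 1) = Finset.Ico (n - r) n := by
          rw [← Finset.Ico_add_one_right_eq_Icc]
          congr 1
          omega
        rw [he, geom_sum_Ico_mul ζ (by omega : n - r ≤ n)]
      have hnr : ζ ^ (n - r) * ζ ^ r = 1 := by
        rw [← pow_add, show n - r + r = n by omega]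
        exact hζ
      have hkey : T ζ * ((ζ - 1) * ζ ^ r) = (ζ ^ r - 1) * (ζ ^ (r + 1) + 1) := by
        rw [hT]
        linear_combination (hgeom1 + hgeom2 + hζ) * ζ ^ r - hnr
      constructor
      · intro h0
        have hz : (ζ ^ r - 1) * (ζ ^ (r + 1) + 1) = 0 := by
          rw [← hkey, h0, zero_mul]
        refine ⟨hζ1, ?_⟩
        rcases mul_eq_zero.mp hz with h | h
        · exact Or.inl (sub_eq_zero.mp h)
        · exact Or.inr (eq_neg_of_add_eq_zero_left h)
      · rintro ⟨-, h⟩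
        have hz : (ζ ^ r - 1) * (ζ ^ (r + 1) + 1) = 0 := by
          rcases h with h | h
          · rw [h]; ring
          · rw [h]; ring
        have hne : (ζ - 1) * ζ ^ r ≠ 0 :=
          mul_ne_zero (sub_ne_zero.mpr hζ1) (pow_ne_zero r hζ0)
        exact (mul_eq_zero.mp (hkey.trans hz)).resolve_right hne
  -- translate the condition on each j
  have hEn : ∀ j : ZMod n, (ω ^ j.val) ^ n = 1 := by
    intro j
    rw [← pow_mul, mul_comm, pow_mul, hω1, one_pow]
  have hj_iff : ∀ j : ZMod n, (T (ω ^ j.val) = 0)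
      ↔ (j ≠ 0 ∧ (j * (r : ZMod n) = 0
        ∨ (Even n ∧ j * ((r : ZMod n) + 1) = ((n / 2 : ℕ) : ZMod n)))) := by
    intro j
    rw [hTiff _ (hEn j)]
    refine and_congr (not_congr (hE1 j)) (or_congr ?_ ?_)
    · rw [aux_E_pow hω1, hE1]
    · rw [aux_E_pow hω1]
      have hc : ((r + 1 : ℕ) : ZMod n) = (r : ZMod n) + 1 := by push_cast; rfl
      rw [hc]
      by_cases he : Even n
      · have hhalf : ω ^ (((n / 2 : ℕ) : ZMod n)).val = -1 := by
          rw [ZMod.val_natCast_of_lt (by omega : n / 2 < n)]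
          obtain ⟨m, hm⟩ := he
          have hx2 : ω ^ (n / 2) * ω ^ (n / 2) = 1 := by
            rw [← pow_add, show n / 2 + n / 2 = n by omega]
            exact hω1
          rcases mul_self_eq_one_iff.mp hx2 with h | h
          · exact absurd h (hω.pow_ne_one_of_pos_of_lt (by omega) (by omega))
          · exact h
        rw [← hhalf, hEinj]
        constructor
        · intro h; exact ⟨he, h⟩
        · rintro ⟨-, h⟩; exact h
      · constructor
        · intro h
          exfalso
          have h1 : (ω ^ (j * ((r : ZMod n) + 1)).val) ^ n = 1 := hEn _
          rw [h, (Nat.not_even_iff_odd.mp he).neg_one_pow] at h1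
          norm_num at h1
        · rintro ⟨he', -⟩; exact absurd he' he
  rw [hexist, exists_congr hj_iff]
  -- final arithmetic equivalence
  constructor
  · rintro ⟨j, hj0, hj⟩
    by_cases hg : Nat.gcd n r = 1
    · right
      refine ⟨hg, ?_⟩
      rcases hj with h | ⟨he, h⟩
      · exfalso
        have hu : IsUnit (r : ZMod n) :=
          (ZMod.isUnit_iff_coprime r n).mpr (Nat.coprime_comm.mp hg)
        exact hj0 (hu.mul_left_eq_zero.mp h)
      · refine ⟨he, ?_⟩
        have hc2 : ((j.val * (r + 1) : ℕ) : ZMod n) = ((n / 2 : ℕ) : ZMod n) := by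
          push_cast
          rw [ZMod.natCast_zmod_val]
          exact h
        have hmod : j.val * (r + 1) ≡ n / 2 [MOD n] :=
          (ZMod.natCast_eq_natCast_iff _ _ _).mp hc2
        have h1 : ((Nat.gcd (r + 1) n : ℕ) : ℤ) ∣ ((n / 2 : ℕ) : ℤ) - ((j.val * (r + 1) : ℕ) : ℤ) :=
          dvd_trans (Int.natCast_dvd_natCast.mpr (Nat.gcd_dvd_right (r + 1) n)) hmod.dvd
        have h2 : ((Nat.gcd (r + 1) n : ℕ) : ℤ) ∣ ((j.val * (r + 1) : ℕ) : ℤ) :=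
          Int.natCast_dvd_natCast.mpr ((Nat.gcd_dvd_left (r + 1) n).mul_left j.val)
        have h3 : ((Nat.gcd (r + 1) n : ℕ) : ℤ) ∣ ((n / 2 : ℕ) : ℤ) := by
          have := dvd_add h1 h2
          simpa using this
        exact_mod_cast h3
    · left
      have : Nat.gcd n r ≠ 0 := fun h => hn0 (Nat.eq_zero_of_gcd_eq_zero_left h)
      omega
  · rintro (hg | ⟨hg1, he, hdvd⟩)
    · obtain ⟨g, hgdef⟩ : ∃ g, g = Nat.gcd n r := ⟨_, rfl⟩
      have hg' : 1 < g := hgdef ▸ hg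
      have hgn : g ∣ n := hgdef ▸ Nat.gcd_dvd_left n r
      have hgr : g ∣ r := hgdef ▸ Nat.gcd_dvd_right n r
      have hglen : g ≤ n := Nat.le_of_dvd (by omega) hgn
      refine ⟨((n / g : ℕ) : ZMod n), ?_, Or.inl ?_⟩
      · rw [Ne, ZMod.natCast_eq_zero_iff]
        intro hdvd2
        have h1 : 0 < n / g := Nat.div_pos hglen (by omega)
        have h2 : n / g < n := Nat.div_lt_self (by omega) hg'
        have := Nat.le_of_dvd h1 hdvd2
        omega
      · obtain ⟨s, hs⟩ := hgr
        obtain ⟨m, hm⟩ := hgn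
        have hgpos : 0 < g := by omega
        have hng : n / g = m := by rw [hm]; exact Nat.mul_div_cancel_left m hgpos
        have hmul : n / g * r = n * s := by rw [hng, hs, hm]; ring
        rw [show ((n / g : ℕ) : ZMod n) * (r : ZMod n)
            = ((n / g * r : ℕ) : ZMod n) by push_cast; ring]
        rw [hmul]
        push_cast
        simp
    · have hpos : 0 < n / 2 := by omega
      obtain ⟨t, ht⟩ := hdvd
      have hbez := Nat.gcd_eq_gcd_ab (r + 1) n
      have key : ((r : ZMod n) + 1) * ((Nat.gcdA (r + 1) n : ℤ) : ZMod n)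
          = ((Nat.gcd (r + 1) n : ℕ) : ZMod n) := by
        have h2 := congrArg (fun z : ℤ => ((z : ℤ) : ZMod n)) hbez
        push_cast at h2
        rw [ZMod.natCast_self, zero_mul, add_zero] at h2
        exact h2.symm
      have hEq : (((Nat.gcdA (r + 1) n : ℤ) : ZMod n) * ((t : ℕ) : ZMod n))
          * ((r : ZMod n) + 1) = ((n / 2 : ℕ) : ZMod n) := by
        rw [ht]
        push_cast
        linear_combination ((t : ℕ) : ZMod n) * key
      have hne : ((Nat.gcdA (r + 1) n : ℤ) : ZMod n) * ((t : ℕ) : ZMod n) ≠ 0 := by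
        intro h0
        rw [h0, zero_mul] at hEq
        have h1 : ((n / 2 : ℕ) : ZMod n) = 0 := hEq.symm
        rw [ZMod.natCast_eq_zero_iff] at h1
        have := Nat.le_of_dvd hpos h1
        omega
      exact ⟨_, hne, Or.inr ⟨he, hEq⟩⟩
end

section
/- Let n ≥ 3 and 1 ≤ r < ⌊n/2⌋. The complement graph (C_n^{(r)})^c is non-singular if and only if gcd(n, 2r+1) = 1. -/
set_option linter.unusedSectionVars false

open Matrix Finset

namespace CPCaux

variable {n : ℕ} [NeZero n] {ζ : ℂ}

lemma pow_mod_eq (hζ : IsPrimitiveRoot ζ n) (m : ℕ) : ζ ^ (m % n) = ζ ^ m := by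
  conv_rhs => rw [← Nat.div_add_mod m n]
  rw [pow_add, pow_mul, hζ.pow_eq_one, one_pow, one_mul]

lemma e_add (hζ : IsPrimitiveRoot ζ n) (a b : ZMod n) :
    ζ ^ (a + b).val = ζ ^ a.val * ζ ^ b.val := by
  rw [ZMod.val_add, pow_mod_eq hζ, pow_add]

lemma e_nat_mul (hζ : IsPrimitiveRoot ζ n) (k : ℕ) (x : ZMod n) :
    ζ ^ (((k : ZMod n)) * x).val = (ζ ^ x.val) ^ k := by
  induction k with
  | zero => simp
  | succ k ih =>
    have h : ((k + 1 : ℕ) : ZMod n) * x = (k : ZMod n) * x + x := by push_cast; ring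
    rw [h, e_add hζ, ih, pow_succ]

lemma e_eq_one (hζ : IsPrimitiveRoot ζ n) (x : ZMod n) :
    ζ ^ x.val = 1 ↔ x = 0 := by
  rw [hζ.pow_eq_one_iff_dvd, ← ZMod.val_eq_zero]
  constructor
  · intro h; exact Nat.eq_zero_of_dvd_of_lt h (ZMod.val_lt x)
  · intro h; simp [h]

/-- The equivalence `Fin n ≃ ZMod n`. -/
def finEquiv : Fin n ≃ ZMod n where
  toFun i := (i : ℕ)
  invFun a := ⟨a.val, a.val_lt⟩
  left_inv i := by
    ext
    simp [ZMod.val_natCast, Nat.mod_eq_of_lt i.isLt]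
  right_inv a := by simp [ZMod.natCast_val]

lemma det_V_ne_zero (hζ : IsPrimitiveRoot ζ n) :
    (Matrix.of fun i j : ZMod n => ζ ^ (i * j).val).det ≠ 0 := by
  have h : (Matrix.of fun i j : ZMod n => ζ ^ (i * j).val).det
      = ((Matrix.vandermonde fun i : Fin n => ζ ^ (i : ℕ))ᵀ).det := by
    rw [← Matrix.det_submatrix_equiv_self (finEquiv (n := n))]
    congr 1
    ext i j
    simp only [Matrix.submatrix_apply, Matrix.of_apply, Matrix.transpose_apply,
      Matrix.vandermonde_apply, finEquiv, Equiv.coe_fn_mk]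
    rw [ZMod.val_mul, pow_mod_eq hζ]
    rw [ZMod.val_natCast, ZMod.val_natCast, Nat.mod_eq_of_lt i.isLt,
      Nat.mod_eq_of_lt j.isLt, pow_mul']
  rw [h, Matrix.det_transpose, Matrix.det_vandermonde]
  apply Finset.prod_ne_zero_iff.mpr
  intro i _
  apply Finset.prod_ne_zero_iff.mpr
  intro j hj
  rw [Finset.mem_Ioi] at hj
  rw [sub_ne_zero]
  intro hEq
  exact absurd (hζ.pow_inj j.isLt i.isLt hEq) (by omega)

lemma det_circ (hζ : IsPrimitiveRoot ζ n) (c : ZMod n → ℂ) :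
    (Matrix.of fun u v : ZMod n => c (u - v)).det
      = ∏ j : ZMod n, ∑ w : ZMod n, c w * ζ ^ (-(w * j)).val := by
  set V : Matrix (ZMod n) (ZMod n) ℂ := Matrix.of fun i j => ζ ^ (i * j).val with hVdef
  set g : ZMod n → ℂ := fun j => ∑ w : ZMod n, c w * ζ ^ (-(w * j)).val with hgdef
  have hMV : (Matrix.of fun u v : ZMod n => c (u - v)) * V = V * Matrix.diagonal g := by
    ext i j
    rw [Matrix.mul_apply, Matrix.mul_diagonal]
    have h1 : ∀ w : ZMod n, c (i - (Equiv.subLeft i w)) *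
        V (Equiv.subLeft i w) j = ζ ^ (i * j).val * (c w * ζ ^ (-(w * j)).val) := by
      intro w
      simp only [Equiv.subLeft_apply, sub_sub_cancel, hVdef, Matrix.of_apply]
      have h2 : (i - w) * j = i * j + (-(w * j)) := by ring
      rw [h2, e_add hζ]
      ring
    calc ∑ v : ZMod n, (Matrix.of fun u v : ZMod n => c (u - v)) i v * V v j
        = ∑ w : ZMod n, c (i - (Equiv.subLeft i w)) * V (Equiv.subLeft i w) j :=
          (Equiv.sum_comp (Equiv.subLeft i) fun v => c (i - v) * V v j).symm
      _ = ∑ w : ZMod n, ζ ^ (i * j).val * (c w * ζ ^ (-(w * j)).val) :=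
          Finset.sum_congr rfl fun w _ => h1 w
      _ = V i j * g j := by rw [← Finset.mul_sum]; rfl
  have hV : V.det ≠ 0 := det_V_ne_zero hζ
  have hDet := congrArg Matrix.det hMV
  rw [Matrix.det_mul, Matrix.det_mul, Matrix.det_diagonal, mul_comm V.det] at hDet
  exact mul_right_cancel₀ hV hDet

end CPCaux

/-- The complement `(C_n^{(r)})^c` of the `r`-th power of the cycle is
non-singular iff `gcd(n, 2r+1) = 1`. -/
theorem complement_power_of_cycle_nonsingular_iff (n r : ℕ) [NeZero n]
    (hn : 3 ≤ n) (hr : 1 ≤ r) (hrn : r < n / 2) :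
    (Matrix.of fun u v : ZMod n =>
        if r < min (u - v).val (n - (u - v).val) then (1 : ℚ) else 0).det ≠ 0 ↔
      Nat.gcd n (2 * r + 1) = 1 := by
  classical
  have hnpos : 0 < n := Nat.pos_of_ne_zero (NeZero.ne n)
  have h2r : 2 * r + 2 ≤ n := by omega
  set ζ : ℂ := Complex.exp (2 * Real.pi * Complex.I / n) with hζdef
  have hζ : IsPrimitiveRoot ζ n := Complex.isPrimitiveRoot_exp n (NeZero.ne n)
  set c : ZMod n → ℂ := fun w => if r < min w.val (n - w.val) then 1 else 0 with hc
  have hcval : ∀ w : ZMod n, c w = if r < min w.val (n - w.val) then 1 else 0 := fun _ => rfl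
  -- reduce to ℂ
  have hmap : ((Matrix.of fun u v : ZMod n =>
      if r < min (u - v).val (n - (u - v).val) then (1 : ℚ) else 0).map (algebraMap ℚ ℂ))
      = Matrix.of fun u v : ZMod n => c (u - v) := by
    ext u v
    by_cases h : r < min (u - v).val (n - (u - v).val) <;> simp [hcval, h]
  have hdet0 : (Matrix.of fun u v : ZMod n =>
      if r < min (u - v).val (n - (u - v).val) then (1 : ℚ) else 0).det ≠ 0
      ↔ (Matrix.of fun u v : ZMod n => c (u - v)).det ≠ 0 := by
    rw [← hmap]
    have hh := (RingHom.map_det (algebraMap ℚ ℂ) (Matrix.of fun u v : ZMod n =>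
        if r < min (u - v).val (n - (u - v).val) then (1 : ℚ) else 0)).symm
    rw [RingHom.mapMatrix_apply] at hh
    rw [hh]
    exact (map_ne_zero_iff _ (algebraMap ℚ ℂ).injective).symm
  rw [hdet0, CPCaux.det_circ hζ c, Finset.prod_ne_zero_iff]
  -- the character sums
  have hsum : ∀ x : ZMod n, (∑ w : ZMod n, c w * ζ ^ (w * x).val)
      = ∑ k ∈ Finset.Ico (r + 1) (n - r), (ζ ^ x.val) ^ k := by
    intro x
    calc ∑ w : ZMod n, c w * ζ ^ (w * x).val
        = ∑ k ∈ Finset.range n, c ((k : ℕ) : ZMod n) * ζ ^ (((k : ℕ) : ZMod n) * x).val := by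
          rw [← Fin.sum_univ_eq_sum_range
            (fun k : ℕ => c ((k : ℕ) : ZMod n) * ζ ^ (((k : ℕ) : ZMod n) * x).val) n]
          exact (Equiv.sum_comp (CPCaux.finEquiv (n := n))
            (fun w : ZMod n => c w * ζ ^ (w * x).val)).symm
      _ = ∑ k ∈ Finset.range n, (if r < min k (n - k) then (ζ ^ x.val) ^ k else 0) := by
          refine Finset.sum_congr rfl fun k hk => ?_
          rw [Finset.mem_range] at hk
          have hval : ((k : ZMod n)).val = k := by
            rw [ZMod.val_natCast, Nat.mod_eq_of_lt hk]
          rw [CPCaux.e_nat_mul hζ, hcval, hval, ite_mul, one_mul, zero_mul]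
      _ = ∑ k ∈ Finset.Ico (r + 1) (n - r), (ζ ^ x.val) ^ k := by
          rw [← Finset.sum_filter]
          congr 1
          ext k
          simp only [Finset.mem_filter, Finset.mem_range, Finset.mem_Ico, lt_min_iff]
          omega
  -- per-point characterization
  have key : ∀ x : ZMod n,
      ((∑ k ∈ Finset.Ico (r + 1) (n - r), (ζ ^ x.val) ^ k) ≠ 0
        ↔ (x = 0 ∨ ((2 * r + 1 : ℕ) : ZMod n) * x ≠ 0)) := by
    intro x
    set η : ℂ := ζ ^ x.val with hηdef
    have hηn : η ^ n = 1 := by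
      rw [hηdef, ← pow_mul, mul_comm, pow_mul, hζ.pow_eq_one, one_pow]
    have hη0 : η ≠ 0 := by
      intro h
      rw [h, zero_pow (NeZero.ne n)] at hηn
      exact zero_ne_one hηn
    have hone : η = 1 ↔ x = 0 := CPCaux.e_eq_one hζ x
    have hpow : η ^ (2 * r + 1) = 1 ↔ ((2 * r + 1 : ℕ) : ZMod n) * x = 0 := by
      rw [hηdef, ← CPCaux.e_nat_mul hζ, CPCaux.e_eq_one hζ]
    by_cases hx : η = 1
    · rw [hx]
      simp only [one_pow, Finset.sum_const, nsmul_eq_mul, mul_one, Nat.card_Ico]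
      constructor
      · intro _; exact Or.inl (hone.mp hx)
      · intro _
        exact Nat.cast_ne_zero.mpr (by omega)
    · have hcan : η ^ (n - r) = η ^ (r + 1) ↔ η ^ (2 * r + 1) = 1 := by
        constructor
        · intro h
          have h2 : η ^ ((n - r) + r) = η ^ ((r + 1) + r) := by
            rw [pow_add, pow_add, h]
          rw [show (n - r) + r = n by omega, hηn,
            show (r + 1) + r = 2 * r + 1 by omega] at h2
          exact h2.symm
        · intro h
          have h2 : η ^ ((n - r) + r) = η ^ ((r + 1) + r) := by
            rw [show (n - r) + r = n by omega, hηn,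
              show (r + 1) + r = 2 * r + 1 by omega, h]
          rw [pow_add, pow_add] at h2
          exact mul_right_cancel₀ (pow_ne_zero r hη0) h2
      have hgeom : ∑ k ∈ Finset.Ico (r + 1) (n - r), η ^ k
          = (η ^ (n - r) - η ^ (r + 1)) / (η - 1) := geom_sum_Ico hx (by omega)
      rw [hgeom, div_ne_zero_iff]
      have hsub : η - 1 ≠ 0 := sub_ne_zero.mpr hx
      constructor
      · rintro ⟨hnum, -⟩
        right
        intro h1
        exact hnum (by rw [sub_eq_zero]; exact hcan.mpr (hpow.mpr h1))
      · rintro (h | h)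
        · exact absurd (hone.mpr h) hx
        · refine ⟨fun h0 => ?_, hsub⟩
          rw [sub_eq_zero] at h0
          exact h (hpow.mp (hcan.mp h0))
  -- put it together
  have hgj : ∀ j : ZMod n, (∑ w : ZMod n, c w * ζ ^ (-(w * j)).val)
      = ∑ k ∈ Finset.Ico (r + 1) (n - r), (ζ ^ (-j).val) ^ k := by
    intro j
    have h : ∀ w : ZMod n, -(w * j) = w * (-j) := fun w => by ring
    simp_rw [h]
    exact hsum (-j)
  have hcond : (∀ j : ZMod n, (∑ w : ZMod n, c w * ζ ^ (-(w * j)).val) ≠ 0)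
      ↔ (∀ x : ZMod n, ((2 * r + 1 : ℕ) : ZMod n) * x = 0 → x = 0) := by
    constructor
    · intro h x hx0
      have hx := h (-x)
      rw [hgj (-x), neg_neg] at hx
      rcases (key x).mp hx with h1 | h1
      · exact h1
      · exact absurd hx0 h1
    · intro h j
      rw [hgj j]
      apply (key (-j)).mpr
      by_cases hj : ((2 * r + 1 : ℕ) : ZMod n) * (-j) = 0
      · exact Or.inl (h _ hj)
      · exact Or.inr hj
  simp only [Finset.mem_univ, true_implies]
  rw [hcond]
  constructor
  · intro h
    by_contra hg
    obtain ⟨d, hd⟩ : ∃ d, d = Nat.gcd n (2 * r + 1) := ⟨_, rfl⟩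
    rw [← hd] at hg
    have hdn : d ∣ n := hd ▸ Nat.gcd_dvd_left _ _
    have hdr : d ∣ 2 * r + 1 := hd ▸ Nat.gcd_dvd_right _ _
    have hd0 : d ≠ 0 := by
      rw [hd, Ne, Nat.gcd_eq_zero_iff]
      omega
    have hd2 : 2 ≤ d := by omega
    have hx0 : ((2 * r + 1 : ℕ) : ZMod n) * ((n / d : ℕ) : ZMod n) = 0 := by
      rw [← Nat.cast_mul, ZMod.natCast_eq_zero_iff]
      obtain ⟨m, hm⟩ := hdr
      rw [hm, show d * m * (n / d) = m * (d * (n / d)) by ring, Nat.mul_div_cancel' hdn]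
      exact dvd_mul_left n m
    have hxne : ((n / d : ℕ) : ZMod n) ≠ 0 := by
      rw [Ne, ZMod.natCast_eq_zero_iff]
      intro hdvd
      have h1 : 0 < n / d := Nat.div_pos (Nat.le_of_dvd hnpos hdn) (by omega)
      have h2 : n / d < n := Nat.div_lt_self hnpos (by omega)
      exact absurd (Nat.le_of_dvd h1 hdvd) (by omega)
    exact hxne (h _ hx0)
  · intro hg x hx
    have hu : IsUnit ((2 * r + 1 : ℕ) : ZMod n) :=
      (ZMod.isUnit_iff_coprime _ n).mpr (Nat.coprime_comm.mp hg)
    exact (hu.mul_right_eq_zero).mp hx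
end

section
/- Let n and r be positive integers with 1 ≤ r < n. The circulant graph C(2n, r) on 2n vertices, whose adjacency matrix is circulant with first row [0, 1...1 (r times), 0...0 (n−r−1 times), 1, 0...0 (n−r−1 times), 1...1 (r times)], is singular if and only if gcd(n, 2r+1) ≥ 3. -/
open Polynomial

namespace C2nrAux

lemma pow_mod_eq {M : Type*} [Monoid M] {ζ : M} {N : ℕ} (h : ζ ^ N = 1) (x : ℕ) :
    ζ ^ (x % N) = ζ ^ x := by
  conv_rhs => rw [← Nat.mod_add_div x N]
  rw [pow_add, pow_mul, h, one_pow, mul_one]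

/-- The equivalence between `Fin N` and `ZMod N`. -/
def zmodFinEquiv (N : ℕ) [NeZero N] : Fin N ≃ ZMod N where
  toFun i := ((i : ℕ) : ZMod N)
  invFun a := ⟨a.val, a.val_lt⟩
  left_inv i := by
    ext
    simp [ZMod.val_cast_of_lt i.isLt]
  right_inv a := ZMod.natCast_rightInverse a

lemma sum_zmod {N : ℕ} [NeZero N] (f : ℕ → ℂ) :
    ∑ u : ZMod N, f u.val = ∑ v ∈ Finset.range N, f v := by
  rw [← Equiv.sum_comp (zmodFinEquiv N) (fun u => f u.val)]
  have : ∀ i : Fin N, f ((zmodFinEquiv N i).val) = f i.val := by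
    intro i
    simp [zmodFinEquiv, ZMod.val_cast_of_lt i.isLt]
  rw [Finset.sum_congr rfl (fun i _ => this i)]
  exact Fin.sum_univ_eq_sum_range (fun i => f i) N


lemma filter_eq (n r : ℕ) (hr : 1 ≤ r) (hrn : r < n) :
    (Finset.range (2*n)).filter
        (fun v => (1 ≤ v ∧ v ≤ r) ∨ v = n ∨ 2*n - r ≤ v)
      = (Finset.Ico 1 (r+1) ∪ Finset.Ico (2*n-r) (2*n)) ∪ {n} := by
  ext v
  simp only [Finset.mem_filter, Finset.mem_range, Finset.mem_union, Finset.mem_Ico,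
    Finset.mem_singleton]
  omega

lemma lam_split (n r : ℕ) [NeZero (2*n)] (hr : 1 ≤ r) (hrn : r < n) (ω : ℂ) :
    ∑ u : ZMod (2*n),
        (if (1 ≤ u.val ∧ u.val ≤ r) ∨ u.val = n ∨ 2*n - r ≤ u.val then (1:ℂ) else 0) * ω ^ u.val
      = ((∑ v ∈ Finset.Ico 1 (r+1), ω ^ v) + ∑ v ∈ Finset.Ico (2*n-r) (2*n), ω ^ v) + ω ^ n := by
  rw [sum_zmod (N := 2*n)
    (f := fun v => (if (1 ≤ v ∧ v ≤ r) ∨ v = n ∨ 2*n - r ≤ v then (1:ℂ) else 0) * ω ^ v)]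
  simp only [ite_mul, one_mul, zero_mul]
  rw [← Finset.sum_filter, filter_eq n r hr hrn]
  have hd1 : Disjoint (Finset.Ico 1 (r+1)) (Finset.Ico (2*n-r) (2*n)) := by
    rw [Finset.disjoint_left]
    intro a ha hb
    simp only [Finset.mem_Ico] at ha hb
    omega
  have hd2 : Disjoint (Finset.Ico 1 (r+1) ∪ Finset.Ico (2*n-r) (2*n)) ({n} : Finset ℕ) := by
    rw [Finset.disjoint_right]
    intro a ha hb
    simp only [Finset.mem_singleton] at ha
    simp only [Finset.mem_union, Finset.mem_Ico] at hb
    omega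
  rw [Finset.sum_union hd2, Finset.sum_union hd1, Finset.sum_singleton]

lemma lam_one (n r : ℕ) [NeZero (2*n)] (hr : 1 ≤ r) (hrn : r < n) :
    ∑ u : ZMod (2*n),
        (if (1 ≤ u.val ∧ u.val ≤ r) ∨ u.val = n ∨ 2*n - r ≤ u.val then (1:ℂ) else 0)
          * (1:ℂ) ^ u.val = ((2*r+1 : ℕ) : ℂ) := by
  rw [lam_split n r hr hrn 1]
  simp only [one_pow, Finset.sum_const, Nat.card_Ico, nsmul_eq_mul, mul_one]
  have h1 : r + 1 - 1 = r := by omega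
  have h2 : 2*n - (2*n - r) = r := by omega
  rw [h1, h2]
  push_cast
  ring

lemma lam_eval (n r : ℕ) [NeZero (2*n)] (hr : 1 ≤ r) (hrn : r < n) (ω : ℂ)
    (hω : ω ^ (2*n) = 1) :
    (ω - 1) * ω ^ r *
        (∑ u : ZMod (2*n),
          (if (1 ≤ u.val ∧ u.val ≤ r) ∨ u.val = n ∨ 2*n - r ≤ u.val then (1:ℂ) else 0)
            * ω ^ u.val)
      = (ω ^ (2*r+1) - 1) + (ω ^ n - 1) * (ω ^ (r+1) - ω ^ r) := by
  rw [lam_split n r hr hrn ω]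
  have hg1 : (∑ v ∈ Finset.Ico 1 (r+1), ω ^ v) * (ω - 1) = ω ^ r * ω - ω := by
    rw [Finset.sum_Ico_eq_sum_range]
    have h1 : r + 1 - 1 = r := by omega
    rw [h1]
    have : ∀ i ∈ Finset.range r, ω ^ (1 + i) = ω * ω ^ i := by
      intro i _; rw [add_comm, pow_add, pow_one, mul_comm]
    rw [Finset.sum_congr rfl this, ← Finset.mul_sum, mul_assoc, geom_sum_mul]
    ring
  have hg2 : (∑ v ∈ Finset.Ico (2*n-r) (2*n), ω ^ v) * (ω - 1) = 1 - ω ^ (2*n-r) := by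
    rw [Finset.sum_Ico_eq_sum_range]
    have h1 : 2*n - (2*n - r) = r := by omega
    rw [h1]
    have : ∀ i ∈ Finset.range r, ω ^ (2*n - r + i) = ω ^ (2*n-r) * ω ^ i := by
      intro i _; rw [pow_add]
    rw [Finset.sum_congr rfl this, ← Finset.mul_sum, mul_assoc, geom_sum_mul]
    have hcomp : ω ^ (2*n-r) * ω ^ r = 1 := by
      rw [← pow_add, show 2*n - r + r = 2*n from by omega, hω]
    linear_combination hcomp
  have hac : ω ^ r * ω ^ (2*n-r) = 1 := by
    rw [← pow_add, show r + (2*n - r) = 2*n from by omega, hω]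
  have h2r1 : ω ^ (2*r+1) = ω ^ r * ω ^ r * ω := by
    rw [show 2*r+1 = r + r + 1 from by ring, pow_add, pow_add, pow_one]
  have hr1 : ω ^ (r+1) = ω ^ r * ω := by rw [pow_add, pow_one]
  rw [h2r1, hr1]
  linear_combination (ω^r) * hg1 + (ω^r) * hg2 - hac

end C2nrAux

open Matrix in
lemma C2nrAux.circulant_det_eq_prod {N : ℕ} [NeZero N] (c : ZMod N → ℂ) {ζ : ℂ}
    (hζ : IsPrimitiveRoot ζ N) :
    (Matrix.of fun i j : ZMod N => c (j - i)).det
      = ∏ k : ZMod N, ∑ u : ZMod N, c u * ζ ^ (u.val * k.val) := by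
  classical
  have hζN : ζ ^ N = 1 := hζ.pow_eq_one
  set V : Matrix (ZMod N) (ZMod N) ℂ := Matrix.of fun i k => ζ ^ (i.val * k.val) with hV
  set lam : ZMod N → ℂ := fun k => ∑ u : ZMod N, c u * ζ ^ (u.val * k.val) with hlam
  have key : (Matrix.of fun i j : ZMod N => c (j - i)) * V = V * Matrix.diagonal lam := by
    ext i k
    rw [Matrix.mul_diagonal]
    simp only [Matrix.mul_apply, Matrix.of_apply, V, lam, Finset.mul_sum]
    rw [← Equiv.sum_comp (Equiv.addLeft i) (fun j => c (j - i) * ζ ^ (j.val * k.val))]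
    apply Finset.sum_congr rfl
    intro u _
    have h1 : (Equiv.addLeft i) u - i = u := by simp
    rw [h1]
    have h2 : ζ ^ (((Equiv.addLeft i) u).val * k.val)
        = ζ ^ (i.val * k.val) * ζ ^ (u.val * k.val) := by
      have hval : ((Equiv.addLeft i) u).val = (i.val + u.val) % N := by
        simp [Equiv.addLeft, ZMod.val_add]
      rw [hval, pow_mul, pow_mod_eq hζN, ← pow_mul, add_mul, pow_add]
    rw [h2]; ring
  have hVdet : V.det ≠ 0 := by
    rw [← Matrix.det_submatrix_equiv_self (zmodFinEquiv N) V]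
    have hsub : V.submatrix (zmodFinEquiv N) (zmodFinEquiv N)
        = Matrix.vandermonde (fun i : Fin N => ζ ^ (i : ℕ)) := by
      ext i j
      simp only [Matrix.submatrix_apply, Matrix.vandermonde, V, Matrix.of_apply, zmodFinEquiv,
        Equiv.coe_fn_mk]
      rw [ZMod.val_cast_of_lt i.isLt, ZMod.val_cast_of_lt j.isLt, pow_mul]
    rw [hsub, Matrix.det_vandermonde]
    apply Finset.prod_ne_zero_iff.mpr
    intro i _
    apply Finset.prod_ne_zero_iff.mpr
    intro j hj
    rw [Finset.mem_Ioi] at hj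
    intro hzero
    have heq : ζ ^ (j : ℕ) = ζ ^ (i : ℕ) := by linear_combination hzero
    exact absurd (hζ.pow_inj j.isLt i.isLt heq) (by intro h; exact absurd (Fin.val_injective h) (by simp [hj.ne']))
  have hdet := congrArg Matrix.det key
  rw [Matrix.det_mul, Matrix.det_mul, Matrix.det_diagonal, mul_comm V.det] at hdet
  exact mul_right_cancel₀ hVdet hdet


lemma C2nrAux.half_pow_ne_one (n : ℕ) (hn : 0 < n) : ((1:ℂ)/2) ^ (2*n) ≠ 1 := by
  intro h
  rw [div_pow, one_pow, div_eq_one_iff_eq (pow_ne_zero _ two_ne_zero)] at h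
  have h2 : ((2:ℕ):ℂ) ^ (2*n) = ((1:ℕ):ℂ) := by push_cast; rw [← h]
  rw [← Nat.cast_pow, Nat.cast_inj] at h2
  have : 2^1 ≤ 2^(2*n) := Nat.pow_le_pow_right (by omega) (by omega)
  omega

lemma C2nrAux.lemmaE (n r : ℕ) (hn : 0 < n) (ω : ℂ) (hωN : ω ^ (2*n) = 1)
    (hωn : ω ^ n = -1) (hE : ω ^ (2*r+1) - 1 = 2 * ω ^ r * (ω - 1)) :
    3 ∣ n ∧ 3 ∣ (2*r+1) := by
  have hω0 : ω ≠ 0 := by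
    intro h0
    rw [h0, zero_pow (by omega : 2*n ≠ 0)] at hωN
    exact zero_ne_one hωN
  have hω1 : ω ≠ 1 := by
    intro h1
    rw [h1, one_pow] at hωn
    norm_num at hωn
  have hfin : IsOfFinOrder ω := isOfFinOrder_iff_pow_eq_one.mpr ⟨2*n, by omega, hωN⟩
  set d := orderOf ω with hd
  have hd0 : 0 < d := hfin.orderOf_pos
  have hprim : IsPrimitiveRoot ω d := IsPrimitiveRoot.orderOf ω
  have hddvd : d ∣ 2*n := orderOf_dvd_of_pow_eq_one hωN
  have hdeven : 2 ∣ d := by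
    by_contra hodd
    have hcop : Nat.Coprime 2 d := (Nat.prime_two.coprime_iff_not_dvd).mpr hodd
    have hdn : d ∣ n := (Nat.Coprime.dvd_of_dvd_mul_left hcop.symm hddvd)
    have : ω ^ n = 1 := orderOf_dvd_iff_pow_eq_one.mp hdn
    rw [this] at hωn
    norm_num at hωn
  set m0 := (2*r+1) % d with hm0
  set s0 := r % d with hs0
  have hdm : 2*r+1 = d * ((2*r+1)/d) + m0 := (Nat.div_add_mod _ _).symm
  have hm0lt : m0 < d := Nat.mod_lt _ hd0
  have hm0odd : m0 % 2 = 1 := by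
    rw [hm0, Nat.mod_mod_of_dvd _ hdeven]
    omega
  have hEm : ω ^ m0 - 1 = 2 * ω ^ s0 * (ω - 1) := by
    rw [hm0, hs0, hd, pow_mod_orderOf, pow_mod_orderOf]
    exact hE
  have hhalf : ω ^ (d/2) = -1 := by
    have h2 : (ω ^ (d/2)) * (ω ^ (d/2)) = 1 := by
      rw [← pow_add, show d/2 + d/2 = d from by omega]
      exact pow_orderOf_eq_one ω
    rcases mul_self_eq_one_iff.mp h2 with h | h
    · exfalso
      have hdvd2 := orderOf_dvd_of_pow_eq_one h
      rw [← hd] at hdvd2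
      have := Nat.le_of_dvd (by omega) hdvd2
      omega
    · exact h
  have hintω : IsIntegral ℚ ω := by
    refine ⟨X ^ (2*n) - 1, ?_, ?_⟩
    · exact monic_X_pow_sub_C (1:ℚ) (by omega)
    · simp [hωN]
  by_cases h4 : 4 ∣ d
  · exfalso
    -- the conjugate -ω
    have hcop : Nat.Coprime (1 + d/2) d := by
      have hodd2 : (1 + d/2) % 2 = 1 := by omega
      set g := Nat.gcd (1 + d/2) d with hg
      have hg1 : g ∣ 1 + d/2 := Nat.gcd_dvd_left _ _
      have hg2 : g ∣ d := Nat.gcd_dvd_right _ _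
      have hgodd : ¬ 2 ∣ g := by
        intro h2g
        obtain ⟨c, hc⟩ := h2g.trans hg1
        omega
      have hgcop2 : Nat.Coprime g 2 := ((Nat.prime_two.coprime_iff_not_dvd).mpr hgodd).symm
      have hghalf : g ∣ d/2 := by
        refine Nat.Coprime.dvd_of_dvd_mul_right hgcop2 ?_
        rw [show d/2 * 2 = d from by omega]
        exact hg2
      have hgg : g ∣ 1 := by
        have := Nat.dvd_sub hg1 hghalf
        simpa using this
      exact Nat.eq_one_of_dvd_one hgg
    have hconj : IsPrimitiveRoot (ω ^ (1 + d/2)) d := hprim.pow_of_coprime _ hcop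
    have hneg : ω ^ (1 + d/2) = -ω := by
      rw [pow_add, pow_one, hhalf]
      ring
    rw [hneg] at hconj
    have hmin1 : cyclotomic d ℚ = minpoly ℚ ω := cyclotomic_eq_minpoly_rat hprim hd0
    have hmin2 : cyclotomic d ℚ = minpoly ℚ (-ω) := cyclotomic_eq_minpoly_rat hconj hd0
    set P : ℚ[X] := X ^ m0 - 2 * X ^ (s0+1) + 2 * X ^ s0 - 1 with hP
    have haev : (aeval ω) P = 0 := by
      simp only [hP, map_sub, map_add, map_mul, map_pow, map_one, map_ofNat, aeval_X]
      have hpows : ω ^ (s0 + 1) = ω ^ s0 * ω := by rw [pow_add, pow_one]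
      linear_combination hEm + 2 * hpows
    have hdvdP : minpoly ℚ (-ω) ∣ P := by
      rw [← hmin2, hmin1]
      exact minpoly.dvd ℚ ω haev
    obtain ⟨Qq, hQq⟩ := hdvdP
    have haevneg : (aeval (-ω)) P = 0 := by
      rw [hQq, map_mul, minpoly.aeval, zero_mul]
    have hE2 : (-ω) ^ m0 - 2 * (-ω) ^ (s0+1) + 2 * (-ω) ^ s0 - 1 = 0 := by
      simpa only [hP, map_sub, map_add, map_mul, map_pow, map_one, map_ofNat, aeval_X]
        using haevneg
    have hm0o : Odd m0 := Nat.odd_iff.mpr hm0odd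
    rw [hm0o.neg_pow] at hE2
    have hpows : ω ^ (s0 + 1) = ω ^ s0 * ω := by rw [pow_add, pow_one]
    have hBpow : (ω ^ s0) ^ (2*n) = 1 := by
      rw [← pow_mul, mul_comm s0 (2*n), pow_mul, hωN, one_pow]
    rcases Nat.even_or_odd s0 with hs | hs
    · rw [pow_succ, hs.neg_pow] at hE2
      have hB : ω ^ s0 = 1/2 := by linear_combination (hEm + hE2)/4
      rw [hB] at hBpow
      exact half_pow_ne_one n hn hBpow
    · rw [pow_succ, hs.neg_pow] at hE2
      have hB : ω ^ s0 * ω = -(1/2) := by linear_combination -(hEm + hE2)/4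
      have hBpow2 : (ω ^ s0 * ω) ^ (2*n) = 1 := by
        rw [mul_pow, hBpow, hωN, one_mul]
      rw [hB, Even.neg_pow (⟨n, by ring⟩ : Even (2*n))] at hBpow2
      exact half_pow_ne_one n hn hBpow2
  · -- d ≡ 2 mod 4
    set u := d / 2 with hu
    have hud : u * 2 = d := by omega
    have huodd : ¬ 2 ∣ u := by omega
    have hωu : ω ^ u = -1 := hhalf
    by_cases hu1 : u = 1
    · -- d = 2, ω = -1
      have hω : ω = -1 := by rw [← pow_one ω, ← hu1]; exact hωu
      rw [hω] at hE
      rw [Odd.neg_pow ⟨r, by ring⟩] at hE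
      rcases Nat.even_or_odd r with hs | hs
      · rw [hs.neg_pow] at hE
        norm_num at hE
      · rw [hs.neg_pow] at hE
        norm_num at hE
    · have hu3 : 3 ≤ u := by omega
      have hηprim : IsPrimitiveRoot (-ω) u := by
        constructor
        · rw [Odd.neg_pow (Nat.odd_iff.mpr (by omega)), hωu]; ring
        · intro l hl
          have h2l : ω ^ (2 * l) = 1 := by
            have : ((-ω) ^ l) ^ 2 = 1 := by rw [hl, one_pow]
            rw [← pow_mul, mul_comm l 2] at this
            calc ω ^ (2*l) = ((-ω) ^ (2*l)) := by
                  rw [Even.neg_pow ⟨l, by ring⟩]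
              _ = 1 := this
          obtain ⟨q, hq⟩ := orderOf_dvd_of_pow_eq_one h2l
          refine ⟨q, ?_⟩
          have h2eq : 2 * l = 2 * (u * q) := by rw [hq, ← hd, ← hud]; ring
          omega
      -- u divides m0, via reduction mod 2
      have hudvdm0 : u ∣ m0 := by
        have hmin : cyclotomic u ℚ = minpoly ℚ (-ω) :=
          cyclotomic_eq_minpoly_rat hηprim (by omega)
        set Pz : ℤ[X] := (-X) ^ m0 - 2 * (-X) ^ (s0+1) + 2 * (-X) ^ s0 - 1 with hPz
        have haev : (aeval (-ω)) (Pz.map (Int.castRingHom ℚ)) = 0 := by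
          simp only [hPz, Polynomial.map_sub, Polynomial.map_add, Polynomial.map_mul,
            Polynomial.map_pow, Polynomial.map_neg, Polynomial.map_one, Polynomial.map_ofNat,
            Polynomial.map_X, map_sub, map_add, map_mul, map_pow, map_neg, map_one, map_ofNat,
            aeval_X, neg_neg]
          have hpows : ω ^ (s0 + 1) = ω ^ s0 * ω := by rw [pow_add, pow_one]
          linear_combination hEm + 2 * hpows
        have hdvdQ : cyclotomic u ℚ ∣ Pz.map (Int.castRingHom ℚ) := by
          rw [hmin]
          exact minpoly.dvd ℚ (-ω) haev
        have hdvdZ : cyclotomic u ℤ ∣ Pz := by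
          rw [← map_cyclotomic_int u ℚ] at hdvdQ
          exact (map_dvd_map (Int.castRingHom ℚ) Int.cast_injective
            (cyclotomic.monic u ℤ)).mp hdvdQ
        set F := AlgebraicClosure (ZMod 2)
        haveI : CharP F 2 :=
          charP_of_injective_algebraMap (algebraMap (ZMod 2) F).injective 2
        have hu0F : ((u:ℕ) : F) ≠ 0 := by
          rw [Ne, CharP.cast_eq_zero_iff F 2]
          exact huodd
        haveI : NeZero ((u:ℕ) : F) := ⟨hu0F⟩
        obtain ⟨ζ2, hζ2⟩ := IsAlgClosed.exists_root (cyclotomic u F)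
          (degree_cyclotomic_pos u F (by omega)).ne'
        have hζprim : IsPrimitiveRoot ζ2 u := (isRoot_cyclotomic_iff).mp hζ2
        have hdvdF : cyclotomic u F ∣ Pz.map (Int.castRingHom F) := by
          have hmap := map_dvd (mapRingHom (Int.castRingHom F)) hdvdZ
          simpa only [coe_mapRingHom, map_cyclotomic] using hmap
        obtain ⟨T, hT⟩ := hdvdF
        have hzero : (Pz.map (Int.castRingHom F)).eval ζ2 = 0 := by
          rw [hT, eval_mul, hζ2.eq_zero, zero_mul]
        have h2F : (2 : F) = 0 := by
          have := CharP.cast_eq_zero F 2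
          exact_mod_cast this
        have hval : ζ2 ^ m0 = 1 := by
          have hcomp : (Pz.map (Int.castRingHom F)).eval ζ2
              = ζ2 ^ m0 - 2 * ζ2 ^ (s0+1) + 2 * ζ2 ^ s0 - 1 := by
            simp only [hPz, Polynomial.map_sub, Polynomial.map_add, Polynomial.map_mul,
              Polynomial.map_pow, Polynomial.map_neg, Polynomial.map_one, Polynomial.map_ofNat,
              Polynomial.map_X, eval_sub, eval_add, eval_mul, eval_pow, eval_neg, eval_one,
              eval_ofNat, eval_X]
            rw [CharTwo.neg_eq]
          rw [hcomp, h2F] at hzero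
          linear_combination hzero
        exact hζprim.dvd_of_pow_eq_one m0 hval
      have hm0u : m0 = u := by
        obtain ⟨c, hc⟩ := hudvdm0
        rcases Nat.lt_or_ge c 2 with h | h
        · interval_cases c <;> omega
        · exfalso
          have h2 : u * 2 ≤ u * c := Nat.mul_le_mul_left u h
          have hcon : d ≤ m0 := by
            calc d = u * 2 := hud.symm
              _ ≤ u * c := h2
              _ = m0 := hc.symm
          omega
      have hωm0 : ω ^ m0 = -1 := by rw [hm0u]; exact hωu
      -- ω^{s0} (ω - 1) = -1
      have hkey : ω ^ s0 * (ω - 1) = -1 := by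
        rw [hωm0] at hEm
        linear_combination -hEm / 2
      -- complex conjugation
      have habs1 : ‖ω‖ = 1 :=
        Complex.norm_eq_one_of_pow_eq_one hωN (by omega)
      have hconj1 : ω * (starRingEnd ℂ) ω = 1 := by
        rw [Complex.mul_conj]
        norm_cast
        rw [Complex.normSq_eq_norm_sq, habs1]
        norm_num
      set cc := (starRingEnd ℂ) ω with hcc
      have hkey2 : cc ^ s0 * (cc - 1) = -1 := by
        have := congrArg (starRingEnd ℂ) hkey
        simpa only [map_mul, map_pow, map_sub, map_one, map_neg] using this
      have hsum : ω + cc = 1 := by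
        have hmul : (ω ^ s0 * (ω - 1)) * (cc ^ s0 * (cc - 1)) = 1 := by
          rw [hkey, hkey2]; ring
        have hwc : (ω * cc) ^ s0 = 1 := by rw [hconj1, one_pow]
        have hexp : (ω ^ s0 * (ω - 1)) * (cc ^ s0 * (cc - 1))
            = (ω * cc) ^ s0 * ((ω * cc) - ω - cc + 1) := by
          rw [mul_pow]; ring
        rw [hexp, hwc, one_mul, hconj1] at hmul
        linear_combination -hmul
      have hquad : ω ^ 2 - ω + 1 = 0 := by
        linear_combination (-1) * hconj1 + ω * hsum
      have hω3 : ω ^ 3 = -1 := by linear_combination (ω + 1) * hquad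
      have hω6 : ω ^ 6 = 1 := by
        rw [show (6:ℕ) = 3 * 2 from rfl, pow_mul, hω3]
        ring
      have hd6 : d ∣ 6 := orderOf_dvd_of_pow_eq_one hω6
      have hdle := Nat.le_of_dvd (by omega) hd6
      have hd_eq : d = 6 := by omega
      have hu3' : u = 3 := by omega
      constructor
      · have hpow3 : ω ^ (n + 3) = 1 := by rw [pow_add, hωn, hω3]; ring
        have h6n : d ∣ n + 3 := orderOf_dvd_of_pow_eq_one hpow3
        rw [hd_eq] at h6n
        omega
      · have hmod : (2*r+1) % 6 = 3 := by
          rw [← hd_eq, ← hm0, hm0u, hu3']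
        omega

set_option maxHeartbeats 2000000 in
open C2nrAux in
/-- The circulant graph `C(2n, r)` on `2n` vertices, with first row
`[0, 1^r, 0^{n-r-1}, 1, 0^{n-r-1}, 1^r]`, is singular iff `gcd(n, 2r+1) ≥ 3`. -/
theorem C2nr_singular_iff (n r : ℕ) [NeZero (2 * n)] (hr : 1 ≤ r) (hrn : r < n) :
    (Matrix.of fun i j : ZMod (2 * n) =>
        if (1 ≤ (j - i).val ∧ (j - i).val ≤ r) ∨ (j - i).val = n ∨
            2 * n - r ≤ (j - i).val then (1 : ℚ) else 0).det = 0 ↔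
      3 ≤ Nat.gcd n (2 * r + 1) := by
  classical
  have hn : 0 < n := by omega
  have hN : (2*n) ≠ 0 := by omega
  obtain ⟨ζ, hζ⟩ : ∃ z : ℂ, IsPrimitiveRoot z (2*n) :=
    ⟨_, Complex.isPrimitiveRoot_exp (2*n) hN⟩
  have hζN : ζ ^ (2*n) = 1 := hζ.pow_eq_one
  have hζ0 : ζ ≠ 0 := by
    intro h0
    rw [h0, zero_pow hN] at hζN
    exact zero_ne_one hζN
  have hmap : (Matrix.of fun i j : ZMod (2*n) =>
      if (1 ≤ (j-i).val ∧ (j-i).val ≤ r) ∨ (j-i).val = n ∨ 2*n - r ≤ (j-i).val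
        then (1 : ℚ) else 0).map (algebraMap ℚ ℂ)
      = Matrix.of fun i j : ZMod (2*n) =>
          (fun u : ZMod (2*n) =>
            if (1 ≤ u.val ∧ u.val ≤ r) ∨ u.val = n ∨ 2*n - r ≤ u.val then (1:ℂ) else 0)
          (j - i) := by
    ext i j
    rw [Matrix.map_apply, Matrix.of_apply, Matrix.of_apply]
    show _ = if (1 ≤ (j-i).val ∧ (j-i).val ≤ r) ∨ (j-i).val = n ∨ 2*n - r ≤ (j-i).val
      then (1:ℂ) else 0
    split_ifs <;> simp
  have hdet : ((Matrix.of fun i j : ZMod (2*n) =>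
      if (1 ≤ (j-i).val ∧ (j-i).val ≤ r) ∨ (j-i).val = n ∨ 2*n - r ≤ (j-i).val
        then (1 : ℚ) else 0).det = 0)
      ↔ (Matrix.of fun i j : ZMod (2*n) =>
          (fun u : ZMod (2*n) =>
            if (1 ≤ u.val ∧ u.val ≤ r) ∨ u.val = n ∨ 2*n - r ≤ u.val then (1:ℂ) else 0)
          (j - i)).det = 0 := by
    rw [← hmap]
    constructor
    · intro h
      rw [← RingHom.mapMatrix_apply, ← RingHom.map_det, h, map_zero]
    · intro h
      rw [← RingHom.mapMatrix_apply, ← RingHom.map_det] at h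
      exact (map_eq_zero_iff _ (algebraMap ℚ ℂ).injective).mp h
  have hcirc : (Matrix.of fun i j : ZMod (2*n) =>
      (fun u : ZMod (2*n) =>
        if (1 ≤ u.val ∧ u.val ≤ r) ∨ u.val = n ∨ 2*n - r ≤ u.val then (1:ℂ) else 0)
      (j - i)).det
      = ∏ k : ZMod (2*n), ∑ u : ZMod (2*n),
          (if (1 ≤ u.val ∧ u.val ≤ r) ∨ u.val = n ∨ 2*n - r ≤ u.val then (1:ℂ) else 0)
            * ζ ^ (u.val * k.val) :=
    circulant_det_eq_prod (fun u : ZMod (2*n) =>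
      if (1 ≤ u.val ∧ u.val ≤ r) ∨ u.val = n ∨ 2*n - r ≤ u.val then (1:ℂ) else 0) hζ
  rw [hdet, hcirc, Finset.prod_eq_zero_iff]
  have hconv : ∀ k : ZMod (2*n),
      (∑ u : ZMod (2*n),
        (if (1 ≤ u.val ∧ u.val ≤ r) ∨ u.val = n ∨ 2*n - r ≤ u.val then (1:ℂ) else 0)
          * ζ ^ (u.val * k.val))
      = ∑ u : ZMod (2*n),
        (if (1 ≤ u.val ∧ u.val ≤ r) ∨ u.val = n ∨ 2*n - r ≤ u.val then (1:ℂ) else 0)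
          * (ζ ^ k.val) ^ u.val := by
    intro k
    refine Finset.sum_congr rfl (fun u _ => ?_)
    rw [mul_comm u.val k.val, pow_mul]
  constructor
  · rintro ⟨k, -, hk⟩
    rw [hconv k] at hk
    set ω : ℂ := ζ ^ k.val with hω
    have hωN : ω ^ (2*n) = 1 := by rw [hω, ← pow_mul, mul_comm, pow_mul, hζN, one_pow]
    have hω0 : ω ≠ 0 := pow_ne_zero _ hζ0
    have hω1 : ω ≠ 1 := by
      intro h1
      rw [h1, lam_one n r hr hrn] at hk
      rw [Nat.cast_eq_zero] at hk
      omega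
    have hid := lam_eval n r hr hrn ω hωN
    rw [hk, mul_zero] at hid
    have hsq : ω ^ n * ω ^ n = 1 := by rw [← pow_add, show n + n = 2*n from by ring, hωN]
    rcases mul_self_eq_one_iff.mp hsq with h | h
    · -- ω^n = 1
      have h21 : ω ^ (2*r+1) = 1 := by
        linear_combination -hid - (ω^(r+1) - ω^r) * h
      have hddvd : orderOf ω ∣ Nat.gcd n (2*r+1) :=
        Nat.dvd_gcd (orderOf_dvd_of_pow_eq_one h) (orderOf_dvd_of_pow_eq_one h21)
      have hωg : ω ^ Nat.gcd n (2*r+1) = 1 := orderOf_dvd_iff_pow_eq_one.mp hddvd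
      have hg1 : Nat.gcd n (2*r+1) ≠ 1 := by
        intro h1
        rw [h1, pow_one] at hωg
        exact hω1 hωg
      have hgodd : ¬ 2 ∣ Nat.gcd n (2*r+1) := by
        intro h2
        have := h2.trans (Nat.gcd_dvd_right n (2*r+1))
        omega
      have hg0 : Nat.gcd n (2*r+1) ≠ 0 := by
        intro h0
        rw [Nat.gcd_eq_zero_iff] at h0
        omega
      omega
    · -- ω^n = -1
      rw [h] at hid
      have hp : ω ^ (r+1) = ω ^ r * ω := pow_succ ω r
      have hE : ω ^ (2*r+1) - 1 = 2 * ω ^ r * (ω - 1) := by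
        linear_combination -hid + 2 * hp
      obtain ⟨h3n, h3r⟩ := lemmaE n r hn ω hωN h hE
      have h3g : (3:ℕ) ∣ Nat.gcd n (2*r+1) := Nat.dvd_gcd h3n h3r
      have hg0 : 0 < Nat.gcd n (2*r+1) := Nat.gcd_pos_of_pos_left _ hn
      exact Nat.le_of_dvd hg0 h3g
  · intro h3
    have hgn : Nat.gcd n (2*r+1) ∣ n := Nat.gcd_dvd_left _ _
    have hgr : Nat.gcd n (2*r+1) ∣ 2*r+1 := Nat.gcd_dvd_right _ _
    set g := Nat.gcd n (2*r+1) with hg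
    have hg0 : 0 < g := by omega
    obtain ⟨t, ht⟩ := hgn
    obtain ⟨s, hs⟩ := hgr
    set j : ℕ := 2*n / g with hj
    have hjval : j = 2*t := by
      rw [hj, ht, show 2*(g*t) = g*(2*t) from by ring, Nat.mul_div_cancel_left _ hg0]
    have ht0 : 0 < t := by
      rcases Nat.eq_zero_or_pos t with h0 | h0
      · rw [h0, mul_zero] at ht; omega
      · exact h0
    have h3t : 3*t ≤ g*t := Nat.mul_le_mul_right t (by omega : 3 ≤ g)
    have hj0 : 0 < j := by omega
    have hjN : j < 2*n := by omega
    refine ⟨(j : ZMod (2*n)), Finset.mem_univ _, ?_⟩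
    have hkval : ((j : ZMod (2*n))).val = j := ZMod.val_cast_of_lt hjN
    rw [hconv, hkval]
    set ω : ℂ := ζ ^ j with hω
    have hωN : ω ^ (2*n) = 1 := by rw [hω, ← pow_mul, mul_comm, pow_mul, hζN, one_pow]
    have hω0 : ω ≠ 0 := pow_ne_zero _ hζ0
    have hωn : ω ^ n = 1 := by
      rw [hω, ← pow_mul, show j * n = (2*n) * t from by rw [hjval, ht]; ring,
        pow_mul, hζN, one_pow]
    have hω21 : ω ^ (2*r+1) = 1 := by
      rw [hω, ← pow_mul, show j * (2*r+1) = (2*n) * s from by rw [hjval, hs, ht]; ring,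
        pow_mul, hζN, one_pow]
    have hω1 : ω ≠ 1 := hζ.pow_ne_one_of_pos_of_lt hj0.ne' hjN
    have hid := lam_eval n r hr hrn ω hωN
    rw [hωn, hω21] at hid
    have hid2 : (ω - 1) * ω ^ r *
        (∑ u : ZMod (2*n),
          (if (1 ≤ u.val ∧ u.val ≤ r) ∨ u.val = n ∨ 2*n - r ≤ u.val then (1:ℂ) else 0)
            * ω ^ u.val) = 0 := by
      rw [hid]; ring
    have hfac : (ω - 1) * ω ^ r ≠ 0 :=
      mul_ne_zero (sub_ne_zero.mpr hω1) (pow_ne_zero _ hω0)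
    exact (mul_eq_zero.mp hid2).resolve_left hfac
end

section
/- Let n and r be positive integers with 1 ≤ r < n. The complement graph C(2n, r)^c is non-singular if and only if: (1) n and r have the same parity, (2) gcd(n, r+1) = 1, and (3) the highest power of 2 dividing n is strictly smaller than the highest power of 2 dividing n − r. -/
open Finset


lemma zeta_cong {m : ℕ} {ζ : ℂ} (hζ : ζ ^ m = 1) {x y : ℕ} (h : x % m = y % m) :
    ζ ^ x = ζ ^ y := by
  rw [pow_eq_pow_mod x hζ, pow_eq_pow_mod y hζ, h]

lemma circ_det (m : ℕ) [NeZero m] {ζ : ℂ} (hζ : IsPrimitiveRoot ζ m) (w : ZMod m → ℂ) :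
    (Matrix.of fun i j : ZMod m => w (j - i)).det =
      ∏ j : ZMod m, ∑ d : ZMod m, w d * ζ ^ (d.val * j.val) := by
  have hζm : ζ ^ m = 1 := hζ.pow_eq_one
  set A : Matrix (ZMod m) (ZMod m) ℂ := Matrix.of fun i j : ZMod m => w (j - i) with hA
  set F : Matrix (ZMod m) (ZMod m) ℂ := Matrix.of fun i j : ZMod m => ζ ^ (i.val * j.val)
    with hF
  set g : ZMod m → ℂ := fun j => ∑ d : ZMod m, w d * ζ ^ (d.val * j.val) with hg
  have key : ∀ (a b : ZMod m) (c : ℕ), ζ ^ ((a + b).val * c) = ζ ^ (a.val * c) * ζ ^ (b.val * c) := by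
    intro a b c
    rw [← pow_add, ← add_mul]
    refine zeta_cong hζm ?_
    have : (a + b).val % m = (a.val + b.val) % m := by
      rw [ZMod.val_add, Nat.mod_mod_of_dvd _ dvd_rfl]
    exact Nat.ModEq.mul_right c this
  have hAF : A * F = F * Matrix.diagonal g := by
    ext i j
    rw [Matrix.mul_diagonal, Matrix.mul_apply]
    have : ∀ d : ZMod m, w (d + i - i) * ζ ^ ((d + i).val * j.val)
        = w d * ζ ^ (d.val * j.val) * ζ ^ (i.val * j.val) := by
      intro d
      rw [add_sub_cancel_right, key d i j.val]
      ring
    calc ∑ k : ZMod m, A i k * F k j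
        = ∑ d : ZMod m, w (d + i - i) * ζ ^ ((d + i).val * j.val) :=
          (Fintype.sum_equiv (Equiv.addRight i) _ _ (fun d => rfl)).symm
      _ = ∑ d : ZMod m, w d * ζ ^ (d.val * j.val) * ζ ^ (i.val * j.val) := by
          simp_rw [this]
      _ = F i j * g j := by
          rw [← Finset.sum_mul, hg, hF]
          simp [mul_comm]
  obtain ⟨e, he⟩ : ∃ e : Fin m ≃ ZMod m, ∀ i : Fin m, (e i).val = (i : ℕ) :=
    ⟨{ toFun := fun i => (i.val : ZMod m)
       invFun := fun a => ⟨a.val, a.val_lt⟩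
       left_inv := fun i => Fin.ext (ZMod.val_cast_of_lt i.isLt)
       right_inv := fun a => ZMod.natCast_rightInverse a },
     fun i => ZMod.val_cast_of_lt i.isLt⟩
  have hFdet : F.det ≠ 0 := by
    have hsub : F.submatrix e e = Matrix.vandermonde (fun i : Fin m => ζ ^ (i : ℕ)) := by
      ext i j
      simp only [Matrix.submatrix_apply, Matrix.vandermonde_apply, hF, Matrix.of_apply]
      show ζ ^ ((e i).val * (e j).val) = _
      rw [he i, he j, pow_mul]
    have : F.det = (Matrix.vandermonde (fun i : Fin m => ζ ^ (i : ℕ))).det := by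
      rw [← hsub, Matrix.det_submatrix_equiv_self]
    rw [this, Matrix.det_vandermonde]
    rw [Finset.prod_ne_zero_iff]
    intro i _
    rw [Finset.prod_ne_zero_iff]
    intro j hj
    rw [Finset.mem_Ioi] at hj
    intro hzero
    have hzz : ζ ^ (j : ℕ) = ζ ^ (i : ℕ) := sub_eq_zero.mp hzero
    have := hζ.pow_inj j.isLt i.isLt hzz
    exact absurd (Fin.ext this) (ne_of_gt hj)
  have hdet := congrArg Matrix.det hAF
  rw [Matrix.det_mul, Matrix.det_mul, Matrix.det_diagonal] at hdet
  rw [mul_comm A.det F.det] at hdet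
  exact mul_left_cancel₀ hFdet hdet


lemma NT_A (n r : ℕ) (hr : 1 ≤ r) (hrn : r < n) :
    Nat.gcd (2 * n) (n - r - 1) = 1 ↔ (n % 2 = r % 2 ∧ Nat.gcd n (r + 1) = 1) := by
  have h1 : Nat.gcd (2 * n) (n - r - 1) = 1 ↔
      Nat.Coprime 2 (n - r - 1) ∧ Nat.Coprime n (n - r - 1) :=
    Nat.coprime_mul_iff_left
  rw [h1]
  have h2 : Nat.Coprime 2 (n - r - 1) ↔ n % 2 = r % 2 := by
    rw [Nat.Prime.coprime_iff_not_dvd Nat.prime_two, Nat.dvd_iff_mod_eq_zero]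
    omega
  have h3 : Nat.Coprime n (n - r - 1) ↔ Nat.gcd n (r + 1) = 1 := by
    unfold Nat.Coprime
    have e1 : n - r - 1 = n - (r + 1) := by omega
    have e2 : Nat.gcd n (n - (r + 1)) = Nat.gcd n (r + 1) := by
      rw [Nat.gcd_comm n (n - (r + 1))]
      have := Nat.gcd_sub_self_right (m := n - (r + 1)) (n := n) (by omega)
      have e3 : n - (n - (r + 1)) = r + 1 := by omega
      rw [e3] at this
      rw [← this]
      exact (Nat.gcd_sub_self_left (m := r + 1) (n := n) (by omega)).symm ▸ rfl
    rw [e1, e2]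
  rw [h2, h3]

lemma NT_B (n r : ℕ) (hr : 1 ≤ r) (hrn : r < n) :
    (Nat.gcd (n - r) (2 * n) ∣ n) ↔ padicValNat 2 (n - r) ≤ padicValNat 2 n := by
  have hm : n - r ≠ 0 := by omega
  have hn : n ≠ 0 := by omega
  have h2n : 2 * n ≠ 0 := by omega
  have hg : Nat.gcd (n - r) (2 * n) ≠ 0 := Nat.gcd_ne_zero_left hm
  rw [← Nat.factorization_le_iff_dvd hg hn, Nat.factorization_gcd hm h2n,
    Nat.factorization_mul two_ne_zero hn, Nat.Prime.factorization Nat.prime_two,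
    Finsupp.le_def]
  simp only [Finsupp.inf_apply, Finsupp.add_apply, Finsupp.single_apply]
  have hv : ∀ k : ℕ, k ≠ 0 → k.factorization 2 = padicValNat 2 k := by
    intro k _; exact Nat.factorization_def k Nat.prime_two
  constructor
  · intro h
    have h2 := h 2
    rw [if_pos rfl, hv _ hm, hv _ hn] at h2
    omega
  · intro h i
    by_cases hp : 2 = i
    · subst hp
      rw [if_pos rfl, hv _ hm, hv _ hn]
      omega
    · rw [if_neg hp, zero_add]
      exact inf_le_right


lemma geom_ne_iff (n r : ℕ) (hrn : r < n) :
    (∀ ω : ℂ, ω ^ (2 * n) = 1 → ∑ t ∈ range (n - r - 1), ω ^ t ≠ 0) ↔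
      Nat.gcd (2 * n) (n - r - 1) = 1 := by
  have hn2 : 2 * n ≠ 0 := by omega
  constructor
  · intro h
    by_contra hg
    set g := Nat.gcd (2 * n) (n - r - 1) with hgdef
    have hg0 : g ≠ 0 := Nat.gcd_ne_zero_left hn2
    have hg2 : 2 ≤ g := by omega
    have hprim : IsPrimitiveRoot (Complex.exp (2 * Real.pi * Complex.I / g)) g :=
      Complex.isPrimitiveRoot_exp g hg0
    set ω := Complex.exp (2 * Real.pi * Complex.I / g) with hω
    have hω1 : ω ≠ 1 := by
      intro h1
      have : g ∣ 1 := hprim.dvd_of_pow_eq_one 1 (by rw [h1, one_pow])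
      exact absurd (Nat.eq_one_of_dvd_one this) hg
    have hωg : ω ^ g = 1 := hprim.pow_eq_one
    have hdvd1 : g ∣ 2 * n := Nat.gcd_dvd_left _ _
    have hdvd2 : g ∣ n - r - 1 := Nat.gcd_dvd_right _ _
    have hroot : ω ^ (2 * n) = 1 := by
      obtain ⟨c, hc⟩ := hdvd1
      rw [hc, pow_mul, hωg, one_pow]
    have hpow : ω ^ (n - r - 1) = 1 := by
      obtain ⟨c, hc⟩ := hdvd2
      rw [hc, pow_mul, hωg, one_pow]
    have hsum : (∑ t ∈ range (n - r - 1), ω ^ t) * (ω - 1) = 0 := by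
      rw [geom_sum_mul, hpow, sub_self]
    rcases mul_eq_zero.mp hsum with h0 | h0
    · exact h _ hroot h0
    · exact hω1 (sub_eq_zero.mp h0)
  · intro hg ω hω hsum
    by_cases hω1 : ω = 1
    · subst hω1
      simp only [one_pow, Finset.sum_const, Finset.card_range, nsmul_eq_mul, mul_one] at hsum
      have hne : n - r - 1 ≠ 0 := by
        intro h0
        rw [h0] at hg
        simp [Nat.gcd_zero_right] at hg
      exact hne (by exact_mod_cast hsum)
    · have h1 : ω ^ (n - r - 1) = 1 := by
        have hgeq := geom_sum_mul ω (n - r - 1)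
        rw [hsum, zero_mul] at hgeq
        exact sub_eq_zero.mp hgeq.symm
      have hd1 : orderOf ω ∣ 2 * n := orderOf_dvd_of_pow_eq_one hω
      have hd2 : orderOf ω ∣ n - r - 1 := orderOf_dvd_of_pow_eq_one h1
      have : orderOf ω ∣ 1 := hg ▸ Nat.dvd_gcd hd1 hd2
      exact hω1 (orderOf_eq_one_iff.mp (Nat.eq_one_of_dvd_one this))


lemma neg_one_iff (n r : ℕ) (hr : 1 ≤ r) (hrn : r < n) :
    (∀ ω : ℂ, ω ^ (2 * n) = 1 → ω ^ (n - r) ≠ -1) ↔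
      ¬ (Nat.gcd (n - r) (2 * n) ∣ n) := by
  have hn2 : 2 * n ≠ 0 := by omega
  haveI : NeZero (2 * n) := ⟨hn2⟩
  obtain ⟨ζ, hζ⟩ : ∃ ζ : ℂ, IsPrimitiveRoot ζ (2 * n) :=
    ⟨_, Complex.isPrimitiveRoot_exp (2 * n) hn2⟩
  have hζ2n : ζ ^ (2 * n) = 1 := hζ.pow_eq_one
  have hζn : ζ ^ n = -1 := by
    have hsq : (ζ ^ n - 1) * (ζ ^ n + 1) = 0 := by
      have : (ζ ^ n) * (ζ ^ n) = 1 := by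
        rw [← pow_add]
        have : n + n = 2 * n := by ring
        rw [this, hζ2n]
      ring_nf
      ring_nf at this
      rw [this]
      ring
    have hne : ζ ^ n ≠ 1 := hζ.pow_ne_one_of_pos_of_lt (by omega) (by omega)
    rcases mul_eq_zero.mp hsq with h0 | h0
    · exact absurd (sub_eq_zero.mp h0) hne
    · linear_combination h0
  constructor
  · intro h hdvd
    set g := Nat.gcd (n - r) (2 * n) with hgdef
    have hg0 : g ≠ 0 := Nat.gcd_ne_zero_right hn2
    have hbez : (g : ℤ) = (n - r : ℕ) * Int.gcdA (n - r : ℕ) (2 * n) +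
        (2 * n) * Int.gcdB (n - r : ℕ) (2 * n) := by
      have := Int.gcd_eq_gcd_ab ((n - r : ℕ) : ℤ) ((2 * n : ℕ) : ℤ)
      rw [Int.gcd_natCast_natCast] at this
      exact_mod_cast this
    set a := Int.gcdA (n - r : ℕ) (2 * n)
    set b := Int.gcdB (n - r : ℕ) (2 * n)
    set K : ℤ := (n / g : ℕ) * a with hK
    have hng : (n / g : ℕ) * g = n := Nat.div_mul_cancel hdvd
    have hζ0 : ζ ≠ 0 := by
      intro h0
      rw [h0, zero_pow hn2] at hζ2n
      exact zero_ne_one hζ2n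
    set ω : ℂ := ζ ^ K with hωdef
    have hroot : ω ^ (2 * n) = 1 := by
      rw [hωdef, ← zpow_natCast (ζ ^ K) (2 * n), ← zpow_mul, mul_comm, zpow_mul,
        zpow_natCast, hζ2n, one_zpow]
    have hKnr : K * ((n - r : ℕ) : ℤ) = (n : ℤ) + ((2 * n : ℕ) : ℤ) * (-(n / g : ℕ) * b) := by
      have h1 : K * ((n - r : ℕ) : ℤ) = (n / g : ℕ) * ((g : ℤ) - (2 * n : ℕ) * b) := by
        rw [hK, hbez]; push_cast; ring
      have h2 : ((n / g : ℕ) : ℤ) * (g : ℤ) = (n : ℤ) := by exact_mod_cast hng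
      rw [h1, mul_sub, h2]
      push_cast
      ring
    have hωnr : ω ^ (n - r) = -1 := by
      rw [hωdef, ← zpow_natCast (ζ ^ K) (n - r), ← zpow_mul, hKnr, zpow_add₀ hζ0,
        zpow_natCast, hζn, zpow_mul, zpow_natCast, hζ2n, one_zpow, mul_one]
    exact h ω hroot hωnr
  · intro hng ω hω hωnr
    apply hng
    obtain ⟨i, hi, hζi⟩ := hζ.eq_pow_of_pow_eq_one hω
    have h1 : ζ ^ (i * (n - r) + n) = 1 := by
      rw [pow_add, pow_mul, hζi, hωnr, hζn]
      ring
    have h2 : 2 * n ∣ i * (n - r) + n := hζ.dvd_of_pow_eq_one _ h1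
    have h3 : Nat.gcd (n - r) (2 * n) ∣ i * (n - r) + n :=
      dvd_trans (Nat.gcd_dvd_right _ _) h2
    have h4 : Nat.gcd (n - r) (2 * n) ∣ i * (n - r) :=
      Dvd.dvd.mul_left (Nat.gcd_dvd_left _ _) i
    exact (Nat.dvd_add_right h4).mp h3


lemma f_factor (n r : ℕ) (hr : 1 ≤ r) (hrn : r < n) (ω : ℂ) :
    (∑ a ∈ Icc (r + 1) (n - 1), ω ^ a) + ∑ a ∈ Icc (n + 1) (2 * n - r - 1), ω ^ a =
      ω ^ (r + 1) * (1 + ω ^ (n - r)) * ∑ t ∈ range (n - r - 1), ω ^ t := by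
  have e1 : Icc (r + 1) (n - 1) = Ico (r + 1) n := by
    rw [← Finset.Ico_add_one_right_eq_Icc]
    congr 1
    omega
  have e2 : Icc (n + 1) (2 * n - r - 1) = Ico (n + 1) (2 * n - r) := by
    rw [← Finset.Ico_add_one_right_eq_Icc]
    congr 1
    omega
  rw [e1, e2, Finset.sum_Ico_eq_sum_range, Finset.sum_Ico_eq_sum_range]
  have e3 : n - (r + 1) = n - r - 1 := by omega
  have e4 : 2 * n - r - (n + 1) = n - r - 1 := by omega
  rw [e3, e4]
  have h1 : ∀ k, ω ^ (r + 1 + k) = ω ^ (r + 1) * ω ^ k := fun k => pow_add ω (r + 1) k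
  have h2 : ∀ k, ω ^ (n + 1 + k) = ω ^ (r + 1) * ω ^ (n - r) * ω ^ k := by
    intro k
    rw [← pow_add, ← pow_add]
    congr 1
    omega
  simp_rw [h1, h2]
  rw [← Finset.mul_sum, ← Finset.mul_sum]
  ring


lemma zmod_sum_range {m : ℕ} [NeZero m] (F : ℕ → ℂ) :
    (∑ d : ZMod m, F d.val) = ∑ a ∈ Finset.range m, F a := by
  rw [← Fin.sum_univ_eq_sum_range]
  exact Fintype.sum_equiv
    (⟨fun a => ⟨a.val, a.val_lt⟩, fun i => ((i : ℕ) : ZMod m),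
      fun a => ZMod.natCast_rightInverse a,
      fun i => Fin.ext (ZMod.val_cast_of_lt i.isLt)⟩ : ZMod m ≃ Fin m)
    _ _ (fun d => rfl)

lemma root_bridge (m : ℕ) [NeZero m] {ζ : ℂ} (hζ : IsPrimitiveRoot ζ m) (F : ℂ → ℂ) :
    (∀ j : ZMod m, F (ζ ^ j.val) ≠ 0) ↔ (∀ ω : ℂ, ω ^ m = 1 → F ω ≠ 0) := by
  constructor
  · intro h ω hω
    obtain ⟨i, hi, hζi⟩ := hζ.eq_pow_of_pow_eq_one hω
    have := h (i : ZMod m)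
    rwa [ZMod.val_cast_of_lt hi, hζi] at this
  · intro h j
    apply h
    rw [← pow_mul, mul_comm, pow_mul, hζ.pow_eq_one, one_pow]

lemma all_roots_iff (n r : ℕ) (hr : 1 ≤ r) (hrn : r < n) :
    (∀ ω : ℂ, ω ^ (2 * n) = 1 →
        ω ^ (r + 1) * (1 + ω ^ (n - r)) * (∑ t ∈ range (n - r - 1), ω ^ t) ≠ 0) ↔
      (n % 2 = r % 2 ∧ Nat.gcd n (r + 1) = 1 ∧
        padicValNat 2 n < padicValNat 2 (n - r)) := by
  have hn2 : 2 * n ≠ 0 := by omega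
  have h1 : (∀ ω : ℂ, ω ^ (2 * n) = 1 →
        ω ^ (r + 1) * (1 + ω ^ (n - r)) * (∑ t ∈ range (n - r - 1), ω ^ t) ≠ 0) ↔
      ((∀ ω : ℂ, ω ^ (2 * n) = 1 → ω ^ (n - r) ≠ -1) ∧
        (∀ ω : ℂ, ω ^ (2 * n) = 1 → ∑ t ∈ range (n - r - 1), ω ^ t ≠ 0)) := by
    constructor
    · intro h
      constructor <;> intro ω hω
      · intro hneg
        apply h ω hω
        rw [hneg]; ring
      · intro hz
        apply h ω hω
        rw [hz]; ring
    · rintro ⟨hA, hB⟩ ω hω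
      have hω0 : ω ≠ 0 := by
        intro h0
        rw [h0, zero_pow hn2] at hω
        exact zero_ne_one hω
      refine mul_ne_zero (mul_ne_zero (pow_ne_zero _ hω0) ?_) (hB ω hω)
      intro hc
      exact hA ω hω (by linear_combination hc)
  rw [h1, neg_one_iff n r hr hrn, geom_ne_iff n r hrn, NT_A n r hr hrn,
    NT_B n r hr hrn, not_le]
  tauto

/-- The complement `C(2n,r)^c`, with first row
`[0^{r+1}, 1^{n-r-1}, 0, 1^{n-r-1}, 0^r]`, is non-singular iff `n` and `r`
have the same parity, `gcd(n, r+1) = 1`, and the 2-adic valuation of `n` is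
strictly smaller than that of `n - r`. -/
theorem C2nr_complement_nonsingular_iff (n r : ℕ) [NeZero (2 * n)]
    (hr : 1 ≤ r) (hrn : r < n) :
    (Matrix.of fun i j : ZMod (2 * n) =>
        if (r + 1 ≤ (j - i).val ∧ (j - i).val ≤ n - 1) ∨
            (n + 1 ≤ (j - i).val ∧ (j - i).val ≤ 2 * n - r - 1) then (1 : ℚ)
        else 0).det ≠ 0 ↔
      (n % 2 = r % 2 ∧ Nat.gcd n (r + 1) = 1 ∧
        padicValNat 2 n < padicValNat 2 (n - r)) := by
  have hn2 : 2 * n ≠ 0 := NeZero.ne _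
  set w : ZMod (2 * n) → ℂ := fun d =>
    if (r + 1 ≤ d.val ∧ d.val ≤ n - 1) ∨ (n + 1 ≤ d.val ∧ d.val ≤ 2 * n - r - 1)
    then 1 else 0 with hw
  set Aq : Matrix (ZMod (2 * n)) (ZMod (2 * n)) ℚ := Matrix.of fun i j : ZMod (2 * n) =>
    if (r + 1 ≤ (j - i).val ∧ (j - i).val ≤ n - 1) ∨
        (n + 1 ≤ (j - i).val ∧ (j - i).val ≤ 2 * n - r - 1) then (1 : ℚ)
    else 0 with hAq
  obtain ⟨ζ, hζ⟩ : ∃ ζ : ℂ, IsPrimitiveRoot ζ (2 * n) :=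
    ⟨_, Complex.isPrimitiveRoot_exp (2 * n) hn2⟩
  have h1 : ((Aq.det : ℚ) : ℂ) = (Matrix.of fun i j : ZMod (2 * n) => w (j - i)).det := by
    rw [show ((Aq.det : ℚ) : ℂ) = (Rat.castHom ℂ) Aq.det from rfl, RingHom.map_det]
    congr 1
    ext i j
    simp only [RingHom.mapMatrix_apply, Matrix.map_apply, hAq, hw, Matrix.of_apply,
      apply_ite (Rat.castHom ℂ), map_one, map_zero]
  have h2 : Aq.det ≠ 0 ↔
      (Matrix.of fun i j : ZMod (2 * n) => w (j - i)).det ≠ 0 := by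
    rw [← h1, Rat.cast_ne_zero]
  rw [h2, circ_det (2 * n) hζ w, Finset.prod_ne_zero_iff]
  have hgsum : ∀ j : ZMod (2 * n), (∑ d : ZMod (2 * n), w d * ζ ^ (d.val * j.val)) =
      (ζ ^ j.val) ^ (r + 1) * (1 + (ζ ^ j.val) ^ (n - r)) *
        ∑ t ∈ range (n - r - 1), (ζ ^ j.val) ^ t := by
    intro j
    have hpm : ∀ d : ZMod (2 * n), ζ ^ (d.val * j.val) = (ζ ^ j.val) ^ d.val := by
      intro d
      rw [mul_comm, pow_mul]
    simp_rw [hpm]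
    have hzr : (∑ d : ZMod (2 * n), w d * (ζ ^ j.val) ^ d.val) =
        ∑ a ∈ range (2 * n),
          (if (r + 1 ≤ a ∧ a ≤ n - 1) ∨ (n + 1 ≤ a ∧ a ≤ 2 * n - r - 1) then (1 : ℂ)
            else 0) * (ζ ^ j.val) ^ a :=
      zmod_sum_range (fun a =>
        (if (r + 1 ≤ a ∧ a ≤ n - 1) ∨ (n + 1 ≤ a ∧ a ≤ 2 * n - r - 1) then (1 : ℂ)
          else 0) * (ζ ^ j.val) ^ a)
    rw [hzr]
    have hite : ∀ a : ℕ,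
        (if (r + 1 ≤ a ∧ a ≤ n - 1) ∨ (n + 1 ≤ a ∧ a ≤ 2 * n - r - 1) then (1 : ℂ)
          else 0) * (ζ ^ j.val) ^ a =
        (if (r + 1 ≤ a ∧ a ≤ n - 1) ∨ (n + 1 ≤ a ∧ a ≤ 2 * n - r - 1)
          then (ζ ^ j.val) ^ a else 0) := by
      intro a
      split <;> simp
    simp_rw [hite]
    rw [← Finset.sum_filter]
    have hfilter : (range (2 * n)).filter
        (fun a => (r + 1 ≤ a ∧ a ≤ n - 1) ∨ (n + 1 ≤ a ∧ a ≤ 2 * n - r - 1)) =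
        Icc (r + 1) (n - 1) ∪ Icc (n + 1) (2 * n - r - 1) := by
      ext a
      simp only [Finset.mem_filter, Finset.mem_range, Finset.mem_union, Finset.mem_Icc]
      omega
    have hdisj : Disjoint (Icc (r + 1) (n - 1)) (Icc (n + 1) (2 * n - r - 1)) := by
      rw [Finset.disjoint_left]
      intro a h1 h2
      simp only [Finset.mem_Icc] at h1 h2
      omega
    rw [hfilter, Finset.sum_union hdisj, f_factor n r hr hrn]
  simp only [Finset.mem_univ, forall_true_left]
  simp_rw [hgsum]
  exact Iff.trans
    (root_bridge (2 * n) hζ (fun ω =>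
      ω ^ (r + 1) * (1 + ω ^ (n - r)) * ∑ t ∈ range (n - r - 1), ω ^ t))
    (all_roots_iff n r hr hrn)
end

section
/- Let X be the (r,s,t)-element circulant digraph on n vertices, whose circulant adjacency matrix has first row [1...1 (r times), 0...0 (t times), 1...1 (s times), 0...0 (n−r−s−t times)]. If gcd(n, r, s) > 1, then X is singular. -/
/-- If `gcd(n, r, s) > 1` then the `(r,s,t)`-element circulant digraph on `n`
vertices (first row `[1^r, 0^t, 1^s, 0^{n-r-s-t}]`) is singular. -/
theorem rst_circulant_singular_of_gcd (n r s t : ℕ) [NeZero n]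
    (hsum : r + s + t ≤ n) (hgcd : 1 < Nat.gcd (Nat.gcd n r) s) :
    (Matrix.of fun i j : ZMod n =>
        if (j - i).val < r ∨ (r + t ≤ (j - i).val ∧ (j - i).val < r + t + s)
        then (1 : ℚ) else 0).det = 0 := by
  set d := Nat.gcd (Nat.gcd n r) s with hd
  have hdn : d ∣ n := (Nat.dvd_trans (Nat.gcd_dvd_left _ _) (Nat.gcd_dvd_left n r))
  have hdr : d ∣ r := (Nat.dvd_trans (Nat.gcd_dvd_left _ _) (Nat.gcd_dvd_right n r))
  have hds : d ∣ s := Nat.gcd_dvd_right _ _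
  have hd0 : d ≠ 0 := by omega
  set ω : ℂ := Complex.exp (2 * Real.pi * Complex.I / d) with hω
  have hprim : IsPrimitiveRoot ω d := Complex.isPrimitiveRoot_exp d hd0
  have hω1 : ω ≠ 1 := hprim.ne_one hgcd
  have hpow : ∀ m : ℕ, d ∣ m → ω ^ m = 1 := by
    rintro m ⟨c, rfl⟩
    rw [pow_mul, hprim.pow_eq_one, one_pow]
  have hωn : ω ^ n = 1 := hpow n hdn
  -- geometric sums vanish
  have hgeom : ∀ m : ℕ, d ∣ m → ∑ k ∈ Finset.range m, ω ^ k = 0 := by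
    intro m hm
    rw [geom_sum_eq hω1, hpow m hm, sub_self, zero_div]
  -- reduce pow by mod n
  have hmod : ∀ m : ℕ, ω ^ m = ω ^ (m % n) := by
    intro m
    conv_lhs => rw [← Nat.mod_add_div m n]
    rw [pow_add, pow_mul, hωn, one_pow, mul_one]
  -- key sum is zero
  have hS : ∑ m ∈ Finset.range n,
      (if m < r ∨ (r + t ≤ m ∧ m < r + t + s) then (1 : ℂ) else 0) * ω ^ m = 0 := by
    have hsplit : ∑ m ∈ Finset.range n,
        (if m < r ∨ (r + t ≤ m ∧ m < r + t + s) then (1 : ℂ) else 0) * ω ^ m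
        = ∑ m ∈ (Finset.range r ∪ Finset.Ico (r + t) (r + t + s)), ω ^ m := by
      simp only [ite_mul, one_mul, zero_mul]
      rw [← Finset.sum_filter]
      congr 1
      · ext m
        simp only [Finset.mem_filter, Finset.mem_range, Finset.mem_union, Finset.mem_Ico]
        omega
    rw [hsplit, Finset.sum_union ?hdisj]
    case hdisj =>
      simp only [Finset.disjoint_left, Finset.mem_range, Finset.mem_Ico]
      omega
    rw [hgeom r hdr]
    have : ∑ m ∈ Finset.Ico (r + t) (r + t + s), ω ^ m
        = ω ^ (r + t) * ∑ k ∈ Finset.range s, ω ^ k := by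
      rw [Finset.sum_Ico_eq_sum_range, Finset.mul_sum]
      simp [pow_add, Nat.add_sub_cancel_left]
    rw [this, hgeom s hds, mul_zero, zero_add]
  -- complex matrix is singular
  have hdetC : (Matrix.of fun i j : ZMod n =>
      if (j - i).val < r ∨ (r + t ≤ (j - i).val ∧ (j - i).val < r + t + s)
      then (1 : ℂ) else 0).det = 0 := by
    rw [← Matrix.exists_mulVec_eq_zero_iff]
    refine ⟨fun j => ω ^ j.val, ?_, ?_⟩
    · intro h
      have := congrFun h 0
      simp [ZMod.val_zero] at this
    · funext i
      have hval : ∀ a b : ZMod n, ω ^ (a + b).val = ω ^ a.val * ω ^ b.val := by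
        intro a b
        rw [ZMod.val_add, ← hmod, pow_add]
      simp only [Matrix.mulVec, Matrix.of_apply, dotProduct, Pi.zero_apply]
      calc ∑ j : ZMod n, (if (j - i).val < r ∨ (r + t ≤ (j - i).val ∧ (j - i).val < r + t + s)
              then (1 : ℂ) else 0) * ω ^ j.val
          = ∑ k : ZMod n, (if k.val < r ∨ (r + t ≤ k.val ∧ k.val < r + t + s)
              then (1 : ℂ) else 0) * (ω ^ i.val * ω ^ k.val) := by
            rw [← Equiv.sum_comp (Equiv.addLeft i)
              (fun j : ZMod n => (if (j - i).val < r ∨ (r + t ≤ (j - i).val ∧ (j - i).val < r + t + s)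
                then (1 : ℂ) else 0) * ω ^ j.val)]
            refine Finset.sum_congr rfl fun k _ => ?_
            simp only [Equiv.coe_addLeft, add_sub_cancel_left, hval i k]
        _ = ω ^ i.val * ∑ k : ZMod n, (if k.val < r ∨ (r + t ≤ k.val ∧ k.val < r + t + s)
              then (1 : ℂ) else 0) * ω ^ k.val := by
            rw [Finset.mul_sum]; congr 1; funext k; ring
        _ = 0 := by
            rw [show (∑ k : ZMod n, (if k.val < r ∨ (r + t ≤ k.val ∧ k.val < r + t + s)
                then (1 : ℂ) else 0) * ω ^ k.val) = ∑ m ∈ Finset.range n,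
                (if m < r ∨ (r + t ≤ m ∧ m < r + t + s) then (1 : ℂ) else 0) * ω ^ m from ?_,
              hS, mul_zero]
            refine Finset.sum_nbij' (fun k => k.val) (fun m => (m : ZMod n)) ?_ ?_ ?_ ?_ ?_
            · intro k _; exact Finset.mem_range.mpr (ZMod.val_lt k)
            · intro m _; exact Finset.mem_univ _
            · intro k _; exact ZMod.natCast_rightInverse k
            · intro m hm; exact ZMod.val_cast_of_lt (Finset.mem_range.mp hm)
            · intro k _; rfl
  -- transfer back to ℚ
  have hmap : ((Matrix.of fun i j : ZMod n =>
      if (j - i).val < r ∨ (r + t ≤ (j - i).val ∧ (j - i).val < r + t + s)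
      then (1 : ℚ) else 0).map (Rat.cast : ℚ → ℂ)) = Matrix.of fun i j : ZMod n =>
      if (j - i).val < r ∨ (r + t ≤ (j - i).val ∧ (j - i).val < r + t + s)
      then (1 : ℂ) else 0 := by
    ext i j
    by_cases h : (j - i).val < r ∨ (r + t ≤ (j - i).val ∧ (j - i).val < r + t + s) <;>
      simp [Matrix.map_apply, h]
  have := RingHom.map_det (Rat.castHom ℂ) (Matrix.of fun i j : ZMod n =>
      if (j - i).val < r ∨ (r + t ≤ (j - i).val ∧ (j - i).val < r + t + s)
      then (1 : ℚ) else 0)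
  rw [RingHom.mapMatrix_apply] at this
  have h0 : ((Matrix.of fun i j : ZMod n =>
      if (j - i).val < r ∨ (r + t ≤ (j - i).val ∧ (j - i).val < r + t + s)
      then (1 : ℚ) else 0).det : ℂ) = 0 := by
    show (Rat.castHom ℂ) _ = 0
    rw [this]
    show ((Matrix.of fun i j : ZMod n =>
      if (j - i).val < r ∨ (r + t ≤ (j - i).val ∧ (j - i).val < r + t + s)
      then (1 : ℚ) else 0).map (Rat.cast : ℚ → ℂ)).det = 0
    rw [hmap, hdetC]
  exact_mod_cast h0
end
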